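/- arXiv:2510.22365 — 6 statements merged into one kernel-verified Lean document; each statement's English description precedes it below -/
import Mathlib

section
/- Let n ≥ 1 and let S_1,...,S_n be a partition of the complete twisted graph T_{2n} into plane spanning trees, with v_1w_1 ∈ E(S_1). Then S_1 is a balanced double star with center edge v_1w_1: every vertex other than v_1, w_1 is adjacent in S_1 to exactly one of v_1, w_1, the vertices other than v_1,w_1 form an independent set in S_1, and deg_{S_1}(v_1) = deg_{S_1}(w_1) = n. -/
open SimpleGraph

/-- Two edges of the complete twisted graph cross: writing the edges as `{a,b}` and
`{c,d}` with `a < b` and `c < d` in the linear vertex order, they cross iff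
`a < c < d < b` or `c < a < b < d`. -/
def Cross {m : ℕ} (e f : Sym2 (Fin m)) : Prop :=
  ∃ a b c d : Fin m, a < b ∧ c < d ∧ e = s(a, b) ∧ f = s(c, d) ∧
    ((a < c ∧ d < b) ∨ (c < a ∧ b < d))

/-- A subgraph of the twisted graph is plane if no two of its edges cross. -/
def IsPlane {m : ℕ} (G : SimpleGraph (Fin m)) : Prop :=
  ∀ e ∈ G.edgeSet, ∀ f ∈ G.edgeSet, ¬ Cross e f

/-- A partition of the complete twisted graph `T_{2n}` into plane spanning trees:
`n` plane spanning trees such that every edge of the complete graph lies in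
exactly one of them. -/
def IsTwistedPartition {n : ℕ} (S : Fin n → SimpleGraph (Fin (2 * n))) : Prop :=
  (∀ i, (S i).IsTree ∧ IsPlane (S i)) ∧
    ∀ u v : Fin (2 * n), u ≠ v → ∃! i, (S i).Adj u v

/-- The vertex `v_i` (1-indexed) of `T_{2n}`, i.e. vertex number `i - 1` in the
linear order `v_1 < v_2 < ... < v_n < w_n < ... < w_1`. -/
def vv (n : ℕ) (hn : 0 < n) (i : ℕ) : Fin (2 * n) :=
  ⟨(i - 1) % (2 * n), Nat.mod_lt _ (by omega)⟩

/-- The vertex `w_i` (1-indexed) of `T_{2n}`, i.e. vertex number `2n - i` in the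
linear order `v_1 < v_2 < ... < v_n < w_n < ... < w_1`. -/
def ww (n : ℕ) (hn : 0 < n) (i : ℕ) : Fin (2 * n) :=
  ⟨(2 * n - i) % (2 * n), Nat.mod_lt _ (by omega)⟩

lemma aux_no_outer {m : ℕ} {G : SimpleGraph (Fin m)} (hp : IsPlane G)
    {a b : Fin m} (hab : G.Adj a b) (hmin : ∀ u, u ≠ a → a < u)
    (hmax : ∀ u, u ≠ b → u < b)
    {u u' : Fin m} (hua : u ≠ a) (hub : u ≠ b) (hu'a : u' ≠ a) (hu'b : u' ≠ b) :
    ¬ G.Adj u u' := by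
  intro h
  rcases lt_trichotomy u u' with hlt | heq | hgt
  · exact hp s(a,b) (G.mem_edgeSet.mpr hab) s(u,u') (G.mem_edgeSet.mpr h)
      ⟨a, b, u, u', hmax a hab.ne, hlt, rfl, rfl,
        Or.inl ⟨hmin u hua, hmax u' hu'b⟩⟩
  · exact h.ne heq
  · exact hp s(a,b) (G.mem_edgeSet.mpr hab) s(u,u') (G.mem_edgeSet.mpr h)
      ⟨a, b, u', u, hmax a hab.ne, hgt, rfl, Sym2.eq_swap,
        Or.inl ⟨hmin u' hu'a, hmax u hub⟩⟩

lemma aux_no_both {V : Type*} {G : SimpleGraph V} (hac : G.IsAcyclic) {a b u : V}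
    (hab : G.Adj a b) (hua : u ≠ a) (hub : u ≠ b)
    (h1 : G.Adj u a) (h2 : G.Adj u b) : False := by
  have hcyc : (Walk.cons h1 (Walk.cons hab (Walk.cons h2.symm Walk.nil))).IsCycle := by
    simp [Walk.isCycle_def, Walk.isTrail_def, List.nodup_cons, Sym2.eq_iff]
    aesop
  exact hac _ hcyc

lemma aux_nbr {V : Type*} {G : SimpleGraph V} (hc : G.Connected) {u x : V}
    (hne : u ≠ x) : ∃ y, G.Adj u y := by
  obtain ⟨w⟩ := hc.preconnected u x
  cases w with
  | nil => exact absurd rfl hne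
  | cons h p => exact ⟨_, h⟩

/-- In any partition of `T_{2n}` into plane spanning trees, the tree `S_1` containing
the edge `v_1 w_1` is a balanced double star with center edge `v_1 w_1`. -/
theorem first_tree_is_balanced_double_star
    (n : ℕ) (hn : 0 < n) (S : Fin n → SimpleGraph (Fin (2 * n)))
    (hS : IsTwistedPartition S)
    (h1 : (S ⟨0, hn⟩).Adj (vv n hn 1) (ww n hn 1)) :
    (∀ u : Fin (2 * n), u ≠ vv n hn 1 → u ≠ ww n hn 1 →
      ((S ⟨0, hn⟩).Adj u (vv n hn 1) ↔ ¬ (S ⟨0, hn⟩).Adj u (ww n hn 1))) ∧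
    (∀ u u' : Fin (2 * n), u ≠ vv n hn 1 → u ≠ ww n hn 1 →
      u' ≠ vv n hn 1 → u' ≠ ww n hn 1 → ¬ (S ⟨0, hn⟩).Adj u u') ∧
    ((S ⟨0, hn⟩).neighborSet (vv n hn 1)).ncard = n ∧
    ((S ⟨0, hn⟩).neighborSet (ww n hn 1)).ncard = n := by
  have hv0 : ((vv n hn 1 : Fin (2*n)) : ℕ) = 0 := by
    simp [vv]
  have hw0 : ((ww n hn 1 : Fin (2*n)) : ℕ) = 2*n - 1 := by
    simp [ww, Nat.mod_eq_of_lt (by omega : 2*n - 1 < 2*n)]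
  set v0 : Fin (2*n) := vv n hn 1 with hv0def
  set w0 : Fin (2*n) := ww n hn 1 with hw0def
  obtain ⟨htrees, huniq⟩ := hS
  set z : Fin n := ⟨0, hn⟩ with hz
  set G := S z with hG
  have hmin : ∀ u : Fin (2*n), u ≠ v0 → v0 < u := by
    intro u h
    have : (u : ℕ) ≠ 0 := fun hc => h (Fin.ext (by omega))
    exact Fin.lt_def.mpr (by omega)
  have hmax : ∀ u : Fin (2*n), u ≠ w0 → u < w0 := by
    intro u h
    have h2 : (u : ℕ) ≠ 2*n - 1 := fun hc => h (Fin.ext (by omega))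
    have := u.isLt
    exact Fin.lt_def.mpr (by omega)
  have hvw : v0 ≠ w0 := h1.ne
  have hac : G.IsAcyclic := (htrees z).1.IsAcyclic
  have hplane : IsPlane G := (htrees z).2
  -- part 2 : no outer edges
  have part2 : ∀ u u' : Fin (2 * n), u ≠ v0 → u ≠ w0 →
      u' ≠ v0 → u' ≠ w0 → ¬ G.Adj u u' :=
    fun u u' hua hub hu'a hu'b =>
      aux_no_outer hplane h1 hmin hmax hua hub hu'a hu'b
  -- part 1
  have atleast : ∀ u : Fin (2*n), u ≠ v0 → u ≠ w0 → G.Adj u v0 ∨ G.Adj u w0 := by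
    intro u huv huw
    obtain ⟨y, hy⟩ := aux_nbr (htrees z).1.isConnected huv
    by_cases hyv : y = v0
    · exact Or.inl (hyv ▸ hy)
    by_cases hyw : y = w0
    · exact Or.inr (hyw ▸ hy)
    exact absurd hy (part2 u y huv huw hyv hyw)
  have notboth : ∀ u : Fin (2*n), u ≠ v0 → u ≠ w0 →
      ¬(G.Adj u v0 ∧ G.Adj u w0) := by
    rintro u huv huw ⟨ha, hb⟩
    exact aux_no_both hac h1 huv huw ha hb
  have part1 : ∀ u : Fin (2 * n), u ≠ v0 → u ≠ w0 →
      (G.Adj u v0 ↔ ¬ G.Adj u w0) := by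
    intro u huv huw
    constructor
    · exact fun h h' => notboth u huv huw ⟨h, h'⟩
    · intro h
      rcases atleast u huv huw with h' | h'
      · exact h'
      · exact absurd h' h
  -- cardinalities
  set N1 : Set (Fin (2*n)) := G.neighborSet v0 with hN1
  set N2 : Set (Fin (2*n)) := G.neighborSet w0 with hN2
  have hw0N1 : w0 ∈ N1 := h1
  have hv0N2 : v0 ∈ N2 := h1.symm
  -- sum of ncards
  have hunion : (N1 \ {w0}) ∪ (N2 \ {v0}) = ({v0, w0} : Set (Fin (2*n)))ᶜ := by
    ext u
    simp only [Set.mem_union, Set.mem_diff, Set.mem_singleton_iff, Set.mem_compl_iff,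
      Set.mem_insert_iff, hN1, hN2, mem_neighborSet]
    constructor
    · rintro (⟨h, hne⟩ | ⟨h, hne⟩)
      · exact not_or.mpr ⟨fun hc => G.irrefl (hc ▸ h), hne⟩
      · exact not_or.mpr ⟨hne, fun hc => G.irrefl (hc ▸ h)⟩
    · rintro h
      rcases not_or.mp h with ⟨huv, huw⟩
      rcases atleast u huv huw with h' | h'
      · exact Or.inl ⟨h'.symm, huw⟩
      · exact Or.inr ⟨h'.symm, huv⟩
  have hdisj : Disjoint (N1 \ {w0}) (N2 \ {v0}) := by
    rw [Set.disjoint_left]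
    rintro u ⟨h, hne⟩ ⟨h', hne'⟩
    exact notboth u hne' hne ⟨h.symm, h'.symm⟩
  have hcompl2 : (({v0, w0} : Set (Fin (2*n)))ᶜ).ncard = 2*n - 2 := by
    have := Set.ncard_add_ncard_compl ({v0, w0} : Set (Fin (2*n)))
    rw [Set.ncard_pair hvw] at this
    have h2 : Nat.card (Fin (2*n)) = 2*n := by simp
    omega
  have hsum : (N1 \ {w0}).ncard + (N2 \ {v0}).ncard = 2*n - 2 := by
    rw [← Set.ncard_union_eq hdisj (Set.toFinite _) (Set.toFinite _), hunion, hcompl2]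
  have hN1card : N1.ncard = (N1 \ {w0}).ncard + 1 :=
    (Set.ncard_diff_singleton_add_one hw0N1 (Set.toFinite _)).symm
  have hN2card : N2.ncard = (N2 \ {v0}).ncard + 1 :=
    (Set.ncard_diff_singleton_add_one hv0N2 (Set.toFinite _)).symm
  -- upper bounds
  have upper : ∀ x : Fin (2*n), ((S z).neighborSet x).ncard ≤ n := by
    intro x
    have hxex : ∀ i : Fin n, ∃ y, (S i).Adj x y := by
      intro i
      by_cases hx : x = v0
      · exact aux_nbr (htrees i).1.isConnected (hx ▸ hvw)
      · exact aux_nbr (htrees i).1.isConnected hx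
    choose g hg using hxex
    have hginj : Function.Injective g := by
      intro i j hij
      have h1 := hg i
      have h2 := hg j
      rw [hij] at h1
      obtain ⟨k, -, hk⟩ := huniq x (g j) (h1.ne)
      rw [hk i h1, hk j h2]
    set Gs : Set (Fin (2*n)) := g '' {i | i ≠ z} with hGs
    have hGscard : Gs.ncard = n - 1 := by
      rw [hGs, Set.ncard_image_of_injOn (hginj.injOn)]
      have : ({i : Fin n | i ≠ z}) = (Set.univ : Set (Fin n)) \ {z} := by
        ext i; simp
      rw [this, Set.ncard_diff_singleton_of_mem (Set.mem_univ z), Set.ncard_univ]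
      simp
    have hdisj2 : Disjoint ((S z).neighborSet x) Gs := by
      rw [Set.disjoint_left]
      rintro u hu ⟨i, hi, rfl⟩
      obtain ⟨k, -, hk⟩ := huniq x (g i) (hg i).ne
      exact hi ((hk i (hg i)).trans (hk z hu).symm)
    have hsub : ((S z).neighborSet x) ∪ Gs ⊆ ({x} : Set (Fin (2*n)))ᶜ := by
      rintro u (hu | ⟨i, hi, rfl⟩)
      · simp only [Set.mem_compl_iff, Set.mem_singleton_iff]
        exact fun hc => (S z).irrefl (hc ▸ hu)
      · simp only [Set.mem_compl_iff, Set.mem_singleton_iff]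
        exact (hg i).ne'
    have hcompl1 : (({x} : Set (Fin (2*n)))ᶜ).ncard = 2*n - 1 := by
      have := Set.ncard_add_ncard_compl ({x} : Set (Fin (2*n)))
      rw [Set.ncard_singleton] at this
      have h2 : Nat.card (Fin (2*n)) = 2*n := by simp
      omega
    have := Set.ncard_le_ncard hsub (Set.toFinite _)
    rw [Set.ncard_union_eq hdisj2 (Set.toFinite _) (Set.toFinite _), hGscard, hcompl1] at this
    omega
  have u1 : N1.ncard ≤ n := upper v0
  have u2 : N2.ncard ≤ n := upper w0
  refine ⟨part1, part2, ?_, ?_⟩ <;> omega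
end

section
/- Let n ≥ 2 and let S_1,...,S_n be a partition of T_{2n} into plane spanning trees with v_iw_i ∈ E(S_i) for each i. Then for each i ∈ {2,...,n}, vertices v_1 and w_1 are leaves of S_i (have degree 1 in S_i), and the trees S_2 − {v_1,w_1}, ..., S_n − {v_1,w_1} form a partition of the complete twisted graph on the vertices v_2,...,v_n,w_n,...,w_2 into plane spanning trees. -/
open SimpleGraph

private lemma reach_induce {V : Type*} {G : SimpleGraph V} {s : Set V} :
    ∀ {a b : V} (p : G.Walk a b), (∀ x ∈ p.support, x ∈ s) →
      ∀ (ha : a ∈ s) (hb : b ∈ s), (G.induce s).Reachable ⟨a, ha⟩ ⟨b, hb⟩ := by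
  intro a b p
  induction p with
  | nil => intro _ ha hb; exact Reachable.refl _
  | @cons a c b h q ih =>
    intro hs ha hb
    have hc : c ∈ s := hs c (by simp)
    have hadj : (G.induce s).Adj ⟨a, ha⟩ ⟨c, hc⟩ := h
    exact hadj.reachable.trans (ih (fun x hx => hs x (by simp [hx])) hc hb)

private lemma walk_avoid {V : Type*} {G : SimpleGraph V} {v : V}
    (hv : ∀ x y : V, G.Adj v x → G.Adj v y → x = y) :
    ∀ {a b : V} (p : G.Walk a b), p.IsPath → a ≠ v → b ≠ v → v ∉ p.support := by
  intro a b p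
  induction p with
  | nil => intro _ hav _; simp [Ne.symm hav]
  | @cons a c b h q ih =>
    intro hp hav hbv
    have hq : q.IsPath := hp.of_cons
    have hna : a ∉ q.support := ((Walk.cons_isPath_iff h q).mp hp).2
    rcases eq_or_ne c v with hcv | hcv
    · subst hcv
      cases q with
      | nil => exact absurd rfl hbv
      | @cons _ y _ h' q' =>
        have hay : a = y := hv a y h.symm h'
        exact absurd (by simp [hay, Walk.start_mem_support q']) hna
    · have hnq := ih hq hcv hbv
      simp [Walk.support_cons, hnq, Ne.symm hav]

private lemma exists_nbr {V : Type*} {G : SimpleGraph V} (hG : G.Connected) {x y : V}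
    (hxy : x ≠ y) : ∃ z, G.Adj x z := by
  obtain ⟨p⟩ := hG.preconnected x y
  cases p with
  | nil => exact absurd rfl hxy
  | cons h q => exact ⟨_, h⟩

/-- In any partition of `T_{2n}` into plane spanning trees with `v_i w_i ∈ E(S_i)`,
the vertices `v_1, w_1` are leaves of every `S_i` with `i ≥ 2`, and the trees
`S_2 - {v_1, w_1}, ..., S_n - {v_1, w_1}` form a partition of the complete twisted
graph on `v_2, ..., v_n, w_n, ..., w_2` into plane spanning trees. -/
theorem delete_v1_w1_gives_partition
    (n : ℕ) (hn : 0 < n) (hn2 : 2 ≤ n) (S : Fin n → SimpleGraph (Fin (2 * n)))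
    (hS : IsTwistedPartition S)
    (hc : ∀ i : Fin n, (S i).Adj (vv n hn (i.1 + 1)) (ww n hn (i.1 + 1))) :
    (∀ i : Fin n, 1 ≤ i.1 →
      ((S i).neighborSet (vv n hn 1)).ncard = 1 ∧
      ((S i).neighborSet (ww n hn 1)).ncard = 1) ∧
    (∀ i : Fin n, 1 ≤ i.1 →
      ((S i).induce {u : Fin (2 * n) | u ≠ vv n hn 1 ∧ u ≠ ww n hn 1}).IsTree) ∧
    (∀ i : Fin n, 1 ≤ i.1 → ∀ a b c d : Fin (2 * n),
      a ≠ vv n hn 1 → a ≠ ww n hn 1 → b ≠ vv n hn 1 → b ≠ ww n hn 1 →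
      c ≠ vv n hn 1 → c ≠ ww n hn 1 → d ≠ vv n hn 1 → d ≠ ww n hn 1 →
      (S i).Adj a b → (S i).Adj c d → ¬ Cross s(a, b) s(c, d)) ∧
    (∀ u v : Fin (2 * n),
      u ≠ vv n hn 1 → u ≠ ww n hn 1 → v ≠ vv n hn 1 → v ≠ ww n hn 1 → u ≠ v →
      ∃! i : Fin n, 1 ≤ i.1 ∧ (S i).Adj u v) := by
  classical
  set v0 : Fin (2*n) := vv n hn 1 with hv0def
  set w0 : Fin (2*n) := ww n hn 1 with hw0def
  have hv0 : v0.1 = 0 := by simp [hv0def, vv]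
  have hw0 : w0.1 = 2*n - 1 := by
    simp only [hw0def, ww]
    exact Nat.mod_eq_of_lt (by omega)
  have hvw : v0 ≠ w0 := by
    intro h; rw [Fin.ext_iff, hv0, hw0] at h; omega
  set i0 : Fin n := ⟨0, hn⟩ with hi0def
  have h00 : (S i0).Adj v0 w0 := by
    have := hc i0
    simpa [hi0def] using this
  have hA : ∀ a b : Fin (2*n), a ≠ v0 → a ≠ w0 → b ≠ v0 → b ≠ w0 → ¬ (S i0).Adj a b := by
    intro a b hav haw hbv hbw hadj
    have hplane := (hS.1 i0).2
    refine hplane s(v0,w0) h00 s(a,b) hadj ?_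
    have hab : a ≠ b := hadj.ne
    have ha0 : a.1 ≠ 0 := fun h => hav (Fin.ext (by omega))
    have ha1 : a.1 ≠ 2*n - 1 := fun h => haw (Fin.ext (by omega))
    have hb0 : b.1 ≠ 0 := fun h => hbv (Fin.ext (by omega))
    have hb1 : b.1 ≠ 2*n - 1 := fun h => hbw (Fin.ext (by omega))
    have hb2 : b.1 < 2*n := b.2
    have ha2 : a.1 < 2*n := a.2
    have hvltw : v0 < w0 := by rw [Fin.lt_def, hv0, hw0]; omega
    rcases lt_or_gt_of_ne hab with h | h
    · exact ⟨v0, w0, a, b, hvltw, h, rfl, rfl,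
        Or.inl ⟨by rw [Fin.lt_def, hv0]; omega, by rw [Fin.lt_def, hw0]; omega⟩⟩
    · exact ⟨v0, w0, b, a, hvltw, h, rfl, Sym2.eq_swap,
        Or.inl ⟨by rw [Fin.lt_def, hv0]; omega, by rw [Fin.lt_def, hw0]; omega⟩⟩
  -- degree counting
  have hdeg : ∀ i : Fin n, i ≠ i0 →
      ((S i).neighborSet v0).ncard = 1 ∧ ((S i).neighborSet w0).ncard = 1 := by
    set Nv : Fin n → Finset (Fin (2*n)) :=
      fun i => Finset.univ.filter (fun u => (S i).Adj v0 u) with hNvdef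
    set Nw : Fin n → Finset (Fin (2*n)) :=
      fun i => Finset.univ.filter (fun u => (S i).Adj w0 u) with hNwdef
    have hNv : ∀ i, ((S i).neighborSet v0).ncard = (Nv i).card := by
      intro i
      rw [← Set.ncard_coe_finset]
      congr 1
      ext u
      simp [hNvdef, mem_neighborSet]
    have hNw : ∀ i, ((S i).neighborSet w0).ncard = (Nw i).card := by
      intro i
      rw [← Set.ncard_coe_finset]
      congr 1
      ext u
      simp [hNwdef, mem_neighborSet]
    have hsumgen : ∀ (x : Fin (2*n)) (N : Fin n → Finset (Fin (2*n))),
        (∀ i, N i = Finset.univ.filter (fun u => (S i).Adj x u)) →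
        ∑ i, (N i).card = 2*n - 1 := by
      intro x N hN
      have hdisj : ∀ i ∈ Finset.univ, ∀ j ∈ Finset.univ, i ≠ j →
          Disjoint (N i) (N j) := by
        intro i _ j _ hij
        rw [Finset.disjoint_left]
        intro u hui huj
        rw [hN i, Finset.mem_filter] at hui
        rw [hN j, Finset.mem_filter] at huj
        obtain ⟨k, -, hk⟩ := hS.2 x u hui.2.ne
        exact hij ((hk i hui.2).trans (hk j huj.2).symm)
      have hbi : Finset.univ.biUnion N = Finset.univ.filter (· ≠ x) := by
        ext u
        simp only [Finset.mem_biUnion, Finset.mem_filter, Finset.mem_univ, true_and]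
        constructor
        · rintro ⟨i, hi⟩
          rw [hN i, Finset.mem_filter] at hi
          exact hi.2.ne'
        · intro hux
          obtain ⟨i, hi, -⟩ := hS.2 x u (Ne.symm hux)
          refine ⟨i, ?_⟩
          rw [hN i, Finset.mem_filter]
          exact ⟨Finset.mem_univ u, hi⟩
      have := Finset.card_biUnion hdisj
      rw [hbi] at this
      rw [← this]
      rw [Finset.filter_ne' Finset.univ x, Finset.card_erase_of_mem (Finset.mem_univ x)]
      simp
    have hsumv : ∑ i, (Nv i).card = 2*n - 1 := hsumgen v0 Nv (fun i => rfl)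
    have hsumw : ∑ i, (Nw i).card = 2*n - 1 := hsumgen w0 Nw (fun i => rfl)
    have hge1v : ∀ i, 1 ≤ (Nv i).card := by
      intro i
      obtain ⟨z, hz⟩ := exists_nbr (hS.1 i).1.1 hvw
      exact Finset.card_pos.mpr ⟨z, by simp [hNvdef, hz]⟩
    have hge1w : ∀ i, 1 ≤ (Nw i).card := by
      intro i
      obtain ⟨z, hz⟩ := exists_nbr (hS.1 i).1.1 (Ne.symm hvw)
      exact Finset.card_pos.mpr ⟨z, by simp [hNwdef, hz]⟩
    have h2n : 2*n ≤ (Nv i0).card + (Nw i0).card := by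
      have hsub : Finset.univ ⊆ Nv i0 ∪ Nw i0 := by
        intro u _
        rw [Finset.mem_union]
        rcases eq_or_ne u v0 with h | huv0
        · exact Or.inr (by simp [hNwdef, h ▸ h00.symm])
        rcases eq_or_ne u w0 with h | huw0
        · exact Or.inl (by simp [hNvdef, h ▸ h00])
        obtain ⟨z, hz⟩ := exists_nbr (hS.1 i0).1.1 huv0
        rcases eq_or_ne z v0 with h | hzv0
        · exact Or.inl (by simp [hNvdef, h ▸ hz.symm])
        rcases eq_or_ne z w0 with h | hzw0
        · exact Or.inr (by simp [hNwdef, h ▸ hz.symm])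
        · exact absurd hz (hA u z huv0 huw0 hzv0 hzw0)
      calc 2*n = (Finset.univ : Finset (Fin (2*n))).card := by simp
      _ ≤ (Nv i0 ∪ Nw i0).card := Finset.card_le_card hsub
      _ ≤ _ := Finset.card_union_le _ _
    intro i hi
    set g : Fin n → ℕ := fun j => (Nv j).card + (Nw j).card with hgdef
    have hgsum : ∑ j, g j = (2*n - 1) + (2*n - 1) := by
      rw [hgdef, Finset.sum_add_distrib, hsumv, hsumw]
    have e1 : ∑ j ∈ Finset.univ.erase i0, g j + g i0 = ∑ j, g j :=
      Finset.sum_erase_add _ _ (Finset.mem_univ i0)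
    have hi' : i ∈ Finset.univ.erase i0 := Finset.mem_erase.mpr ⟨hi, Finset.mem_univ i⟩
    have e2 : ∑ j ∈ (Finset.univ.erase i0).erase i, g j + g i
        = ∑ j ∈ Finset.univ.erase i0, g j :=
      Finset.sum_erase_add _ _ hi'
    have hcard : ((Finset.univ.erase i0).erase i).card = n - 2 := by
      rw [Finset.card_erase_of_mem hi', Finset.card_erase_of_mem (Finset.mem_univ i0)]
      simp only [Finset.card_univ, Fintype.card_fin]
      omega
    have e3 : (n - 2) * 2 ≤ ∑ j ∈ (Finset.univ.erase i0).erase i, g j := by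
      calc (n - 2) * 2 = ((Finset.univ.erase i0).erase i).card • 2 := by
            rw [hcard, smul_eq_mul]
        _ ≤ _ := Finset.card_nsmul_le_sum _ _ 2 (fun j _ => by
            have := hge1v j; have := hge1w j
            simp only [hgdef]; omega)
    have h2n' : 2*n ≤ g i0 := h2n
    have hgi : g i = (Nv i).card + (Nw i).card := rfl
    have := hge1v i; have := hge1w i
    rw [hNv, hNw]
    constructor <;> omega
  have hne : ∀ i : Fin n, 1 ≤ i.1 → i ≠ i0 := by
    intro i h1 he
    rw [he, hi0def] at h1
    simp at h1
  refine ⟨fun i hi => hdeg i (hne i hi), ?_, ?_, ?_⟩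
  · -- induced trees
    intro i hi1
    obtain ⟨hdv, hdw⟩ := hdeg i (hne i hi1)
    obtain ⟨hconn, hacyc⟩ := (isTree_iff _).mp (hS.1 i).1
    have huv : ∀ x y, (S i).Adj v0 x → (S i).Adj v0 y → x = y := by
      obtain ⟨z, hz⟩ := Set.ncard_eq_one.mp hdv
      intro x y hx hy
      have hx' : x ∈ (S i).neighborSet v0 := hx
      have hy' : y ∈ (S i).neighborSet v0 := hy
      rw [hz, Set.mem_singleton_iff] at hx' hy'
      rw [hx', hy']
    have huw : ∀ x y, (S i).Adj w0 x → (S i).Adj w0 y → x = y := by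
      obtain ⟨z, hz⟩ := Set.ncard_eq_one.mp hdw
      intro x y hx hy
      have hx' : x ∈ (S i).neighborSet w0 := hx
      have hy' : y ∈ (S i).neighborSet w0 := hy
      rw [hz, Set.mem_singleton_iff] at hx' hy'
      rw [hx', hy']
    constructor
    · rw [connected_iff]
      constructor
      · rintro ⟨a, ha⟩ ⟨b, hb⟩
        obtain ⟨p0⟩ := hconn.preconnected a b
        have hpp : (p0.toPath : (S i).Walk a b).IsPath := p0.toPath.2
        have h1 : v0 ∉ (p0.toPath : (S i).Walk a b).support :=
          walk_avoid huv _ hpp ha.1 hb.1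
        have h2 : w0 ∉ (p0.toPath : (S i).Walk a b).support :=
          walk_avoid huw _ hpp ha.2 hb.2
        exact reach_induce (p0.toPath : (S i).Walk a b)
          (fun x hx => ⟨fun h => h1 (h ▸ hx), fun h => h2 (h ▸ hx)⟩ :
            ∀ x ∈ (p0.toPath : (S i).Walk a b).support, x ≠ v0 ∧ x ≠ w0) ha hb
      · refine ⟨⟨⟨1, by omega⟩, ?_, ?_⟩⟩
        · intro h; have := congrArg Fin.val h; rw [hv0] at this; simp at this
        · intro h; have := congrArg Fin.val h; rw [hw0] at this; simp at this; omega
    · intro u c hcyc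
      exact hacyc _ (hcyc.map (f := (Embedding.induce _).toHom) Subtype.val_injective)
  · -- planarity
    intro i _ a b c d _ _ _ _ _ _ _ _ hab hcd
    exact (hS.1 i).2 s(a,b) hab s(c,d) hcd
  · -- partition
    intro u v hu1 hu2 hv1 hv2 huv
    obtain ⟨i, hi, hiu⟩ := hS.2 u v huv
    have hne0 : i ≠ i0 := fun h => hA u v hu1 hu2 hv1 hv2 (h ▸ hi)
    have h1i : 1 ≤ i.1 := by
      rcases Nat.eq_zero_or_pos i.1 with h | h
      · exact absurd (Fin.ext (by rw [h, hi0def])) hne0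
      · omega
    exact ⟨i, ⟨h1i, hi⟩, fun j hj => hiu j hj.2⟩
end

section
/- Let n ≥ 2 and let S_1,...,S_n be a partition of T_{2n} into plane spanning trees with v_iw_i ∈ E(S_i). For each i with 1 ≤ i ≤ n−1, the subgraph of S_i induced by V_i = {v_i,...,v_n,w_n,...,w_i} is a balanced double star with center edge v_iw_i, containing the edges v_iw_{n-1}, v_iw_{n-2}, ..., v_iw_{i+1}, the edges w_iv_{n-1}, w_iv_{n-2}, ..., w_iv_{i+1}, and exactly one of the pairs {v_iw_n, w_iv_n} or {v_iv_n, w_iw_n}. -/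
set_option maxHeartbeats 1600000

open SimpleGraph

section Conn
variable {V : Type*}

def ReachIn (G : SimpleGraph V) (A : Finset V) (x y : V) : Prop :=
  Relation.ReflTransGen (fun a b => G.Adj a b ∧ a ∈ A ∧ b ∈ A) x y

def ConnIn (G : SimpleGraph V) (A : Finset V) : Prop :=
  ∀ x ∈ A, ∀ y ∈ A, ReachIn G A x y

lemma connIn_univ (G : SimpleGraph V) (hG : G.Connected) (A : Finset V) (hA : ∀ v, v ∈ A) :
    ConnIn G A := by
  intro x _ y _
  obtain ⟨w⟩ := hG x y
  induction w with
  | nil => exact Relation.ReflTransGen.refl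
  | cons h p ih => exact Relation.ReflTransGen.head ⟨h, hA _, hA _⟩ (ih (hA _) (hA _))

lemma reachIn_head {G : SimpleGraph V} {A : Finset V} {x y : V} (h : ReachIn G A x y)
    (hxy : x ≠ y) : ∃ b, G.Adj x b ∧ b ∈ A := by
  rcases Relation.ReflTransGen.cases_head h with h' | ⟨c, ⟨hadj, -, hcA⟩, -⟩
  · exact absurd h' hxy
  · exact ⟨c, hadj, hcA⟩

/-- removing two "degree‑1" vertices keeps connectivity -/
lemma surgery {G : SimpleGraph V} {A B : Finset V} {u u' p p' : V}
    (hconn : ConnIn G A)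
    (hB : ∀ x, x ∈ B ↔ x ∈ A ∧ x ≠ u ∧ x ≠ u')
    (hup : ∀ y ∈ A, G.Adj u y → y = p) (hu'p : ∀ y ∈ A, G.Adj u' y → y = p')
    (hpB : p ∈ B) (hp'B : p' ∈ B) (huu' : u ≠ u') :
    ConnIn G B := by
  classical
  have hpu : p ≠ u := ((hB p).1 hpB).2.1
  have hpu' : p ≠ u' := ((hB p).1 hpB).2.2
  have hp'u : p' ≠ u := ((hB p').1 hp'B).2.1
  have hp'u' : p' ≠ u' := ((hB p').1 hp'B).2.2
  set f : V → V := fun z => if z = u then p else if z = u' then p' else z with hf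
  have key : ∀ x z, ReachIn G A x z → x ∈ B → ReachIn G B x (f z) := by
    intro x z h hx
    induction h with
    | refl =>
        have hxu : x ≠ u := ((hB x).1 hx).2.1
        have hxu' : x ≠ u' := ((hB x).1 hx).2.2
        simp only [hf, hxu, hxu', if_false]
        exact Relation.ReflTransGen.refl
    | @tail b c hxb hbc ih =>
        obtain ⟨hadj, hbA, hcA⟩ := hbc
        by_cases hcu : c = u
        · have hbp : b = p := hup b hbA (hcu ▸ hadj).symm
          have h1 : f b = p := by rw [hbp]; simp [hf, hpu, hpu']
          have h2 : f c = p := by rw [hcu]; simp [hf]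
          rw [h2]; rw [h1] at ih; exact ih
        · by_cases hcu' : c = u'
          · have hbp : b = p' := hu'p b hbA (hcu' ▸ hadj).symm
            have h1 : f b = p' := by rw [hbp]; simp [hf, hp'u, hp'u']
            have h2 : f c = p' := by rw [hcu']; simp [hf, Ne.symm huu']
            rw [h2]; rw [h1] at ih; exact ih
          · have hcfc : f c = c := by simp [hf, hcu, hcu']
            rw [hcfc]
            have hcB : c ∈ B := (hB c).2 ⟨hcA, hcu, hcu'⟩
            by_cases hbu : b = u
            · have hcp : c = p := hup c hcA (hbu ▸ hadj)
              have h1 : f b = p := by rw [hbu]; simp [hf]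
              rw [h1] at ih; rw [hcp]; exact ih
            · by_cases hbu' : b = u'
              · have hcp : c = p' := hu'p c hcA (hbu' ▸ hadj)
                have h1 : f b = p' := by rw [hbu']; simp [hf, Ne.symm huu']
                rw [h1] at ih; rw [hcp]; exact ih
              · have h1 : f b = b := by simp [hf, hbu, hbu']
                rw [h1] at ih
                have hbB : b ∈ B := (hB b).2 ⟨hbA, hbu, hbu'⟩
                exact Relation.ReflTransGen.tail ih ⟨hadj, hbB, hcB⟩
  intro x hx y hy
  have h := key x y (hconn x ((hB x).1 hx).1 y ((hB y).1 hy).1) hx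
  have : f y = y := by simp [hf, ((hB y).1 hy).2.1, ((hB y).1 hy).2.2]
  rwa [this] at h
end Conn

section Aux
attribute [local instance] Classical.propDecidable
variable {n : ℕ}

def Ik (n k : ℕ) : Finset (Fin (2*n)) :=
  Finset.univ.filter (fun v => k ≤ v.1 ∧ v.1 ≤ 2*n-1-k)
lemma mem_Ik {k : ℕ} {v : Fin (2*n)} : v ∈ Ik n k ↔ k ≤ v.1 ∧ v.1 ≤ 2*n-1-k := by simp [Ik]

lemma Ik_card {k : ℕ} (hk : k ≤ n - 1) (hn : 1 ≤ n) : (Ik n k).card = 2*(n-k) := by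
  have h1 : k < 2*n := by omega
  have h2 : 2*n-1-k < 2*n := by omega
  have : Ik n k = Finset.Icc ⟨k, h1⟩ ⟨2*n-1-k, h2⟩ := by
    ext v
    simp [mem_Ik, Finset.mem_Icc, Fin.le_def]
  rw [this, Fin.card_Icc]
  simp only []
  omega
noncomputable def nb (S : Fin n → SimpleGraph (Fin (2*n))) (j : Fin n) (c : Fin (2*n))
    (A : Finset (Fin (2*n))) : Finset (Fin (2*n)) := A.filter (fun b => (S j).Adj c b)
lemma mem_nb {S : Fin n → SimpleGraph (Fin (2*n))} {j c A} {b : Fin (2*n)} :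
    b ∈ nb S j c A ↔ b ∈ A ∧ (S j).Adj c b := by simp [nb]
noncomputable def eIn (S : Fin n → SimpleGraph (Fin (2*n))) (j : Fin n) (k : ℕ) :
    Finset (Sym2 (Fin (2*n))) := (S j).edgeFinset.filter (fun e => e ∈ (Ik n k).sym2)
lemma mem_eIn {S : Fin n → SimpleGraph (Fin (2*n))} {j k} {e : Sym2 (Fin (2*n))} :
    e ∈ eIn S j k ↔ e ∈ (S j).edgeSet ∧ ∀ a ∈ e, a ∈ Ik n k := by
  simp [eIn, SimpleGraph.mem_edgeFinset, Finset.mem_sym2_iff]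
lemma no_nest {G : SimpleGraph (Fin (2*n))} (hG : IsPlane G) {a b c d : Fin (2*n)}
    (h1 : G.Adj a b) (h2 : G.Adj c d) (hac : a.1 < c.1) (hcd : c.1 < d.1) (hdb : d.1 < b.1) :
    False := by
  refine hG s(a,b) (by simpa using h1) s(c,d) (by simpa using h2) ?_
  exact ⟨a, b, c, d, by omega, by omega, rfl, rfl, Or.inl ⟨by omega, by omega⟩⟩
lemma eq_tree {S : Fin n → SimpleGraph (Fin (2*n))} (hS : IsTwistedPartition S)
    {u v : Fin (2*n)} {j j' : Fin n} (h1 : (S j).Adj u v) (h2 : (S j').Adj u v) : j = j' := by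
  obtain ⟨i, -, hiu⟩ := hS.2 u v h1.ne
  rw [hiu j h1, hiu j' h2]

variable {S : Fin n → SimpleGraph (Fin (2*n))}

lemma eIn_mem_elim {j : Fin n} {k : ℕ} {e : Sym2 (Fin (2*n))} (he : e ∈ eIn S j k) :
    ∃ x y : Fin (2*n), e = s(x,y) ∧ (S j).Adj x y ∧ x.1 < y.1 ∧ k ≤ x.1 ∧ y.1 ≤ 2*n-1-k := by
  rw [mem_eIn] at he
  obtain ⟨h1, h2⟩ := he
  induction e using Sym2.ind with
  | _ x y =>
    rw [SimpleGraph.mem_edgeSet] at h1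
    have hx := h2 x (by simp)
    have hy := h2 y (by simp)
    rw [mem_Ik] at hx hy
    rcases Nat.lt_trichotomy x.1 y.1 with h | h | h
    · exact ⟨x, y, rfl, h1, h, hx.1, hy.2⟩
    · exact absurd (Fin.ext h) h1.ne
    · exact ⟨y, x, Sym2.eq_swap, h1.symm, h, hy.1, hx.2⟩

/-- each pair of distinct vertices is adjacent in exactly one tree: counting neighbours -/
lemma nb_card_sum (hS : IsTwistedPartition S) (c : Fin (2*n)) (B : Finset (Fin (2*n)))
    (hc : c ∉ B) : ∑ j : Fin n, (nb S j c B).card = B.card := by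
  have h1 : ∀ j, (nb S j c B).card = ∑ b ∈ B, if (S j).Adj c b then 1 else 0 := by
    intro j; rw [nb, Finset.card_filter]
  simp only [h1]
  rw [Finset.sum_comm]
  have h2 : ∀ b ∈ B, (∑ j : Fin n, if (S j).Adj c b then 1 else 0) = 1 := by
    intro b hb
    have hbc : c ≠ b := fun h => hc (h ▸ hb)
    obtain ⟨j0, hj0, hun⟩ := hS.2 c b hbc
    rw [← Finset.card_filter]
    rw [show Finset.univ.filter (fun j => (S j).Adj c b) = {j0} from ?_]
    · simp
    · ext j
      simp only [Finset.mem_filter, Finset.mem_univ, true_and, Finset.mem_singleton]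
      exact ⟨fun h => hun j h, fun h => h ▸ hj0⟩
  rw [Finset.sum_congr rfl h2, Finset.sum_const, smul_eq_mul, mul_one]

lemma sum_all_eq_of_le {α : Type*} {s : Finset α} {f : α → ℕ} {m : ℕ}
    (h : ∀ i ∈ s, m ≤ f i) (h2 : ∑ i ∈ s, f i = m * s.card) : ∀ i ∈ s, f i = m := by
  by_contra hcon
  push_neg at hcon
  obtain ⟨i0, hi0, hne⟩ := hcon
  have : ∑ i ∈ s, (fun _ => m) i < ∑ i ∈ s, f i :=
    Finset.sum_lt_sum h ⟨i0, hi0, lt_of_le_of_ne (h i0 hi0) (Ne.symm hne)⟩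
  rw [Finset.sum_const, smul_eq_mul, mul_comm] at this
  omega


def ctrV (j : Fin n) : Fin (2*n) := ⟨j.1, by have := j.2; omega⟩
def ctrW (j : Fin n) : Fin (2*n) := ⟨2*n-1-j.1, by have := j.2; omega⟩

lemma split (hS : IsTwistedPartition S)
    (hcent : ∀ j : Fin n, (S j).Adj (ctrV j) (ctrW j))
    {k : ℕ} (hk : k + 2 ≤ n) {j : Fin n} (c c' : Fin (2*n))
    (hcval : c.1 = k) (hc'val : c'.1 = 2*n-1-k) :
    (eIn S j k).card = (eIn S j (k+1)).card
      + (nb S j c (Ik n (k+1))).card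
      + (nb S j c' (Ik n (k+1))).card
      + (if j.1 = k then 1 else 0) := by
  have hn2 : 2 ≤ n := by omega
  set B := Ik n (k+1) with hB
  have hcB : c ∉ B := by rw [hB, mem_Ik, hcval]; omega
  have hc'B : c' ∉ B := by rw [hB, mem_Ik, hc'val]; omega
  have hcc' : c ≠ c' := by
    intro h; have := congrArg Fin.val h; rw [hcval, hc'val] at this; omega
  have hkfin : k < n := by omega
  have hcentk : (S ⟨k, hkfin⟩).Adj c c' := by
    have h := hcent ⟨k, hkfin⟩
    have e1 : ctrV ⟨k, hkfin⟩ = c := Fin.ext (by rw [hcval]; rfl)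
    have e2 : ctrW ⟨k, hkfin⟩ = c' := Fin.ext (by rw [hc'val]; rfl)
    rwa [e1, e2] at h
  have hadj_iff : (S j).Adj c c' ↔ j.1 = k := by
    constructor
    · intro h
      have := eq_tree hS h hcentk
      rw [this]
    · intro h
      have : j = ⟨k, hkfin⟩ := Fin.ext h
      rw [this]; exact hcentk
  -- memberships in Ik n k
  have hcIk : c ∈ Ik n k := by rw [mem_Ik, hcval]; omega
  have hc'Ik : c' ∈ Ik n k := by rw [mem_Ik, hc'val]; omega
  have hBsub : ∀ b : Fin (2*n), b ∈ B → b ∈ Ik n k := by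
    intro b hb; rw [hB, mem_Ik] at hb; rw [mem_Ik]; omega
  -- partition
  have hsplit1 : (eIn S j k).card = ((eIn S j k).filter (fun e => c ∈ e)).card
      + ((eIn S j k).filter (fun e => ¬ c ∈ e)).card :=
    (Finset.card_filter_add_card_filter_not _).symm
  have hsplit2 : ((eIn S j k).filter (fun e => ¬ c ∈ e)).card
      = ((eIn S j k).filter (fun e => ¬ c ∈ e ∧ c' ∈ e)).card
      + ((eIn S j k).filter (fun e => ¬ c ∈ e ∧ ¬ c' ∈ e)).card := by
    rw [← Finset.filter_filter, ← Finset.filter_filter]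
    exact (Finset.card_filter_add_card_filter_not _).symm
  have hF0 : (eIn S j k).filter (fun e => ¬ c ∈ e ∧ ¬ c' ∈ e) = eIn S j (k+1) := by
    ext e
    simp only [Finset.mem_filter, mem_eIn]
    constructor
    · rintro ⟨⟨he, hall⟩, hnc, hnc'⟩
      refine ⟨he, fun a ha => ?_⟩
      have h1 := hall a ha
      rw [mem_Ik] at h1
      have h2 : a ≠ c := fun h => hnc (h ▸ ha)
      have h3 : a ≠ c' := fun h => hnc' (h ▸ ha)
      have h4 : a.1 ≠ k := fun h => h2 (Fin.ext (h.trans hcval.symm))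
      have h5 : a.1 ≠ 2*n-1-k := fun h => h3 (Fin.ext (h.trans hc'val.symm))
      rw [mem_Ik]; omega
    · rintro ⟨he, hall⟩
      have hsub : ∀ a, a ∈ e → a ∈ Ik n (k+1) := hall
      refine ⟨⟨he, fun a ha => ?_⟩, fun hce => ?_, fun hce => ?_⟩
      · have := hsub a ha; rw [mem_Ik] at this ⊢; omega
      · have := hsub c hce; rw [mem_Ik, hcval] at this; omega
      · have := hsub c' hce; rw [mem_Ik, hc'val] at this; omega
  have hF1 : (eIn S j k).filter (fun e => c ∈ e)
      = ((nb S j c B).image (fun b => s(c,b)))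
        ∪ (if (S j).Adj c c' then {s(c,c')} else ∅) := by
    ext e
    simp only [Finset.mem_filter, Finset.mem_union, Finset.mem_image]
    constructor
    · rintro ⟨he, hce⟩
      obtain ⟨b, rfl⟩ := Sym2.mem_iff_exists.mp hce
      rw [mem_eIn] at he
      have hadj : (S j).Adj c b := (SimpleGraph.mem_edgeSet _).mp he.1
      have hbIk : b ∈ Ik n k := he.2 b (by simp)
      have hbc : b ≠ c := hadj.ne'
      by_cases hbc' : b = c'
      · right; rw [hbc'] at hadj ⊢; simp [hadj]
      · left
        refine ⟨b, ?_, rfl⟩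
        rw [mem_nb]
        refine ⟨?_, hadj⟩
        rw [mem_Ik] at hbIk ⊢
        have h4 : b.1 ≠ k := fun h => hbc (Fin.ext (h.trans hcval.symm))
        have h5 : b.1 ≠ 2*n-1-k := fun h => hbc' (Fin.ext (h.trans hc'val.symm))
        omega
    · rintro (⟨b, hb, rfl⟩ | hite)
      · rw [mem_nb] at hb
        refine ⟨?_, by simp⟩
        rw [mem_eIn]
        refine ⟨(SimpleGraph.mem_edgeSet _).mpr hb.2, fun a ha => ?_⟩
        rw [Sym2.mem_iff] at ha
        rcases ha with rfl | rfl
        · exact hcIk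
        · exact hBsub _ hb.1
      · by_cases hadj : (S j).Adj c c'
        · rw [if_pos hadj, Finset.mem_singleton] at hite
          subst hite
          refine ⟨?_, by simp⟩
          rw [mem_eIn]
          refine ⟨(SimpleGraph.mem_edgeSet _).mpr hadj, fun a ha => ?_⟩
          rw [Sym2.mem_iff] at ha
          rcases ha with rfl | rfl
          · exact hcIk
          · exact hc'Ik
        · rw [if_neg hadj] at hite; exact absurd hite (Finset.notMem_empty _)
  have hF2 : (eIn S j k).filter (fun e => ¬ c ∈ e ∧ c' ∈ e)
      = (nb S j c' B).image (fun b => s(c',b)) := by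
    ext e
    simp only [Finset.mem_filter, Finset.mem_image]
    constructor
    · rintro ⟨he, hnc, hc'e⟩
      obtain ⟨b, rfl⟩ := Sym2.mem_iff_exists.mp hc'e
      rw [mem_eIn] at he
      have hadj : (S j).Adj c' b := (SimpleGraph.mem_edgeSet _).mp he.1
      have hbIk : b ∈ Ik n k := he.2 b (by simp)
      have hbc' : b ≠ c' := hadj.ne'
      have hbc : b ≠ c := by
        rintro rfl; exact hnc (by simp)
      refine ⟨b, ?_, rfl⟩
      rw [mem_nb]
      refine ⟨?_, hadj⟩
      rw [mem_Ik] at hbIk ⊢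
      have h4 : b.1 ≠ k := fun h => hbc (Fin.ext (h.trans hcval.symm))
      have h5 : b.1 ≠ 2*n-1-k := fun h => hbc' (Fin.ext (h.trans hc'val.symm))
      omega
    · rintro ⟨b, hb, rfl⟩
      rw [mem_nb] at hb
      refine ⟨?_, fun hce => ?_, by simp⟩
      · rw [mem_eIn]
        refine ⟨(SimpleGraph.mem_edgeSet _).mpr hb.2, fun a ha => ?_⟩
        rw [Sym2.mem_iff] at ha
        rcases ha with rfl | rfl
        · exact hc'Ik
        · exact hBsub _ hb.1
      · rw [Sym2.mem_iff] at hce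
        rcases hce with h | h
        · exact hcc' h
        · exact hcB (h ▸ hb.1)
  -- cardinalities
  have hinj : ∀ (x b b' : Fin (2*n)), b ≠ x → b' ≠ x → s(x,b) = s(x,b') → b = b' := by
    intro x b b' hb hb' h
    simp only [Sym2.eq_iff] at h
    rcases h with ⟨-, h⟩ | ⟨h1, h2⟩
    · exact h
    · exact absurd h2 hb
  have hF1card : ((eIn S j k).filter (fun e => c ∈ e)).card
      = (nb S j c B).card + (if j.1 = k then 1 else 0) := by
    rw [hF1, Finset.card_union_of_disjoint, Finset.card_image_of_injOn]
    · congr 1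
      by_cases h : (S j).Adj c c'
      · rw [if_pos h, if_pos (hadj_iff.mp h)]; simp
      · rw [if_neg h, if_neg (fun hh => h (hadj_iff.mpr hh))]; simp
    · intro b hb b' hb' h
      exact hinj c b b' (mem_nb.mp hb).2.ne' (mem_nb.mp hb').2.ne' h
    · rw [Finset.disjoint_left]
      intro e he hite
      by_cases h : (S j).Adj c c'
      · rw [if_pos h, Finset.mem_singleton] at hite
        subst hite
        obtain ⟨b, hb, hbe⟩ := Finset.mem_image.mp he
        simp only [Sym2.eq_iff] at hbe
        rcases hbe with ⟨-, h2⟩ | ⟨h1, -⟩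
        · exact hc'B (h2 ▸ (mem_nb.mp hb).1)
        · exact hcc' h1
      · rw [if_neg h] at hite; exact absurd hite (Finset.notMem_empty _)
  have hF2card : ((eIn S j k).filter (fun e => ¬ c ∈ e ∧ c' ∈ e)).card
      = (nb S j c' B).card := by
    rw [hF2, Finset.card_image_of_injOn]
    intro b hb b' hb' h
    exact hinj c' b b' (mem_nb.mp hb).2.ne' (mem_nb.mp hb').2.ne' h
  rw [hsplit1, hsplit2, hF0, hF1card, hF2card]
  ring


lemma eIn_zero (hS : IsTwistedPartition S) (hn1 : 1 ≤ n) (j : Fin n) :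
    (eIn S j 0).card = 2*n-1 := by
  have h1 : eIn S j 0 = (S j).edgeFinset := by
    rw [eIn, Finset.filter_eq_self]
    intro e he
    rw [Finset.mem_sym2_iff]
    intro a ha
    rw [mem_Ik]
    have := a.2
    omega
  have h2 := (hS.1 j).1.card_edgeFinset
  rw [h1]
  rw [Fintype.card_fin] at h2
  omega

lemma eIn_center_succ_empty (hS : IsTwistedPartition S)
    (hcent : ∀ j : Fin n, (S j).Adj (ctrV j) (ctrW j))
    {k : ℕ} (hk : k + 2 ≤ n) {jk : Fin n} (hjk : jk.1 = k) : eIn S jk (k+1) = ∅ := by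
  rw [Finset.eq_empty_iff_forall_notMem]
  intro e he
  obtain ⟨x, y, -, hadj, hxy, hx, hy⟩ := eIn_mem_elim he
  have hcadj := hcent jk
  have hplane := (hS.1 jk).2
  refine no_nest hplane hcadj hadj ?_ hxy ?_
  · show jk.1 < x.1; omega
  · show y.1 < 2*n-1-jk.1; omega

lemma nb_center_lt_empty_v (hS : IsTwistedPartition S)
    (hcent : ∀ j : Fin n, (S j).Adj (ctrV j) (ctrW j))
    {k : ℕ} (hk : k + 2 ≤ n) {j' : Fin n} (hj' : j'.1 < k) {c : Fin (2*n)} (hcval : c.1 = k) :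
    nb S j' c (Ik n (k+1)) = ∅ := by
  rw [Finset.eq_empty_iff_forall_notMem]
  intro b hb
  rw [mem_nb, mem_Ik] at hb
  obtain ⟨⟨hb1, hb2⟩, hadj⟩ := hb
  refine no_nest (hS.1 j').2 (hcent j') hadj ?_ ?_ ?_
  · show j'.1 < c.1; omega
  · show c.1 < b.1; omega
  · show b.1 < 2*n-1-j'.1; omega

lemma nb_center_lt_empty_w (hS : IsTwistedPartition S)
    (hcent : ∀ j : Fin n, (S j).Adj (ctrV j) (ctrW j))
    {k : ℕ} (hk : k + 2 ≤ n) {j' : Fin n} (hj' : j'.1 < k) {c' : Fin (2*n)}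
    (hc'val : c'.1 = 2*n-1-k) :
    nb S j' c' (Ik n (k+1)) = ∅ := by
  rw [Finset.eq_empty_iff_forall_notMem]
  intro b hb
  rw [mem_nb, mem_Ik] at hb
  obtain ⟨⟨hb1, hb2⟩, hadj⟩ := hb
  refine no_nest (hS.1 j').2 (hcent j') hadj.symm ?_ ?_ ?_
  · show j'.1 < b.1; omega
  · show b.1 < c'.1; omega
  · show c'.1 < 2*n-1-j'.1; omega

lemma connIn_zero (hS : IsTwistedPartition S) (j : Fin n) : ConnIn (S j) (Ik n 0) := by
  apply connIn_univ _ (hS.1 j).1.isConnected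
  intro v
  rw [mem_Ik]
  have := v.2
  omega

def GoodP (S : Fin n → SimpleGraph (Fin (2*n))) (k : ℕ) : Prop :=
  ∀ j : Fin n, k ≤ j.1 → ((eIn S j k).card = 2*(n-k)-1 ∧ ConnIn (S j) (Ik n k))

lemma step (hS : IsTwistedPartition S)
    (hcent : ∀ j : Fin n, (S j).Adj (ctrV j) (ctrW j))
    {k : ℕ} (hk : k + 2 ≤ n) (hG : GoodP S k)
    {jk : Fin n} (hjkval : jk.1 = k) {c c' : Fin (2*n)}
    (hcval : c.1 = k) (hc'val : c'.1 = 2*n-1-k) :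
    (∀ j : Fin n, k < j.1 →
        (nb S j c (Ik n (k+1))).card = 1 ∧
        (nb S j c' (Ik n (k+1))).card = 1)
    ∧ (nb S jk c (Ik n (k+1))).card = n-k-1
    ∧ (nb S jk c' (Ik n (k+1))).card = n-k-1
    ∧ GoodP S (k+1) := by
  have hcB : c ∉ (Ik n (k+1)) := by rw [mem_Ik, hcval]; omega
  have hc'B : c' ∉ (Ik n (k+1)) := by rw [mem_Ik, hc'val]; omega
  have hcc' : c ≠ c' := by
    intro h; have := congrArg Fin.val h; rw [hcval, hc'val] at this; omega
  have hcentk : (S jk).Adj c c' := by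
    have h := hcent jk
    have e1 : ctrV jk = c := Fin.ext (by rw [hcval]; exact hjkval)
    have e2 : ctrW jk = c' := Fin.ext (by rw [hc'val]; show 2*n-1-jk.1 = 2*n-1-k; rw [hjkval])
    rwa [e1, e2] at h
  have hadj_iff : ∀ j : Fin n, (S j).Adj c c' → j = jk := fun j h => eq_tree hS h hcentk
  have hBcard : (Ik n (k+1)).card = 2*(n-k)-2 := by
    rw [Ik_card (by omega) (by omega)]; omega
  set J := Finset.Ioi jk with hJ
  have hmemJ : ∀ j : Fin n, j ∈ J ↔ k < j.1 := by
    intro j; rw [hJ, Finset.mem_Ioi, Fin.lt_def, hjkval]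
  have hjknJ : jk ∉ J := by rw [hmemJ]; omega
  have hJcard : J.card = n-k-1 := by rw [hJ, Fin.card_Ioi, hjkval]; omega
  -- sums
  have hsum_split : ∀ (c0 : Fin (2*n)), c0 ∉ (Ik n (k+1)) →
      (∀ j' : Fin n, j'.1 < k → nb S j' c0 (Ik n (k+1)) = ∅) →
      (nb S jk c0 (Ik n (k+1))).card + ∑ j ∈ J, (nb S j c0 (Ik n (k+1))).card = 2*(n-k)-2 := by
    intro c0 hc0 hzero
    have h1 := nb_card_sum hS c0 (Ik n (k+1)) hc0
    rw [hBcard] at h1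
    have h2 : ∑ j : Fin n, (nb S j c0 (Ik n (k+1))).card = ∑ j ∈ insert jk J, (nb S j c0 (Ik n (k+1))).card := by
      symm
      apply Finset.sum_subset (Finset.subset_univ _)
      intro x _ hx
      rw [Finset.mem_insert, hmemJ] at hx
      push_neg at hx
      have hxk : x.1 < k := by
        rcases Nat.lt_or_ge x.1 k with h | h
        · exact h
        · rcases Nat.eq_or_lt_of_le h with h' | h'
          · exact absurd (Fin.ext (h'.symm.trans hjkval.symm)) hx.1
          · omega
      rw [hzero x hxk]
      rfl
    rw [Finset.sum_insert hjknJ] at h2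
    omega
  have hsum_c := hsum_split c hcB (fun j' hj' => nb_center_lt_empty_v hS hcent hk hj' hcval)
  have hsum_c' := hsum_split c' hc'B (fun j' hj' => nb_center_lt_empty_w hS hcent hk hj' hc'val)
  -- lower bounds for j ∈ J
  have hlow : ∀ j ∈ J, 1 ≤ (nb S j c (Ik n (k+1))).card ∧ 1 ≤ (nb S j c' (Ik n (k+1))).card := by
    intro j hj
    rw [hmemJ] at hj
    have hjne : j ≠ jk := by intro h; rw [h, hjkval] at hj; omega
    have hconn := (hG j (le_of_lt hj)).2
    have hcIk : c ∈ Ik n k := by rw [mem_Ik, hcval]; omega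
    have hc'Ik : c' ∈ Ik n k := by rw [mem_Ik, hc'val]; omega
    constructor
    · obtain ⟨b, hadj, hbIk⟩ := reachIn_head (hconn c hcIk c' hc'Ik) hcc'
      have hbc : b ≠ c := hadj.ne'
      have hbc' : b ≠ c' := by
        rintro rfl; exact hjne (hadj_iff j hadj)
      refine Finset.card_pos.mpr ⟨b, ?_⟩
      rw [mem_nb]
      refine ⟨?_, hadj⟩
      rw [mem_Ik] at hbIk
      rw [mem_Ik]
      have h4 : b.1 ≠ k := fun h => hbc (Fin.ext (h.trans hcval.symm))
      have h5 : b.1 ≠ 2*n-1-k := fun h => hbc' (Fin.ext (h.trans hc'val.symm))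
      omega
    · obtain ⟨b, hadj, hbIk⟩ := reachIn_head (hconn c' hc'Ik c hcIk) (Ne.symm hcc')
      have hbc' : b ≠ c' := hadj.ne'
      have hbc : b ≠ c := by
        rintro rfl; exact hjne (hadj_iff j hadj.symm)
      refine Finset.card_pos.mpr ⟨b, ?_⟩
      rw [mem_nb]
      refine ⟨?_, hadj⟩
      rw [mem_Ik] at hbIk
      rw [mem_Ik]
      have h4 : b.1 ≠ k := fun h => hbc (Fin.ext (h.trans hcval.symm))
      have h5 : b.1 ≠ 2*n-1-k := fun h => hbc' (Fin.ext (h.trans hc'val.symm))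
      omega
  -- split identity at jk
  have hsplit_jk := split hS hcent hk (j := jk) c c' hcval hc'val
  rw [eIn_center_succ_empty hS hcent hk hjkval] at hsplit_jk
  rw [(hG jk (by omega)).1] at hsplit_jk
  rw [if_pos hjkval] at hsplit_jk
  simp only [Finset.card_empty] at hsplit_jk
  -- hsplit_jk : 2*(n-k)-1 = 0 + f(jk) + g(jk) + 1
  -- pointwise equality on J
  have hsum_add : ∑ j ∈ J, ((nb S j c (Ik n (k+1))).card + (nb S j c' (Ik n (k+1))).card) = 2 * J.card := by
    rw [Finset.sum_add_distrib]
    have e1 : ∑ j ∈ J, (nb S j c (Ik n (k+1))).card = 2*(n-k)-2 - (nb S jk c (Ik n (k+1))).card := by omega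
    have e2 : ∑ j ∈ J, (nb S j c' (Ik n (k+1))).card = 2*(n-k)-2 - (nb S jk c' (Ik n (k+1))).card := by omega
    rw [e1, e2, hJcard]
    omega
  have hpoint : ∀ j ∈ J, (nb S j c (Ik n (k+1))).card + (nb S j c' (Ik n (k+1))).card = 2 := by
    apply sum_all_eq_of_le
    · intro j hj
      have := hlow j hj
      omega
    · exact hsum_add
  have hones : ∀ j : Fin n, k < j.1 → (nb S j c (Ik n (k+1))).card = 1 ∧ (nb S j c' (Ik n (k+1))).card = 1 := by
    intro j hj
    have h1 := hpoint j ((hmemJ j).mpr hj)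
    have h2 := hlow j ((hmemJ j).mpr hj)
    omega
  have hsumJc : ∑ j ∈ J, (nb S j c (Ik n (k+1))).card = J.card := by
    rw [Finset.sum_congr rfl (fun j hj => (hones j ((hmemJ j).mp hj)).1)]
    simp
  have hsumJc' : ∑ j ∈ J, (nb S j c' (Ik n (k+1))).card = J.card := by
    rw [Finset.sum_congr rfl (fun j hj => (hones j ((hmemJ j).mp hj)).2)]
    simp
  have hfjk : (nb S jk c (Ik n (k+1))).card = n-k-1 := by
    rw [hsumJc, hJcard] at hsum_c; omega
  have hgjk : (nb S jk c' (Ik n (k+1))).card = n-k-1 := by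
    rw [hsumJc', hJcard] at hsum_c'; omega
  refine ⟨hones, hfjk, hgjk, ?_⟩
  -- GoodP (k+1)
  intro j hj
  have hjJ : k < j.1 := by omega
  have hjne : j ≠ jk := by intro h; rw [h, hjkval] at hjJ; omega
  have hsplit_j := split hS hcent hk (j := j) c c' hcval hc'val
  rw [(hG j (by omega)).1] at hsplit_j
  rw [if_neg (by omega : ¬ j.1 = k)] at hsplit_j
  have hfg := hones j hjJ
  constructor
  · omega
  · -- connectivity via surgery
    have hconn := (hG j (le_of_lt hjJ)).2
    obtain ⟨p, hp⟩ := Finset.card_eq_one.mp hfg.1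
    obtain ⟨p', hp'⟩ := Finset.card_eq_one.mp hfg.2
    have hpB : p ∈ (Ik n (k+1)) := by
      have : p ∈ nb S j c (Ik n (k+1)) := by rw [hp]; simp
      exact (mem_nb.mp this).1
    have hp'B : p' ∈ (Ik n (k+1)) := by
      have : p' ∈ nb S j c' (Ik n (k+1)) := by rw [hp']; simp
      exact (mem_nb.mp this).1
    refine surgery hconn (fun x => ?_) (fun y hy hadj => ?_) (fun y hy hadj => ?_) hpB hp'B hcc'
    · rw [mem_Ik, mem_Ik]
      constructor
      · intro h
        refine ⟨by omega, fun hxc => ?_, fun hxc' => ?_⟩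
        · rw [hxc, hcval] at h; omega
        · rw [hxc', hc'val] at h; omega
      · rintro ⟨h1, h2, h3⟩
        have h4 : x.1 ≠ k := fun h => h2 (Fin.ext (h.trans hcval.symm))
        have h5 : x.1 ≠ 2*n-1-k := fun h => h3 (Fin.ext (h.trans hc'val.symm))
        omega
    · have hyB : y ∈ (Ik n (k+1)) := by
        have hyc : y ≠ c := hadj.ne'
        have hyc' : y ≠ c' := by rintro rfl; exact hjne (hadj_iff j hadj)
        rw [mem_Ik] at hy
        rw [mem_Ik]
        have h4 : y.1 ≠ k := fun h => hyc (Fin.ext (h.trans hcval.symm))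
        have h5 : y.1 ≠ 2*n-1-k := fun h => hyc' (Fin.ext (h.trans hc'val.symm))
        omega
      have : y ∈ nb S j c (Ik n (k+1)) := mem_nb.mpr ⟨hyB, hadj⟩
      rw [hp] at this
      exact Finset.mem_singleton.mp this
    · have hyB : y ∈ (Ik n (k+1)) := by
        have hyc' : y ≠ c' := hadj.ne'
        have hyc : y ≠ c := by rintro rfl; exact hjne (hadj_iff j hadj.symm)
        rw [mem_Ik] at hy
        rw [mem_Ik]
        have h4 : y.1 ≠ k := fun h => hyc (Fin.ext (h.trans hcval.symm))
        have h5 : y.1 ≠ 2*n-1-k := fun h => hyc' (Fin.ext (h.trans hc'val.symm))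
        omega
      have : y ∈ nb S j c' (Ik n (k+1)) := mem_nb.mpr ⟨hyB, hadj⟩
      rw [hp'] at this
      exact Finset.mem_singleton.mp this

lemma mainGood (hS : IsTwistedPartition S)
    (hcent : ∀ j : Fin n, (S j).Adj (ctrV j) (ctrW j)) (hn2 : 2 ≤ n) :
    ∀ k, k ≤ n-1 → GoodP S k := by
  intro k
  induction k with
  | zero =>
      intro _ j _
      exact ⟨by rw [eIn_zero hS (by omega)]; omega, connIn_zero hS j⟩
  | succ k ih =>
      intro hk1
      exact (step hS hcent (by omega) (ih (by omega)) (jk := ⟨k, by omega⟩) rfl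
        (c := ⟨k, by omega⟩) (c' := ⟨2*n-1-k, by omega⟩) rfl rfl).2.2.2


lemma no_interior (hS : IsTwistedPartition S)
    (hcent : ∀ j : Fin n, (S j).Adj (ctrV j) (ctrW j))
    {k : ℕ} (hk : k + 2 ≤ n) {jk : Fin n} (hjkval : jk.1 = k) :
    ∀ u ∈ Ik n (k+1), ∀ u' ∈ Ik n (k+1), ¬ (S jk).Adj u u' := by
  intro u hu u' hu' hadj
  rw [mem_Ik] at hu hu'
  rcases Nat.lt_trichotomy u.1 u'.1 with h | h | h
  · refine no_nest (hS.1 jk).2 (hcent jk) hadj ?_ h ?_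
    · show jk.1 < u.1; omega
    · show u'.1 < 2*n-1-jk.1; omega
  · exact hadj.ne (Fin.ext h)
  · refine no_nest (hS.1 jk).2 (hcent jk) hadj.symm ?_ h ?_
    · show jk.1 < u'.1; omega
    · show u.1 < 2*n-1-jk.1; omega

lemma levelStructure (hS : IsTwistedPartition S)
    (hcent : ∀ j : Fin n, (S j).Adj (ctrV j) (ctrW j)) (hn2 : 2 ≤ n)
    {k : ℕ} (hk : k + 2 ≤ n) {jk : Fin n} (hjkval : jk.1 = k) {c c' : Fin (2*n)}
    (hcval : c.1 = k) (hc'val : c'.1 = 2*n-1-k) :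
    (nb S jk c (Ik n (k+1))).card = n-k-1 ∧ (nb S jk c' (Ik n (k+1))).card = n-k-1 ∧
    (∀ u ∈ Ik n (k+1), ((S jk).Adj c u ↔ ¬ (S jk).Adj c' u)) ∧
    (∀ u ∈ Ik n (k+1), (S jk).Adj c u ∨ (S jk).Adj c' u) := by
  obtain ⟨-, hf, hf', -⟩ :=
    step hS hcent hk (mainGood hS hcent hn2 k (by omega)) hjkval hcval hc'val
  have hconn := (mainGood hS hcent hn2 k (by omega) jk (by omega)).2
  have hatl : ∀ u ∈ Ik n (k+1), (S jk).Adj c u ∨ (S jk).Adj c' u := by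
    intro u hu
    have huval := mem_Ik.mp hu
    have huIk : u ∈ Ik n k := mem_Ik.mpr (by omega)
    have hcIk : c ∈ Ik n k := mem_Ik.mpr (by omega)
    have hune : u ≠ c := fun h => by rw [h, hcval] at huval; omega
    obtain ⟨b, hadj, hbIk⟩ := reachIn_head (hconn u huIk c hcIk) hune
    by_cases hbc : b = c
    · exact Or.inl (hbc ▸ hadj).symm
    · by_cases hbc' : b = c'
      · exact Or.inr (hbc' ▸ hadj).symm
      · exfalso
        have hbval := mem_Ik.mp hbIk
        have h4 : b.1 ≠ k := fun h => hbc (Fin.ext (h.trans hcval.symm))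
        have h5 : b.1 ≠ 2*n-1-k := fun h => hbc' (Fin.ext (h.trans hc'val.symm))
        exact no_interior hS hcent hk hjkval u hu b (mem_Ik.mpr (by omega)) hadj
  have hcount : ∀ u ∈ Ik n (k+1),
      ((if (S jk).Adj c u then 1 else 0) + (if (S jk).Adj c' u then 1 else 0)) = 1 := by
    apply sum_all_eq_of_le
    · intro u hu
      rcases hatl u hu with h | h
      · rw [if_pos h]; omega
      · rw [if_pos h]; omega
    · have e1 : ∑ u ∈ Ik n (k+1), (if (S jk).Adj c u then 1 else 0)
          = (nb S jk c (Ik n (k+1))).card := by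
        rw [nb, Finset.card_filter]
      have e2 : ∑ u ∈ Ik n (k+1), (if (S jk).Adj c' u then 1 else 0)
          = (nb S jk c' (Ik n (k+1))).card := by
        rw [nb, Finset.card_filter]
      rw [Finset.sum_add_distrib, e1, e2, hf, hf', Ik_card (by omega) (by omega)]
      omega
  refine ⟨hf, hf', fun u hu => ?_, hatl⟩
  have := hcount u hu
  constructor
  · intro h1 h2
    rw [if_pos h1, if_pos h2] at this; omega
  · intro h2
    rcases hatl u hu with h | h
    · exact h
    · exact absurd h h2

def MidP (S : Fin n → SimpleGraph (Fin (2*n))) (j : Fin n) : Prop :=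
  ((S j).Adj (ctrV j) ⟨n-1, by have := j.2; omega⟩ ∧ (S j).Adj (ctrW j) ⟨n, by have := j.2; omega⟩)
  ∨ ((S j).Adj (ctrV j) ⟨n, by have := j.2; omega⟩ ∧ (S j).Adj (ctrW j) ⟨n-1, by have := j.2; omega⟩)

def LeafP (S : Fin n → SimpleGraph (Fin (2*n))) (j : Fin n) : Prop :=
  ∀ (t : ℕ) (_ht1 : j.1 < t) (ht2 : t + 2 ≤ n),
    ((S j).Adj (ctrV j) ⟨2*n-1-t, by have := j.2; omega⟩ ∧ (S j).Adj (ctrW j) ⟨t, by omega⟩)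

lemma phase2_at (hS : IsTwistedPartition S)
    (hcent : ∀ j : Fin n, (S j).Adj (ctrV j) (ctrW j)) (hn2 : 2 ≤ n)
    (j : Fin n) (hj : j.1 + 2 ≤ n)
    (IH : ∀ j' : Fin n, j.1 < j'.1 → j'.1 + 2 ≤ n → MidP S j') :
    LeafP S j ∧ MidP S j := by
  obtain ⟨hf, hf', hiff, hatl⟩ := levelStructure hS hcent hn2 hj (jk := j) rfl
    (c := ctrV j) (c' := ctrW j) rfl rfl
  have hctrWval : (ctrW j).1 = 2*n-1-j.1 := rfl
  -- (i) the v-center is not adjacent to v-side interior vertices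
  have hnotv : ∀ (t : ℕ) (h1 : j.1 < t) (h2 : t + 2 ≤ n),
      ¬ (S j).Adj (ctrV j) ⟨t, by omega⟩ := by
    intro t ht1 ht2 hadj
    have htB : (⟨t, by omega⟩ : Fin (2*n)) ∈ Ik n (j.1+1) := mem_Ik.mpr (by simp; omega)
    have hnot' : ¬ (S j).Adj (ctrW j) ⟨t, by omega⟩ := (hiff _ htB).mp hadj
    have hne : (⟨t, by omega⟩ : Fin (2*n)) ≠ ctrW j := by
      intro h
      have h2 : t = 2*n-1-j.1 := congrArg Fin.val h
      omega
    obtain ⟨j₀, hj₀, -⟩ := hS.2 ⟨t, by omega⟩ (ctrW j) hne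
    have hj₀ne : j₀ ≠ j := fun h => hnot' (h ▸ hj₀).symm
    have hlow : j.1 < j₀.1 := by
      by_contra hle
      push_neg at hle
      have hlt : j₀.1 < j.1 :=
        lt_of_le_of_ne hle (fun h => hj₀ne (Fin.ext h))
      refine no_nest (hS.1 j₀).2 (hcent j₀) hj₀ ?_ ?_ ?_
      · show j₀.1 < t; omega
      · show t < 2*n-1-j.1; omega
      · show 2*n-1-j.1 < 2*n-1-j₀.1; omega
    have hhigh : j₀.1 ≤ t := by
      by_contra hgt
      push_neg at hgt
      refine no_nest (hS.1 j₀).2 hj₀ (hcent j₀) hgt ?_ ?_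
      · show j₀.1 < 2*n-1-j₀.1; have := j₀.2; omega
      · show 2*n-1-j₀.1 < 2*n-1-j.1; omega
    rcases IH j₀ hlow (by omega) with ⟨-, hl⟩ | ⟨-, hl⟩
    · refine no_nest (hS.1 j₀).2 hj₀ hl.symm ?_ ?_ ?_
      · show t < n; omega
      · show n < 2*n-1-j₀.1; omega
      · show 2*n-1-j₀.1 < 2*n-1-j.1; omega
    · refine no_nest (hS.1 j₀).2 hj₀ hl.symm ?_ ?_ ?_
      · show t < n-1; omega
      · show n-1 < 2*n-1-j₀.1; omega
      · show 2*n-1-j₀.1 < 2*n-1-j.1; omega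
  -- (ii) the w-center is not adjacent to w-side interior vertices
  have hnotw : ∀ (t : ℕ) (h1 : j.1 < t) (h2 : t + 2 ≤ n),
      ¬ (S j).Adj (ctrW j) ⟨2*n-1-t, by omega⟩ := by
    intro t ht1 ht2 hadj
    have htB : (⟨2*n-1-t, by omega⟩ : Fin (2*n)) ∈ Ik n (j.1+1) := mem_Ik.mpr (by simp; omega)
    have hnot' : ¬ (S j).Adj (ctrV j) ⟨2*n-1-t, by omega⟩ := fun h => (hiff _ htB).mp h hadj
    have hne : ctrV j ≠ (⟨2*n-1-t, by omega⟩ : Fin (2*n)) := by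
      intro h
      have h2 : j.1 = 2*n-1-t := congrArg Fin.val h
      omega
    obtain ⟨j₀, hj₀, -⟩ := hS.2 (ctrV j) ⟨2*n-1-t, by omega⟩ hne
    have hj₀ne : j₀ ≠ j := fun h => hnot' (h ▸ hj₀)
    have hlow : j.1 < j₀.1 := by
      by_contra hle
      push_neg at hle
      have hlt : j₀.1 < j.1 :=
        lt_of_le_of_ne hle (fun h => hj₀ne (Fin.ext h))
      refine no_nest (hS.1 j₀).2 (hcent j₀) hj₀ ?_ ?_ ?_
      · show j₀.1 < j.1; exact hlt
      · show j.1 < 2*n-1-t; omega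
      · show 2*n-1-t < 2*n-1-j₀.1; omega
    have hhigh : j₀.1 ≤ t := by
      by_contra hgt
      push_neg at hgt
      refine no_nest (hS.1 j₀).2 hj₀ (hcent j₀) ?_ ?_ ?_
      · show j.1 < j₀.1; exact hlow
      · show j₀.1 < 2*n-1-j₀.1; have := j₀.2; omega
      · show 2*n-1-j₀.1 < 2*n-1-t; omega
    rcases IH j₀ hlow (by omega) with ⟨hl, -⟩ | ⟨hl, -⟩
    · refine no_nest (hS.1 j₀).2 hj₀ hl ?_ ?_ ?_
      · show j.1 < j₀.1; exact hlow
      · show j₀.1 < n-1; omega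
      · show n-1 < 2*n-1-t; omega
    · refine no_nest (hS.1 j₀).2 hj₀ hl ?_ ?_ ?_
      · show j.1 < j₀.1; exact hlow
      · show j₀.1 < n; omega
      · show n < 2*n-1-t; omega
  -- (iii) leaf assignment
  have hleaf : LeafP S j := by
    intro t ht1 ht2
    have htB : (⟨t, by omega⟩ : Fin (2*n)) ∈ Ik n (j.1+1) := mem_Ik.mpr (by simp; omega)
    have htB' : (⟨2*n-1-t, by omega⟩ : Fin (2*n)) ∈ Ik n (j.1+1) := mem_Ik.mpr (by simp; omega)
    constructor
    · rcases hatl _ htB' with h | h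
      · exact h
      · exact absurd h (hnotw t ht1 ht2)
    · rcases hatl _ htB with h | h
      · exact absurd h (hnotv t ht1 ht2)
      · exact h
  refine ⟨hleaf, ?_⟩
  -- (iv) the middle pair
  set x : Fin (2*n) := ⟨n-1, by omega⟩ with hx
  set y : Fin (2*n) := ⟨n, by omega⟩ with hy
  have hxB : x ∈ Ik n (j.1+1) := mem_Ik.mpr (by rw [hx]; simp; omega)
  have hyB : y ∈ Ik n (j.1+1) := mem_Ik.mpr (by rw [hy]; simp; omega)
  have hxy : x ≠ y := by
    intro h; have := congrArg Fin.val h; rw [hx, hy] at this; simp at this; omega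
  have hnb_v : ¬ ((S j).Adj (ctrV j) x ∧ (S j).Adj (ctrV j) y) := by
    rintro ⟨h1, h2⟩
    have hlo : (n+1 : ℕ) < 2*n := by omega
    have hhi : (2*n-2-j.1 : ℕ) < 2*n := by omega
    set W : Finset (Fin (2*n)) := Finset.Icc ⟨n+1, hlo⟩ ⟨2*n-2-j.1, hhi⟩ with hW
    have hWcard : W.card = n-2-j.1 := by
      rw [hW, Fin.card_Icc]
      show 2*n-2-j.1+1-(n+1) = n-2-j.1
      omega
    have hWsub : ∀ v ∈ W, v ∈ nb S j (ctrV j) (Ik n (j.1+1)) := by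
      intro v hv
      rw [hW, Finset.mem_Icc, Fin.le_def, Fin.le_def] at hv
      simp at hv
      have hvval := v.2
      have := (hleaf (2*n-1-v.1) (by omega) (by omega)).1
      have he : (⟨2*n-1-(2*n-1-v.1), by omega⟩ : Fin (2*n)) = v := Fin.ext (by simp; omega)
      rw [he] at this
      exact mem_nb.mpr ⟨mem_Ik.mpr (by omega), this⟩
    have hsub : insert x (insert y W) ⊆ nb S j (ctrV j) (Ik n (j.1+1)) := by
      intro v hv
      rw [Finset.mem_insert, Finset.mem_insert] at hv
      rcases hv with rfl | rfl | hv
      · exact mem_nb.mpr ⟨hxB, h1⟩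
      · exact mem_nb.mpr ⟨hyB, h2⟩
      · exact hWsub v hv
    have hxW : x ∉ W := by
      intro hmem
      rw [hW, Finset.mem_Icc, Fin.le_def, Fin.le_def] at hmem
      have hb : n+1 ≤ (n-1 : ℕ) := hmem.1
      omega
    have hyW : y ∉ W := by
      intro hmem
      rw [hW, Finset.mem_Icc, Fin.le_def, Fin.le_def] at hmem
      have hb : n+1 ≤ (n : ℕ) := hmem.1
      omega
    have hcard : (insert x (insert y W)).card = n-j.1 := by
      rw [Finset.card_insert_of_notMem (by
        rw [Finset.mem_insert]; push_neg; exact ⟨hxy, hxW⟩),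
        Finset.card_insert_of_notMem hyW, hWcard]
      omega
    have := Finset.card_le_card hsub
    rw [hcard, hf] at this
    omega
  have hnb_w : ¬ ((S j).Adj (ctrW j) x ∧ (S j).Adj (ctrW j) y) := by
    rintro ⟨h1, h2⟩
    have hlo : (j.1+1 : ℕ) < 2*n := by omega
    have hhi : (n-2 : ℕ) < 2*n := by omega
    set W : Finset (Fin (2*n)) := Finset.Icc ⟨j.1+1, hlo⟩ ⟨n-2, hhi⟩ with hW
    have hWcard : W.card = n-2-j.1 := by
      rw [hW, Fin.card_Icc]
      show n-2+1-(j.1+1) = n-2-j.1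
      omega
    have hWsub : ∀ v ∈ W, v ∈ nb S j (ctrW j) (Ik n (j.1+1)) := by
      intro v hv
      rw [hW, Finset.mem_Icc, Fin.le_def, Fin.le_def] at hv
      simp at hv
      have := (hleaf v.1 (by omega) (by omega)).2
      have he : (⟨v.1, by omega⟩ : Fin (2*n)) = v := Fin.ext rfl
      rw [he] at this
      exact mem_nb.mpr ⟨mem_Ik.mpr (by omega), this⟩
    have hsub : insert x (insert y W) ⊆ nb S j (ctrW j) (Ik n (j.1+1)) := by
      intro v hv
      rw [Finset.mem_insert, Finset.mem_insert] at hv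
      rcases hv with rfl | rfl | hv
      · exact mem_nb.mpr ⟨hxB, h1⟩
      · exact mem_nb.mpr ⟨hyB, h2⟩
      · exact hWsub v hv
    have hxW : x ∉ W := by
      intro hmem
      rw [hW, Finset.mem_Icc, Fin.le_def, Fin.le_def] at hmem
      have hb : (n-1 : ℕ) ≤ n-2 := hmem.2
      omega
    have hyW : y ∉ W := by
      intro hmem
      rw [hW, Finset.mem_Icc, Fin.le_def, Fin.le_def] at hmem
      have hb : (n : ℕ) ≤ n-2 := hmem.2
      omega
    have hcard : (insert x (insert y W)).card = n-j.1 := by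
      rw [Finset.card_insert_of_notMem (by
        rw [Finset.mem_insert]; push_neg; exact ⟨hxy, hxW⟩),
        Finset.card_insert_of_notMem hyW, hWcard]
      omega
    have := Finset.card_le_card hsub
    rw [hcard, hf'] at this
    omega
  have hax := hatl x hxB
  have hay := hatl y hyB
  rcases hax with hvx | hwx <;> rcases hay with hvy | hwy
  · exact absurd ⟨hvx, hvy⟩ hnb_v
  · exact Or.inl ⟨hvx, hwy⟩
  · exact Or.inr ⟨hvy, hwx⟩
  · exact absurd ⟨hwx, hwy⟩ hnb_w

lemma phase2 (hS : IsTwistedPartition S)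
    (hcent : ∀ j : Fin n, (S j).Adj (ctrV j) (ctrW j)) (hn2 : 2 ≤ n) :
    ∀ j : Fin n, j.1 + 2 ≤ n → LeafP S j ∧ MidP S j := by
  have key : ∀ d : ℕ, ∀ j : Fin n, j.1 + 2 ≤ n → n - 2 - j.1 ≤ d → LeafP S j ∧ MidP S j := by
    intro d
    induction d with
    | zero =>
        intro j hj hd
        exact phase2_at hS hcent hn2 j hj (fun j' h1 h2 => absurd h1 (by omega))
    | succ d ih =>
        intro j hj hd
        refine phase2_at hS hcent hn2 j hj (fun j' h1 h2 => ?_)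
        exact (ih j' h2 (by omega)).2
  intro j hj
  exact key (n - 2 - j.1) j hj le_rfl

end Aux

section Fin2n
variable {n : ℕ}

lemma vv_eq (hn : 0 < n) {j : ℕ} (h1 : 1 ≤ j) (h2 : j ≤ n) {v : Fin (2*n)}
    (hv : v.1 = j - 1) : vv n hn j = v := by
  apply Fin.ext
  show (j-1) % (2*n) = v.1
  rw [hv, Nat.mod_eq_of_lt (by omega)]

lemma ww_eq (hn : 0 < n) {j : ℕ} (h1 : 1 ≤ j) (h2 : j ≤ n) {v : Fin (2*n)}
    (hv : v.1 = 2*n - j) : ww n hn j = v := by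
  apply Fin.ext
  show (2*n-j) % (2*n) = v.1
  rw [hv, Nat.mod_eq_of_lt (by omega)]

end Fin2n


set_option maxHeartbeats 3200000 in
/-- In any partition of `T_{2n}` into plane spanning trees with `v_i w_i ∈ E(S_i)`,
for `1 ≤ i ≤ n - 1` the subgraph of `S_i` induced by
`V_i = {v_i, ..., v_n, w_n, ..., w_i}` is a balanced double star with center edge
`v_i w_i`, containing the edges `v_i w_{n-1}, ..., v_i w_{i+1}`, the edges
`w_i v_{n-1}, ..., w_i v_{i+1}` and exactly one of the pairs
`{v_i w_n, w_i v_n}` or `{v_i v_n, w_i w_n}`.  Here the tree `S_i` is `S ⟨i-1,_⟩`,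
i.e. the vertex index of the center of `S i` is `i.1 + 1`. -/
theorem induced_subgraph_is_balanced_double_star
    (n : ℕ) (hn : 0 < n) (hn2 : 2 ≤ n) (S : Fin n → SimpleGraph (Fin (2 * n)))
    (hS : IsTwistedPartition S)
    (hc : ∀ i : Fin n, (S i).Adj (vv n hn (i.1 + 1)) (ww n hn (i.1 + 1))) :
    ∀ i : Fin n, i.1 + 1 ≤ n - 1 →
      (∀ u : Fin (2 * n),
          (∃ j, i.1 + 1 ≤ j ∧ j ≤ n ∧ (u = vv n hn j ∨ u = ww n hn j)) →
          u ≠ vv n hn (i.1 + 1) → u ≠ ww n hn (i.1 + 1) →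
          ((S i).Adj (vv n hn (i.1 + 1)) u ↔ ¬ (S i).Adj (ww n hn (i.1 + 1)) u)) ∧
      (∀ u u' : Fin (2 * n),
          (∃ j, i.1 + 1 ≤ j ∧ j ≤ n ∧ (u = vv n hn j ∨ u = ww n hn j)) →
          (∃ j, i.1 + 1 ≤ j ∧ j ≤ n ∧ (u' = vv n hn j ∨ u' = ww n hn j)) →
          u ≠ vv n hn (i.1 + 1) → u ≠ ww n hn (i.1 + 1) →
          u' ≠ vv n hn (i.1 + 1) → u' ≠ ww n hn (i.1 + 1) →
          ¬ (S i).Adj u u') ∧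
      ((S i).neighborSet (vv n hn (i.1 + 1)) ∩
          {u | ∃ j, i.1 + 1 ≤ j ∧ j ≤ n ∧ (u = vv n hn j ∨ u = ww n hn j)}).ncard
        = n - (i.1 + 1) + 1 ∧
      ((S i).neighborSet (ww n hn (i.1 + 1)) ∩
          {u | ∃ j, i.1 + 1 ≤ j ∧ j ≤ n ∧ (u = vv n hn j ∨ u = ww n hn j)}).ncard
        = n - (i.1 + 1) + 1 ∧
      (∀ j : ℕ, i.1 + 2 ≤ j → j ≤ n - 1 →
        (S i).Adj (vv n hn (i.1 + 1)) (ww n hn j) ∧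
        (S i).Adj (ww n hn (i.1 + 1)) (vv n hn j)) ∧
      Xor'
        ((S i).Adj (vv n hn (i.1 + 1)) (ww n hn n) ∧
          (S i).Adj (ww n hn (i.1 + 1)) (vv n hn n))
        ((S i).Adj (vv n hn (i.1 + 1)) (vv n hn n) ∧
          (S i).Adj (ww n hn (i.1 + 1)) (ww n hn n)) := by
  classical
  have hcent : ∀ j : Fin n, (S j).Adj (ctrV j) (ctrW j) := by
    intro j
    have h := hc j
    have hj2 := j.2
    rw [vv_eq hn (by omega) (by omega) (v := ctrV j) (by show j.1 = j.1+1-1; omega),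
      ww_eq hn (by omega) (by omega) (v := ctrW j)
        (by show (ctrW j).1 = 2*n-(j.1+1); show 2*n-1-j.1 = 2*n-(j.1+1); omega)] at h
    exact h
  intro i hi
  have hi2 := i.2
  have hk : i.1 + 2 ≤ n := by omega
  have hv1 : vv n hn (i.1+1) = ctrV i :=
    vv_eq hn (by omega) (by omega) (by show i.1 = i.1+1-1; omega)
  have hw1 : ww n hn (i.1+1) = ctrW i :=
    ww_eq hn (by omega) (by omega)
      (by show (ctrW i).1 = 2*n-(i.1+1); show 2*n-1-i.1 = 2*n-(i.1+1); omega)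
  obtain ⟨hf, hf', hiff, hatl⟩ := levelStructure hS hcent hn2 hk (jk := i) rfl
    (c := ctrV i) (c' := ctrW i) rfl rfl
  obtain ⟨hleaf, hmid⟩ := phase2 hS hcent hn2 i hk
  have hmemV : ∀ u : Fin (2*n),
      (∃ j, i.1 + 1 ≤ j ∧ j ≤ n ∧ (u = vv n hn j ∨ u = ww n hn j)) ↔ u ∈ Ik n i.1 := by
    intro u
    constructor
    · rintro ⟨j, hj1, hj2, rfl | rfl⟩
      · have hval : (vv n hn j).1 = j-1 := by
          show (j-1) % (2*n) = j-1
          exact Nat.mod_eq_of_lt (by omega)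
        rw [mem_Ik, hval]
        omega
      · have hval : (ww n hn j).1 = 2*n-j := by
          show (2*n-j) % (2*n) = 2*n-j
          exact Nat.mod_eq_of_lt (by omega)
        rw [mem_Ik, hval]
        omega
    · intro hu
      rw [mem_Ik] at hu
      by_cases hcase : u.1 ≤ n-1
      · exact ⟨u.1+1, by omega, by omega,
          Or.inl (vv_eq hn (by omega) (by omega) (by omega)).symm⟩
      · exact ⟨2*n-u.1, by omega, by omega,
          Or.inr (ww_eq hn (by omega) (by omega) (by have := u.2; omega)).symm⟩
  have hintB : ∀ u : Fin (2*n), u ∈ Ik n i.1 → u ≠ ctrV i → u ≠ ctrW i →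
      u ∈ Ik n (i.1+1) := by
    intro u hu h1 h2
    rw [mem_Ik] at hu
    have h4 : u.1 ≠ i.1 := fun h => h1 (Fin.ext h)
    have h5 : u.1 ≠ 2*n-1-i.1 := fun h => h2 (Fin.ext h)
    rw [mem_Ik]
    omega
  have hVset : {u : Fin (2*n) | ∃ j, i.1 + 1 ≤ j ∧ j ≤ n ∧ (u = vv n hn j ∨ u = ww n hn j)}
      = ↑(Ik n i.1) := by
    ext u
    simp only [Set.mem_setOf_eq, Finset.mem_coe]
    exact hmemV u
  have hncard : ∀ (c0 c1 : Fin (2*n)), (S i).Adj c0 c1 →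
      ((c0.1 = i.1 ∧ c1.1 = 2*n-1-i.1) ∨ (c0.1 = 2*n-1-i.1 ∧ c1.1 = i.1)) →
      (nb S i c0 (Ik n (i.1+1))).card = n-i.1-1 →
      ((S i).neighborSet c0 ∩
        {u : Fin (2*n) | ∃ j, i.1 + 1 ≤ j ∧ j ≤ n ∧ (u = vv n hn j ∨ u = ww n hn j)}).ncard
        = n - (i.1 + 1) + 1 := by
    intro c0 c1 hadj01 hvals hcard0
    have hc1Ik : c1 ∈ Ik n i.1 := mem_Ik.mpr (by omega)
    rw [hVset]
    have hset : (S i).neighborSet c0 ∩ ↑(Ik n i.1)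
        = ↑((Ik n i.1).filter (fun u => (S i).Adj c0 u)) := by
      ext v
      simp only [Set.mem_inter_iff, SimpleGraph.mem_neighborSet, Finset.mem_coe,
        Finset.mem_filter]
      tauto
    rw [hset, Set.ncard_coe_finset]
    have hfilter : (Ik n i.1).filter (fun u => (S i).Adj c0 u)
        = insert c1 (nb S i c0 (Ik n (i.1+1))) := by
      ext b
      rw [Finset.mem_filter, Finset.mem_insert, mem_nb]
      constructor
      · rintro ⟨hbIk, hadj⟩
        by_cases hbc1 : b = c1
        · exact Or.inl hbc1
        · refine Or.inr ⟨?_, hadj⟩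
          rw [mem_Ik] at hbIk ⊢
          have h4 : b ≠ c0 := hadj.ne'
          have h5 : b.1 ≠ c0.1 := fun h => h4 (Fin.ext h)
          have h6 : b.1 ≠ c1.1 := fun h => hbc1 (Fin.ext h)
          omega
      · rintro (rfl | ⟨hbB, hadj⟩)
        · exact ⟨hc1Ik, hadj01⟩
        · refine ⟨?_, hadj⟩
          rw [mem_Ik] at hbB ⊢
          omega
    have hc1nB : c1 ∉ nb S i c0 (Ik n (i.1+1)) := by
      intro hmem
      have := mem_Ik.mp (mem_nb.mp hmem).1
      omega
    rw [hfilter, Finset.card_insert_of_notMem hc1nB, hcard0]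
    omega
  refine ⟨?_, ?_, ?_, ?_, ?_, ?_⟩
  · -- exactly one center
    intro u hu hne1 hne2
    rw [hv1] at hne1
    rw [hw1] at hne2
    rw [hv1, hw1]
    exact hiff u (hintB u ((hmemV u).mp hu) hne1 hne2)
  · -- no interior edges
    intro u u' hu hu' hne1 hne2 hne3 hne4
    rw [hv1] at hne1 hne3
    rw [hw1] at hne2 hne4
    exact no_interior hS hcent hk (jk := i) rfl u
      (hintB u ((hmemV u).mp hu) hne1 hne2) u'
      (hintB u' ((hmemV u').mp hu') hne3 hne4)
  · -- degree of the v-center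
    rw [hv1]
    exact hncard (ctrV i) (ctrW i) (hcent i) (Or.inl ⟨rfl, rfl⟩) hf
  · -- degree of the w-center
    rw [hw1]
    exact hncard (ctrW i) (ctrV i) (hcent i).symm (Or.inr ⟨rfl, rfl⟩) hf'
  · -- the specific leaves
    intro j hj1 hj2
    have h := hleaf (j-1) (by omega) (by omega)
    rw [hv1, hw1]
    rw [ww_eq hn (j := j) (by omega) (by omega)
        (v := (⟨2*n-1-(j-1), by omega⟩ : Fin (2*n))) (by show 2*n-1-(j-1) = 2*n-j; omega),
      vv_eq hn (j := j) (by omega) (by omega)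
        (v := (⟨j-1, by omega⟩ : Fin (2*n))) rfl]
    exact ⟨h.1, h.2⟩
  · -- the Xor
    rw [hv1, hw1]
    rw [vv_eq hn (j := n) (by omega) (le_refl n) (v := (⟨n-1, by omega⟩ : Fin (2*n)))
        (by show (n-1 : ℕ) = n-1; rfl),
      ww_eq hn (j := n) (by omega) (le_refl n) (v := (⟨n, by omega⟩ : Fin (2*n)))
        (by show (n:ℕ) = 2*n-n; omega)]
    have hxmem : (⟨n-1, by omega⟩ : Fin (2*n)) ∈ Ik n (i.1+1) := mem_Ik.mpr (by simp; omega)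
    rcases hmid with ⟨h1, h2⟩ | ⟨h1, h2⟩
    · refine Or.inr ⟨⟨h1, h2⟩, ?_⟩
      rintro ⟨hp1, hp2⟩
      exact (hiff _ hxmem).mp h1 hp2
    · refine Or.inl ⟨⟨h1, h2⟩, ?_⟩
      rintro ⟨hq1, hq2⟩
      exact (hiff _ hxmem).mp hq1 h2
end

section
/- Let n ≥ 2 and let S_1,...,S_n be a partition of T_{2n} into plane spanning trees with v_iw_i ∈ E(S_i). Then the n edges v_1v_2, v_1v_3, ..., v_1v_n, v_1w_n lie in n pairwise distinct trees of the partition, and likewise the n edges w_1w_2, ..., w_1w_n, w_1v_n lie in n pairwise distinct trees. -/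
open SimpleGraph

section TW

open Finset

variable {n : ℕ}

/-- context bundle -/
structure Ctx (n : ℕ) (S : Fin n → SimpleGraph (Fin (2*n))) : Prop where
  hn2 : 2 ≤ n
  tree : ∀ i, (S i).IsTree
  plane : ∀ i, IsPlane (S i)
  uniq : ∀ u v : Fin (2*n), u ≠ v → ∃! i, (S i).Adj u v
  spine : ∀ i : Fin n, ∀ (h1 : (i.val : ℕ) < 2*n) (h2 : 2*n-1-i.val < 2*n),
      (S i).Adj ⟨i.val, h1⟩ ⟨2*n-1-i.val, h2⟩

variable {S : Fin n → SimpleGraph (Fin (2*n))}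

lemma Ctx.noNest (C : Ctx n S) {k : Fin n} {a b c d : Fin (2*n)}
    (h1 : (S k).Adj a b) (h2 : (S k).Adj c d)
    (hab : a.val < b.val) (hcd : c.val < d.val)
    (h3 : a.val < c.val) (h4 : d.val < b.val) : False := by
  exact C.plane k s(a,b) ((S k).mem_edgeSet.mpr h1) s(c,d) ((S k).mem_edgeSet.mpr h2)
    ⟨a, b, c, d, hab, hcd, rfl, rfl, Or.inl ⟨h3, h4⟩⟩

lemma Ctx.unique_tree (C : Ctx n S) {a b : Fin (2*n)} {k k' : Fin n}
    (h : (S k).Adj a b) (h' : (S k').Adj a b) : k = k' := by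
  obtain ⟨i, -, hi⟩ := C.uniq a b h.ne
  rw [hi k h, hi k' h']

lemma Ctx.spine_unique (C : Ctx n S) {k : Fin n} {j : ℕ} (hjn : j < n)
    (h1 : j < 2*n) (h2 : 2*n-1-j < 2*n)
    (h : (S k).Adj ⟨j, h1⟩ ⟨2*n-1-j, h2⟩) : k.val = j := by
  have := C.unique_tree h (C.spine ⟨j, hjn⟩ h1 h2)
  rw [this]

/-- if an edge of `S i` lies inside the interval `[j, 2n-1-j]` then `j ≤ i`. -/
lemma Ctx.edge_level (C : Ctx n S) {i : Fin n} {a b : Fin (2*n)}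
    (h : (S i).Adj a b) {j : ℕ} (ha : j ≤ a.val) (hb : b.val ≤ 2*n-1-j)
    (hab : a.val < b.val) : j ≤ i.val := by
  by_contra hlt
  push_neg at hlt
  have hi := i.isLt
  have hb2 : b.val < 2*n := b.isLt
  exact C.noNest (C.spine i (by omega) (by omega)) h
    (show i.val < 2*n-1-i.val by omega) hab
    (show i.val < a.val by omega) (show b.val < 2*n-1-i.val by omega)

/-- a tree has no triangles -/
lemma Ctx.no_triangle (C : Ctx n S) {k : Fin n} {x u y : Fin (2*n)}
    (h1 : (S k).Adj x u) (h2 : (S k).Adj u y) (h3 : (S k).Adj x y) : False := by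
  have hac := (C.tree k).IsAcyclic
  rw [isAcyclic_iff_path_unique] at hac
  have hxu : x ≠ u := h1.ne
  have huy : u ≠ y := h2.ne
  have hxy : x ≠ y := h3.ne
  let p1 : (S k).Path x y := SimpleGraph.Path.singleton h3
  let p2 : (S k).Path x y :=
    ⟨Walk.cons h1 (Walk.cons h2 Walk.nil), by
      simp [Walk.isPath_def, hxu, huy, hxy]⟩
  have := hac p1 p2
  have hu1 : u ∈ p1.1.support := by
    rw [this]
    simp [p2]
  simp [p1, Path.singleton, Walk.support_cons] at hu1
  rcases hu1 with h | h
  · exact hxu h.symm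
  · exact huy h

/-- In a tree `S k`, a vertex `x ∉ s` cannot have two distinct neighbours in a set `s`
on which the induced graph is connected. -/
lemma Ctx.no_two_nbrs (C : Ctx n S) {k : Fin n} {s : Set (Fin (2*n))}
    (hconn : ((S k).induce s).Connected) {x u u' : Fin (2*n)}
    (hx : x ∉ s) (hu : u ∈ s) (hu' : u' ∈ s) (hne : u ≠ u')
    (h1 : (S k).Adj x u) (h2 : (S k).Adj x u') : False := by
  have hac := (C.tree k).IsAcyclic
  rw [isAcyclic_iff_path_unique] at hac
  -- path from u to u' inside s
  obtain ⟨w⟩ := hconn.preconnected ⟨u, hu⟩ ⟨u', hu'⟩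
  let emb := SimpleGraph.Embedding.comap (Function.Embedding.subtype s) (S k)
  let w2 : (S k).Walk u u' := (w.bypass.map emb.toHom)
  have hw2p : w2.IsPath := Walk.map_isPath_of_injective (Subtype.val_injective) w.bypass_isPath
  have hxw2 : x ∉ w2.support := by
    intro hmem
    rw [show w2.support = w.bypass.support.map emb.toHom from Walk.support_map _ _] at hmem
    obtain ⟨z, _, hz⟩ := List.mem_map.mp hmem
    apply hx
    rw [← hz]
    exact z.2
  let p1 : (S k).Path u u' := ⟨w2, hw2p⟩
  let p2 : (S k).Path u u' :=
    ⟨Walk.cons h1.symm (Walk.cons h2 Walk.nil), by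
      simp [Walk.isPath_def, h1.ne', h2.ne, hne]⟩
  have := hac p1 p2
  apply hxw2
  have : x ∈ p1.1.support := by
    rw [this]; simp [p2]
  exact this

/-- interval of vertices at level `j` -/
def Iv (n j : ℕ) : Set (Fin (2*n)) := {u | j ≤ u.val ∧ u.val ≤ 2*n-1-j}

lemma Iv_mono {j : ℕ} : Iv n (j+1) ⊆ Iv n j := by
  intro u hu
  obtain ⟨h1, h2⟩ := hu
  exact ⟨by omega, by omega⟩

/-- the induction package at level `j` -/
structure QQ (n : ℕ) (S : Fin n → SimpleGraph (Fin (2*n))) (j : ℕ) : Prop where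
  conn : ∀ k : Fin n, j ≤ k.val → ((S k).induce (Iv n j)).Connected
  exN : ∀ k : Fin n, j < k.val → ∃ u, u ∈ Iv n j ∧
      ∀ (h : j < 2*n), (S k).Adj ⟨j, h⟩ u
  uniqN : ∀ k : Fin n, j < k.val → ∀ u u', u ∈ Iv n j → u' ∈ Iv n j →
      ∀ (h : j < 2*n), (S k).Adj ⟨j, h⟩ u → (S k).Adj ⟨j, h⟩ u' → u = u'
  bndN : ∀ k : Fin n, j < k.val → ∀ u, u ∈ Iv n j →
      ∀ (h : j < 2*n), (S k).Adj ⟨j, h⟩ u → u.val ≤ n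
  exM : ∀ k : Fin n, j < k.val → ∃ u, u ∈ Iv n j ∧
      ∀ (h : 2*n-1-j < 2*n), (S k).Adj ⟨2*n-1-j, h⟩ u
  uniqM : ∀ k : Fin n, j < k.val → ∀ u u', u ∈ Iv n j → u' ∈ Iv n j →
      ∀ (h : 2*n-1-j < 2*n), (S k).Adj ⟨2*n-1-j, h⟩ u → (S k).Adj ⟨2*n-1-j, h⟩ u' → u = u'
  bndM : ∀ k : Fin n, j < k.val → ∀ u, u ∈ Iv n j →
      ∀ (h : 2*n-1-j < 2*n), (S k).Adj ⟨2*n-1-j, h⟩ u → n-1 ≤ u.val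

/-- base case: level `n-1` -/
lemma Ctx.Qbase (C : Ctx n S) : QQ n S (n-1) := by
  have hn2 := C.hn2
  constructor
  case exN => intro k hk; exact absurd k.isLt (by omega)
  case uniqN => intro k hk; exact absurd k.isLt (by omega)
  case bndN => intro k hk; exact absurd k.isLt (by omega)
  case exM => intro k hk; exact absurd k.isLt (by omega)
  case uniqM => intro k hk; exact absurd k.isLt (by omega)
  case bndM => intro k hk; exact absurd k.isLt (by omega)
  case conn =>
    intro k hk
    have hkval : k.val = n - 1 := by have := k.isLt; omega
    have hsp := C.spine k (by omega) (by omega)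
    have hmemA : (⟨n-1, by omega⟩ : Fin (2*n)) ∈ Iv n (n-1) :=
      ⟨le_refl _, show n-1 ≤ 2*n-1-(n-1) by omega⟩
    rw [connected_iff_exists_forall_reachable]
    refine ⟨⟨⟨n-1, by omega⟩, hmemA⟩, fun v => ?_⟩
    set u : ↥(Iv n (n-1)) := ⟨⟨n-1, by omega⟩, hmemA⟩ with hudef
    -- both u and v have val = n-1 or n
    have hu := u.2
    have hv := v.2
    have hadj : ∀ (a b : ↥(Iv n (n-1))), a.1.val = n-1 → b.1.val = n →
        ((S k).induce (Iv n (n-1))).Adj a b := by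
      intro a b ha hb
      show (S k).Adj a.1 b.1
      have ha' : a.1 = ⟨k.val, by omega⟩ := by apply Fin.ext; simp [ha, hkval]
      have hb' : b.1 = ⟨2*n-1-k.val, by omega⟩ := by apply Fin.ext; simp [hb, hkval]; omega
      simp only [ha', hb']
      exact C.spine k _ _
    have key : ∀ (a b : ↥(Iv n (n-1))), a.1.val = b.1.val → a = b := by
      intro a b h; exact Subtype.ext (Fin.ext h)
    have hvcase : v.1.val = n-1 ∨ v.1.val = n := by
      obtain ⟨h1, h2⟩ := hv; omega
    rcases hvcase with h2 | h2
    · rw [key u v (by simp [hudef]; omega)]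
    · exact (hadj u v (by simp [hudef]) h2).reachable

/-- step: uniqueness of the neighbour of the left center, for trees `k > j` -/
lemma Ctx.stepUniqN (C : Ctx n S) {j : ℕ} (hj : j + 1 < n) (IH : QQ n S (j+1)) :
    ∀ k : Fin n, j < k.val → ∀ u u', u ∈ Iv n j → u' ∈ Iv n j →
      ∀ (h : j < 2*n), (S k).Adj ⟨j, h⟩ u → (S k).Adj ⟨j, h⟩ u' → u = u' := by
  intro k hk u u' hu hu' h hadj hadj'
  by_contra hne
  have hmem : ∀ v, v ∈ Iv n j → (S k).Adj ⟨j, h⟩ v → v ∈ Iv n (j+1) := by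
    intro v hv hav
    have h1 : v.val ≠ j := fun he => hav.ne (Fin.ext he.symm)
    have h2 : v.val ≠ 2*n-1-j := by
      intro he
      have : v = ⟨2*n-1-j, by omega⟩ := Fin.ext he
      rw [this] at hav
      have := C.spine_unique (j := j) (by omega) h (by omega) hav
      omega
    exact ⟨by have := hv.1; omega, by have := hv.2; omega⟩
  exact C.no_two_nbrs (IH.conn k (by omega))
    (x := ⟨j, h⟩) (fun hx => by have : j+1 ≤ j := hx.1; omega)
    (hmem u hu hadj) (hmem u' hu' hadj') hne hadj hadj'

/-- step: uniqueness of the neighbour of the right center, for trees `k > j` -/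
lemma Ctx.stepUniqM (C : Ctx n S) {j : ℕ} (hj : j + 1 < n) (IH : QQ n S (j+1)) :
    ∀ k : Fin n, j < k.val → ∀ u u', u ∈ Iv n j → u' ∈ Iv n j →
      ∀ (h : 2*n-1-j < 2*n), (S k).Adj ⟨2*n-1-j, h⟩ u → (S k).Adj ⟨2*n-1-j, h⟩ u' → u = u' := by
  intro k hk u u' hu hu' h hadj hadj'
  by_contra hne
  have hmem : ∀ v, v ∈ Iv n j → (S k).Adj ⟨2*n-1-j, h⟩ v → v ∈ Iv n (j+1) := by
    intro v hv hav
    have h2 : v.val ≠ 2*n-1-j := fun he => hav.ne (Fin.ext he.symm)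
    have h1 : v.val ≠ j := by
      intro he
      have : v = ⟨j, by omega⟩ := Fin.ext he
      rw [this] at hav
      have := C.spine_unique (j := j) (by omega) (by omega) h hav.symm
      omega
    exact ⟨by have := hv.1; omega, by have := hv.2; omega⟩
  exact C.no_two_nbrs (IH.conn k (by omega))
    (x := ⟨2*n-1-j, h⟩) (fun hx => by have : 2*n-1-j ≤ 2*n-1-(j+1) := hx.2; omega)
    (hmem u hu hadj) (hmem u' hu' hadj') hne hadj hadj'

set_option maxHeartbeats 1000000 in
lemma Ctx.stepCount (C : Ctx n S) {j : ℕ} (hj : j + 1 < n) (IH : QQ n S (j+1)) :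
    (∀ k : Fin n, j < k.val → ∃ u, u ∈ Iv n j ∧
        ∀ (h : j < 2*n), (S k).Adj ⟨j, h⟩ u) ∧
    (∀ k : Fin n, j < k.val → ∃ u, u ∈ Iv n j ∧
        ∀ (h : 2*n-1-j < 2*n), (S k).Adj ⟨2*n-1-j, h⟩ u) ∧
    (∀ u, u ∈ Iv n j →
        (S ⟨j, by omega⟩).Adj ⟨j, by omega⟩ u ∨ (S ⟨j, by omega⟩).Adj ⟨2*n-1-j, by omega⟩ u) := by
  classical
  have hn2 := C.hn2
  set jF : Fin n := ⟨j, by omega⟩ with hjFdef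
  set aV : Fin (2*n) := ⟨j, by omega⟩ with haVdef
  set bV : Fin (2*n) := ⟨2*n-1-j, by omega⟩ with hbVdef
  have haVval : aV.val = j := rfl
  have hbVval : bV.val = 2*n-1-j := rfl
  have hspj : (S jF).Adj aV bV := C.spine jF (by omega) (by omega)
  set Ifin : Finset (Fin (2*n)) := Finset.Icc aV bV with hIfindef
  have hIfin : ∀ u : Fin (2*n), u ∈ Ifin ↔ u ∈ Iv n j := by
    intro u
    rw [hIfindef, Finset.mem_Icc]
    constructor
    · rintro ⟨h1, h2⟩; exact ⟨h1, h2⟩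
    · rintro ⟨h1, h2⟩; exact ⟨h1, h2⟩
  have card_Ifin : Ifin.card = 2*n-2*j := by
    rw [hIfindef, Fin.card_Icc, haVval, hbVval]; omega
  set N : Fin n → Finset (Fin (2*n)) := fun k => Ifin.filter (fun u => (S k).Adj aV u) with hNdef
  set M : Fin n → Finset (Fin (2*n)) := fun k => Ifin.filter (fun u => (S k).Adj bV u) with hMdef
  set K : Finset (Fin n) := Finset.Icc jF ⟨n-1, by omega⟩ with hKdef
  have hK : ∀ k : Fin n, k ∈ K ↔ j ≤ k.val := by
    intro k
    rw [hKdef, Finset.mem_Icc]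
    constructor
    · rintro ⟨h1, -⟩; exact h1
    · intro h1; exact ⟨h1, by have := k.isLt; show k.val ≤ n-1; omega⟩
  have cardK : K.card = n - j := by rw [hKdef, Fin.card_Icc]; show n-1+1-j = n-j; omega
  have hjFK : jF ∈ K := (hK jF).mpr (le_refl j)
  -- disjointness across trees
  have hNdisj : ∀ k ∈ K, ∀ k' ∈ K, k ≠ k' → Disjoint (N k) (N k') := by
    intro k _ k' _ hne
    rw [Finset.disjoint_left]
    intro u hu hu'
    rw [hNdef, Finset.mem_filter] at hu hu'
    exact hne (C.unique_tree hu.2 hu'.2)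
  have hMdisj : ∀ k ∈ K, ∀ k' ∈ K, k ≠ k' → Disjoint (M k) (M k') := by
    intro k _ k' _ hne
    rw [Finset.disjoint_left]
    intro u hu hu'
    rw [hMdef, Finset.mem_filter] at hu hu'
    exact hne (C.unique_tree hu.2 hu'.2)
  -- unions
  have hNunion : K.biUnion N = Ifin.erase aV := by
    ext u
    simp only [Finset.mem_biUnion, Finset.mem_erase]
    constructor
    · rintro ⟨k, -, hu⟩
      rw [hNdef, Finset.mem_filter] at hu
      exact ⟨hu.2.ne', hu.1⟩
    · rintro ⟨hne, hu⟩
      have huval : j < u.val := by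
        have h1 := ((hIfin u).mp hu).1
        have : u.val ≠ j := fun he => hne (Fin.ext (by rw [he, haVval]))
        omega
      obtain ⟨i, hi, -⟩ := C.uniq aV u (fun e => hne e.symm)
      have hlev : j ≤ i.val := C.edge_level hi (le_of_eq haVval.symm)
        ((hIfin u).mp hu).2 (by rw [haVval]; exact huval)
      exact ⟨i, (hK i).mpr hlev, by rw [hNdef, Finset.mem_filter]; exact ⟨hu, hi⟩⟩
  have hMunion : K.biUnion M = Ifin.erase bV := by
    ext u
    simp only [Finset.mem_biUnion, Finset.mem_erase]
    constructor
    · rintro ⟨k, -, hu⟩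
      rw [hMdef, Finset.mem_filter] at hu
      exact ⟨hu.2.ne', hu.1⟩
    · rintro ⟨hne, hu⟩
      have huval : u.val < 2*n-1-j := by
        have h1 := ((hIfin u).mp hu).2
        have : u.val ≠ 2*n-1-j := fun he => hne (Fin.ext (by rw [he, hbVval]))
        omega
      obtain ⟨i, hi, -⟩ := C.uniq bV u (fun e => hne e.symm)
      have hlev : j ≤ i.val := C.edge_level hi.symm ((hIfin u).mp hu).1
        (le_of_eq hbVval) (by rw [hbVval]; exact huval)
      exact ⟨i, (hK i).mpr hlev, by rw [hMdef, Finset.mem_filter]; exact ⟨hu, hi⟩⟩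
  have haVIfin : aV ∈ Ifin := (hIfin aV).mpr ⟨le_of_eq haVval.symm, by rw [haVval]; omega⟩
  have hbVIfin : bV ∈ Ifin := (hIfin bV).mpr ⟨by rw [hbVval]; omega, le_of_eq hbVval⟩
  have sumN : ∑ k ∈ K, (N k).card = 2*n-2*j-1 := by
    rw [← Finset.card_biUnion hNdisj, hNunion, Finset.card_erase_of_mem haVIfin, card_Ifin]
  have sumM : ∑ k ∈ K, (M k).card = 2*n-2*j-1 := by
    rw [← Finset.card_biUnion hMdisj, hMunion, Finset.card_erase_of_mem hbVIfin, card_Ifin]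
  -- bounds
  have hNle : ∀ k ∈ K, k ≠ jF → (N k).card ≤ 1 := by
    intro k hkK hkne
    apply Finset.card_le_one.mpr
    intro u hu u' hu'
    rw [hNdef, Finset.mem_filter] at hu hu'
    have hkval : j < k.val := by
      have := (hK k).mp hkK
      have : k.val ≠ j := fun he => hkne (Fin.ext (by rw [he]))
      omega
    exact C.stepUniqN hj IH k hkval u u' ((hIfin u).mp hu.1) ((hIfin u').mp hu'.1)
      (by omega) hu.2 hu'.2
  have hMle : ∀ k ∈ K, k ≠ jF → (M k).card ≤ 1 := by
    intro k hkK hkne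
    apply Finset.card_le_one.mpr
    intro u hu u' hu'
    rw [hMdef, Finset.mem_filter] at hu hu'
    have hkval : j < k.val := by
      have := (hK k).mp hkK
      have : k.val ≠ j := fun he => hkne (Fin.ext (by rw [he]))
      omega
    exact C.stepUniqM hj IH k hkval u u' ((hIfin u).mp hu.1) ((hIfin u').mp hu'.1)
      (by omega) hu.2 hu'.2
  have hNMdisj : Disjoint (N jF) (M jF) := by
    rw [Finset.disjoint_left]
    intro u hu hu'
    rw [hNdef, Finset.mem_filter] at hu
    rw [hMdef, Finset.mem_filter] at hu'
    exact C.no_triangle hu.2 hu'.2.symm hspj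
  have hNMcard : (N jF).card + (M jF).card ≤ 2*n-2*j := by
    rw [← Finset.card_union_of_disjoint hNMdisj]
    calc ((N jF) ∪ (M jF)).card ≤ Ifin.card := by
          apply Finset.card_le_card
          apply Finset.union_subset <;> exact Finset.filter_subset _ _
      _ = 2*n-2*j := card_Ifin
  -- the forcing argument
  have hfg : ∀ k ∈ K, (N k).card + (M k).card ≤ (if k = jF then 2*n-2*j else 2) := by
    intro k hkK
    by_cases he : k = jF
    · rw [if_pos he, he]; exact hNMcard
    · rw [if_neg he]
      have h1 := hNle k hkK he
      have h2 := hMle k hkK he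
      omega
  have hsumf : ∑ k ∈ K, ((N k).card + (M k).card) = (2*n-2*j-1) + (2*n-2*j-1) := by
    rw [Finset.sum_add_distrib, sumN, sumM]
  have hsumg : ∑ k ∈ K, (if k = jF then 2*n-2*j else 2) = 2*(n-j-1) + (2*n-2*j) := by
    rw [← Finset.sum_erase_add _ _ hjFK, if_pos rfl]
    congr 1
    have hconst : ∀ k ∈ K.erase jF, (if k = jF then 2*n-2*j else 2) = 2 :=
      fun k hk => if_neg (Finset.ne_of_mem_erase hk)
    rw [Finset.sum_congr rfl hconst, Finset.sum_const, Finset.card_erase_of_mem hjFK,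
      cardK, smul_eq_mul]
    omega
  have hsums : (∑ k ∈ K, ((N k).card + (M k).card))
      = ∑ k ∈ K, (if k = jF then 2*n-2*j else 2) := by
    rw [hsumf, hsumg]; omega
  have hpt : ∀ k ∈ K, (N k).card + (M k).card = (if k = jF then 2*n-2*j else 2) := by
    intro k hkK
    by_contra hne
    have hlt := lt_of_le_of_ne (hfg k hkK) hne
    have := Finset.sum_lt_sum hfg ⟨k, hkK, hlt⟩
    omega
  -- conclusions
  refine ⟨?_, ?_, ?_⟩
  · intro k hkval
    have hkK : k ∈ K := (hK k).mpr (le_of_lt hkval)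
    have hkne : k ≠ jF := fun he => by rw [he] at hkval; exact Nat.lt_irrefl j hkval
    have hfk := hpt k hkK
    rw [if_neg hkne] at hfk
    have hN1 : (N k).card = 1 := by
      have := hNle k hkK hkne
      have := hMle k hkK hkne
      omega
    obtain ⟨u, hu⟩ := Finset.card_eq_one.mp hN1
    have humem : u ∈ N k := by rw [hu]; exact Finset.mem_singleton_self u
    rw [hNdef, Finset.mem_filter] at humem
    exact ⟨u, (hIfin u).mp humem.1, fun h => humem.2⟩
  · intro k hkval
    have hkK : k ∈ K := (hK k).mpr (le_of_lt hkval)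
    have hkne : k ≠ jF := fun he => by rw [he] at hkval; exact Nat.lt_irrefl j hkval
    have hfk := hpt k hkK
    rw [if_neg hkne] at hfk
    have hM1 : (M k).card = 1 := by
      have := hNle k hkK hkne
      have := hMle k hkK hkne
      omega
    obtain ⟨u, hu⟩ := Finset.card_eq_one.mp hM1
    have humem : u ∈ M k := by rw [hu]; exact Finset.mem_singleton_self u
    rw [hMdef, Finset.mem_filter] at humem
    exact ⟨u, (hIfin u).mp humem.1, fun h => humem.2⟩
  · intro u hu
    have hfj := hpt jF hjFK
    rw [if_pos rfl] at hfj
    have hcard : ((N jF) ∪ (M jF)).card = Ifin.card := by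
      rw [Finset.card_union_of_disjoint hNMdisj, card_Ifin, hfj]
    have hsub : (N jF) ∪ (M jF) ⊆ Ifin :=
      Finset.union_subset (Finset.filter_subset _ _) (Finset.filter_subset _ _)
    have hequ : (N jF) ∪ (M jF) = Ifin := Finset.eq_of_subset_of_card_le hsub (le_of_eq hcard.symm)
    have humem : u ∈ (N jF) ∪ (M jF) := by rw [hequ]; exact (hIfin u).mpr hu
    rcases Finset.mem_union.mp humem with h | h
    · rw [hNdef, Finset.mem_filter] at h; exact Or.inl h.2
    · rw [hMdef, Finset.mem_filter] at h; exact Or.inr h.2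

/-- the tree `S (j+1)` contains an edge from `j+1` to some `a ∈ (j+1, n]`. -/
lemma Ctx.lowEdge (C : Ctx n S) {j : ℕ} (hj : j + 1 < n) (IH : QQ n S (j+1)) :
    ∃ a : Fin (2*n), (j+2 ≤ a.val ∧ a.val ≤ n) ∧
      (S ⟨j+1, hj⟩).Adj ⟨j+1, by omega⟩ a := by
  classical
  have hn2 := C.hn2
  rcases Nat.eq_or_lt_of_le hj with hcase | hcase
  · -- j+2 = n : the spine of S (j+1) works
    refine ⟨⟨n, by omega⟩, ⟨show j+2 ≤ n by omega, show (n:ℕ) ≤ n from le_rfl⟩, ?_⟩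
    have := C.spine ⟨j+1, hj⟩ (by omega) (by omega)
    have he : (⟨2*n-1-(j+1), by omega⟩ : Fin (2*n)) = ⟨n, by omega⟩ :=
      Fin.ext (show 2*n-1-(j+1) = n by omega)
    rw [he] at this
    exact this
  · -- j+2 < n
    by_contra hno
    push_neg at hno
    set aV1 : Fin (2*n) := ⟨j+1, by omega⟩ with haV1
    set cands : Finset (Fin (2*n)) := Finset.Icc ⟨j+2, by omega⟩ ⟨n, by omega⟩ with hcands
    set K2 : Finset (Fin n) := Finset.Icc ⟨j+2, by omega⟩ ⟨n-1, by omega⟩ with hK2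
    have hcardc : cands.card = n-j-1 := by rw [hcands, Fin.card_Icc]; show n+1-(j+2) = n-j-1; omega
    have hcardK : K2.card = n-j-2 := by rw [hK2, Fin.card_Icc]; show n-1+1-(j+2) = n-j-2; omega
    set f : Fin (2*n) → Fin n := fun a =>
      if h : aV1 ≠ a then (C.uniq aV1 a h).choose else ⟨0, by omega⟩ with hf
    have hmem : ∀ a ∈ cands, (j+2 ≤ a.val ∧ a.val ≤ n) := by
      intro a ha
      rw [hcands, Finset.mem_Icc] at ha
      exact ⟨ha.1, ha.2⟩
    have hadjf : ∀ a ∈ cands, (S (f a)).Adj aV1 a ∧ j+2 ≤ (f a).val := by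
      intro a ha
      obtain ⟨ha1, ha2⟩ := hmem a ha
      have hne : aV1 ≠ a := fun he => by
        have : j+1 = a.val := congrArg Fin.val he
        omega
      have hadj : (S ((C.uniq aV1 a hne).choose)).Adj aV1 a := (C.uniq aV1 a hne).choose_spec.1
      have hlev : j+1 ≤ (C.uniq aV1 a hne).choose.val :=
        C.edge_level hadj (le_refl _) (show a.val ≤ 2*n-1-(j+1) by omega)
          (show j+1 < a.val by omega)
      have hne2 : (C.uniq aV1 a hne).choose.val ≠ j+1 := by
        intro he
        have : (C.uniq aV1 a hne).choose = ⟨j+1, hj⟩ := Fin.ext he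
        rw [this] at hadj
        exact hno a ⟨ha1, ha2⟩ hadj
      have hfa : f a = (C.uniq aV1 a hne).choose := by
        simp only [hf]
        rw [dif_pos hne]
      rw [hfa]
      exact ⟨hadj, by omega⟩
    have hmaps : ∀ a ∈ cands, f a ∈ K2 := by
      intro a ha
      obtain ⟨-, h2⟩ := hadjf a ha
      rw [hK2, Finset.mem_Icc]
      exact ⟨h2, by have := (f a).isLt; show (f a).val ≤ n-1; omega⟩
    have hinj : Set.InjOn f cands := by
      intro a ha a' ha' he
      obtain ⟨hadj1, hb1⟩ := hadjf a ha
      obtain ⟨hadj2, hb2⟩ := hadjf a' ha'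
      rw [he] at hadj1
      obtain ⟨ha1, ha2⟩ := hmem a ha
      obtain ⟨ha1', ha2'⟩ := hmem a' ha'
      exact IH.uniqN (f a') (by omega) a a'
        ⟨by omega, by omega⟩ ⟨by omega, by omega⟩ (by omega) hadj1 hadj2
    have := Finset.card_le_card_of_injOn f hmaps hinj
    omega

/-- the bound for left-center neighbours at level `j`. -/
lemma Ctx.stepBndN (C : Ctx n S) {j : ℕ} (hj : j + 1 < n) (IH : QQ n S (j+1)) :
    ∀ k : Fin n, j < k.val → ∀ u, u ∈ Iv n j →
      ∀ (h : j < 2*n), (S k).Adj ⟨j, h⟩ u → u.val ≤ n := by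
  intro k hk u hu h hadj
  by_contra hgt
  push_neg at hgt
  have hu2 := hu.2
  rcases Nat.eq_or_lt_of_le (show j+1 ≤ k.val from hk) with hcase | hcase
  · -- k = j+1 : use lowEdge
    obtain ⟨a, ⟨ha1, ha2⟩, hadj2⟩ := C.lowEdge hj IH
    have hke : k = ⟨j+1, hj⟩ := Fin.ext hcase.symm
    rw [hke] at hadj
    exact C.noNest hadj hadj2 (show j < u.val by omega) (show j+1 < a.val by omega)
      (show j < j+1 by omega) (show a.val < u.val by omega)
  · -- k > j+1 : use the unique neighbour from IH
    obtain ⟨a, haIv, hadj2⟩ := IH.exN k (by omega)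
    have hbnd := IH.bndN k (by omega) a haIv (by omega) (hadj2 (by omega))
    have hane : a.val ≠ j+1 := fun he => (hadj2 (by omega)).ne (Fin.ext he.symm)
    have ha1 := haIv.1
    exact C.noNest hadj (hadj2 (by omega)) (show j < u.val by omega)
      (show j+1 < a.val by omega) (show j < j+1 by omega) (show a.val < u.val by omega)

/-- the tree `S (j+1)` contains an edge from `2n-2-j` to some `b ∈ [n-1, 2n-2-j)`. -/
lemma Ctx.highEdge (C : Ctx n S) {j : ℕ} (hj : j + 1 < n) (IH : QQ n S (j+1)) :
    ∃ b : Fin (2*n), (n-1 ≤ b.val ∧ b.val ≤ 2*n-3-j) ∧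
      (S ⟨j+1, hj⟩).Adj ⟨2*n-1-(j+1), by omega⟩ b := by
  classical
  have hn2 := C.hn2
  rcases Nat.eq_or_lt_of_le hj with hcase | hcase
  · -- j+2 = n : the spine of S (j+1) works
    refine ⟨⟨n-1, by omega⟩, ⟨le_rfl, show n-1 ≤ 2*n-3-j by omega⟩, ?_⟩
    have := (C.spine ⟨j+1, hj⟩ (by omega) (by omega)).symm
    have he : (⟨(j+1 : ℕ), by omega⟩ : Fin (2*n)) = ⟨n-1, by omega⟩ :=
      Fin.ext (show j+1 = n-1 by omega)
    rw [he] at this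
    exact this
  · -- j+2 < n
    by_contra hno
    push_neg at hno
    set bV1 : Fin (2*n) := ⟨2*n-1-(j+1), by omega⟩ with hbV1
    set cands : Finset (Fin (2*n)) := Finset.Icc ⟨n-1, by omega⟩ ⟨2*n-3-j, by omega⟩ with hcands
    set K2 : Finset (Fin n) := Finset.Icc ⟨j+2, by omega⟩ ⟨n-1, by omega⟩ with hK2
    have hcardc : cands.card = n-j-1 := by
      rw [hcands, Fin.card_Icc]; show 2*n-3-j+1-(n-1) = n-j-1; omega
    have hcardK : K2.card = n-j-2 := by rw [hK2, Fin.card_Icc]; show n-1+1-(j+2) = n-j-2; omega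
    set f : Fin (2*n) → Fin n := fun b =>
      if h : bV1 ≠ b then (C.uniq bV1 b h).choose else ⟨0, by omega⟩ with hf
    have hmem : ∀ b ∈ cands, (n-1 ≤ b.val ∧ b.val ≤ 2*n-3-j) := by
      intro b hb
      rw [hcands, Finset.mem_Icc] at hb
      exact ⟨hb.1, hb.2⟩
    have hadjf : ∀ b ∈ cands, (S (f b)).Adj bV1 b ∧ j+2 ≤ (f b).val := by
      intro b hb
      obtain ⟨hb1, hb2⟩ := hmem b hb
      have hne : bV1 ≠ b := fun he => by
        have : 2*n-1-(j+1) = b.val := congrArg Fin.val he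
        omega
      have hadj : (S ((C.uniq bV1 b hne).choose)).Adj bV1 b := (C.uniq bV1 b hne).choose_spec.1
      have hlev : j+1 ≤ (C.uniq bV1 b hne).choose.val :=
        C.edge_level hadj.symm (show j+1 ≤ b.val by omega)
          (show bV1.val ≤ 2*n-1-(j+1) from le_rfl) (show b.val < 2*n-1-(j+1) by omega)
      have hne2 : (C.uniq bV1 b hne).choose.val ≠ j+1 := by
        intro he
        have : (C.uniq bV1 b hne).choose = ⟨j+1, hj⟩ := Fin.ext he
        rw [this] at hadj
        exact hno b ⟨hb1, hb2⟩ hadj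
      have hfb : f b = (C.uniq bV1 b hne).choose := by
        simp only [hf]
        rw [dif_pos hne]
      rw [hfb]
      exact ⟨hadj, by omega⟩
    have hmaps : ∀ b ∈ cands, f b ∈ K2 := by
      intro b hb
      obtain ⟨-, h2⟩ := hadjf b hb
      rw [hK2, Finset.mem_Icc]
      exact ⟨h2, by have := (f b).isLt; show (f b).val ≤ n-1; omega⟩
    have hinj : Set.InjOn f cands := by
      intro b hb b' hb' he
      obtain ⟨hadj1, hc1⟩ := hadjf b hb
      obtain ⟨hadj2, hc2⟩ := hadjf b' hb'
      rw [he] at hadj1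
      obtain ⟨hb1, hb2⟩ := hmem b hb
      obtain ⟨hb1', hb2'⟩ := hmem b' hb'
      exact IH.uniqM (f b') (by omega) b b'
        ⟨by omega, by omega⟩ ⟨by omega, by omega⟩ (by omega) hadj1 hadj2
    have := Finset.card_le_card_of_injOn f hmaps hinj
    omega

/-- the bound for right-center neighbours at level `j`. -/
lemma Ctx.stepBndM (C : Ctx n S) {j : ℕ} (hj : j + 1 < n) (IH : QQ n S (j+1)) :
    ∀ k : Fin n, j < k.val → ∀ u, u ∈ Iv n j →
      ∀ (h : 2*n-1-j < 2*n), (S k).Adj ⟨2*n-1-j, h⟩ u → n-1 ≤ u.val := by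
  intro k hk u hu h hadj
  by_contra hgt
  push_neg at hgt
  have hn2 := C.hn2
  have hu2 := hu.2
  rcases Nat.eq_or_lt_of_le (show j+1 ≤ k.val from hk) with hcase | hcase
  · -- k = j+1 : use highEdge
    obtain ⟨b, ⟨hb1, hb2⟩, hadj2⟩ := C.highEdge hj IH
    have hke : k = ⟨j+1, hj⟩ := Fin.ext hcase.symm
    rw [hke] at hadj
    exact C.noNest hadj.symm hadj2.symm (show u.val < 2*n-1-j by omega)
      (show b.val < 2*n-1-(j+1) by omega)
      (show u.val < b.val by omega) (show 2*n-1-(j+1) < 2*n-1-j by omega)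
  · -- k > j+1 : use the unique neighbour from IH
    obtain ⟨b, hbIv, hadj2⟩ := IH.exM k (by omega)
    have hbnd := IH.bndM k (by omega) b hbIv (by omega) (hadj2 (by omega))
    have hbne : b.val ≠ 2*n-1-(j+1) := fun he => (hadj2 (by omega)).ne (Fin.ext he.symm)
    have hb2 := hbIv.2
    exact C.noNest hadj.symm (hadj2 (by omega)).symm (show u.val < 2*n-1-j by omega)
      (show b.val < 2*n-1-(j+1) by omega)
      (show u.val < b.val by omega) (show 2*n-1-(j+1) < 2*n-1-j by omega)

/-- lifting reachability along an inclusion of induced subgraphs -/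
lemma reach_lift {G : SimpleGraph (Fin (2*n))} {s t : Set (Fin (2*n))} (hst : s ⊆ t)
    {u v : Fin (2*n)} (hu : u ∈ s) (hv : v ∈ s)
    (h : (G.induce s).Reachable ⟨u, hu⟩ ⟨v, hv⟩) :
    (G.induce t).Reachable ⟨u, hst hu⟩ ⟨v, hst hv⟩ := by
  let F : G.induce s →g G.induce t := ⟨fun x => ⟨x.1, hst x.2⟩, fun {a b} hab => hab⟩
  exact h.map F

/-- connectivity of the induced graphs at level `j`. -/
lemma Ctx.stepConn (C : Ctx n S) {j : ℕ} (hj : j + 1 < n) (IH : QQ n S (j+1)) :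
    ∀ k : Fin n, j ≤ k.val → ((S k).induce (Iv n j)).Connected := by
  have hn2 := C.hn2
  have hjn : j < n := by omega
  have hj2 : j < 2*n := by omega
  have hb2 : 2*n-1-j < 2*n := by omega
  have hn2n : n < 2*n := by omega
  obtain ⟨hexN, hexM, hstar⟩ := C.stepCount hj IH
  have hmema : (⟨j, hj2⟩ : Fin (2*n)) ∈ Iv n j := ⟨le_rfl, show j ≤ 2*n-1-j by omega⟩
  have hmemb : (⟨2*n-1-j, hb2⟩ : Fin (2*n)) ∈ Iv n j := ⟨show j ≤ 2*n-1-j by omega, le_rfl⟩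
  have hc0mem1 : (⟨n, hn2n⟩ : Fin (2*n)) ∈ Iv n (j+1) :=
    ⟨show j+1 ≤ n by omega, show n ≤ 2*n-1-(j+1) by omega⟩
  have hsub : Iv n (j+1) ⊆ Iv n j := Iv_mono
  intro k hk
  rw [connected_iff_exists_forall_reachable]
  rcases Nat.eq_or_lt_of_le hk with hcase | hcase
  · -- k is the center tree S j : double star
    have hSk : S ⟨j, hjn⟩ = S k := by
      have : (⟨j, hjn⟩ : Fin n) = k := Fin.ext hcase
      rw [this]
    refine ⟨⟨⟨j, hj2⟩, hmema⟩, fun w => ?_⟩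
    have hsp : (S k).Adj ⟨j, hj2⟩ ⟨2*n-1-j, hb2⟩ := by
      rw [← hSk]; exact C.spine ⟨j, hjn⟩ hj2 hb2
    rcases hstar w.1 w.2 with hadj | hadj
    · rw [hSk] at hadj
      exact (SimpleGraph.Adj.reachable (by exact hadj :
        ((S k).induce (Iv n j)).Adj ⟨⟨j, hj2⟩, hmema⟩ w))
    · rw [hSk] at hadj
      refine Reachable.trans ?_ (SimpleGraph.Adj.reachable (by exact hadj :
        ((S k).induce (Iv n j)).Adj ⟨⟨2*n-1-j, hb2⟩, hmemb⟩ w))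
      exact SimpleGraph.Adj.reachable (by exact hsp :
        ((S k).induce (Iv n j)).Adj ⟨⟨j, hj2⟩, hmema⟩ ⟨⟨2*n-1-j, hb2⟩, hmemb⟩)
  · -- k > j
    refine ⟨⟨⟨n, hn2n⟩, hsub hc0mem1⟩, fun w => ?_⟩
    refine Reachable.symm ?_
    have hreach1 : ∀ x : Fin (2*n), ∀ (hx : x ∈ Iv n (j+1)),
        ((S k).induce (Iv n j)).Reachable ⟨x, hsub hx⟩ ⟨⟨n, hn2n⟩, hsub hc0mem1⟩ :=
      fun x hx => reach_lift hsub hx hc0mem1 ((IH.conn k (by omega)).preconnected _ _)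
    rcases Nat.lt_or_ge j w.1.val with hw1 | hw1
    · rcases Nat.lt_or_ge w.1.val (2*n-1-j) with hw2 | hw2
      · -- interior vertex
        have hwmem : w.1 ∈ Iv n (j+1) := ⟨hw1, by omega⟩
        have : w = ⟨w.1, hsub hwmem⟩ := Subtype.ext rfl
        rw [this]
        exact hreach1 w.1 hwmem
      · -- w = right center
        have hweq : w.1 = ⟨2*n-1-j, hb2⟩ := Fin.ext (by
          have h1 := w.2.2
          show w.1.val = 2*n-1-j
          omega)
        obtain ⟨a, haIv, hadj⟩ := hexM k (by omega)
        have hadj' : (S k).Adj ⟨2*n-1-j, hb2⟩ a := hadj hb2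
        have hane1 : a.val ≠ 2*n-1-j := fun he => hadj'.ne (Fin.ext he.symm)
        have hane2 : a.val ≠ j := by
          intro he
          have hae : a = (⟨j, hj2⟩ : Fin (2*n)) := Fin.ext he
          rw [hae] at hadj'
          have := C.spine_unique hjn hj2 hb2 hadj'.symm
          omega
        have haIv1 : a ∈ Iv n (j+1) := by
          obtain ⟨h1, h2⟩ := haIv
          exact ⟨by omega, by omega⟩
        refine Reachable.trans ?_ (hreach1 a haIv1)
        have hadjI : ((S k).induce (Iv n j)).Adj w ⟨a, hsub haIv1⟩ := by
          show (S k).Adj w.1 a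
          rw [hweq]
          exact hadj'
        exact hadjI.reachable
    · -- w = left center
      have hweq : w.1 = ⟨j, hj2⟩ := Fin.ext (by
        have h1 := w.2.1
        show w.1.val = j
        omega)
      obtain ⟨a, haIv, hadj⟩ := hexN k (by omega)
      have hadj' : (S k).Adj ⟨j, hj2⟩ a := hadj hj2
      have hane1 : a.val ≠ j := fun he => hadj'.ne (Fin.ext he.symm)
      have hane2 : a.val ≠ 2*n-1-j := by
        intro he
        have hae : a = (⟨2*n-1-j, hb2⟩ : Fin (2*n)) := Fin.ext he
        rw [hae] at hadj'
        have := C.spine_unique hjn hj2 hb2 hadj'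
        omega
      have haIv1 : a ∈ Iv n (j+1) := by
        obtain ⟨h1, h2⟩ := haIv
        exact ⟨by omega, by omega⟩
      refine Reachable.trans ?_ (hreach1 a haIv1)
      have hadjI : ((S k).induce (Iv n j)).Adj w ⟨a, hsub haIv1⟩ := by
        show (S k).Adj w.1 a
        rw [hweq]
        exact hadj'
      exact hadjI.reachable

/-- the induction step. -/
lemma Ctx.Qstep (C : Ctx n S) {j : ℕ} (hj : j + 1 < n) (IH : QQ n S (j+1)) : QQ n S j where
  conn := C.stepConn hj IH
  exN := (C.stepCount hj IH).1
  uniqN := C.stepUniqN hj IH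
  bndN := C.stepBndN hj IH
  exM := (C.stepCount hj IH).2.1
  uniqM := C.stepUniqM hj IH
  bndM := C.stepBndM hj IH

/-- all levels. -/
lemma Ctx.Qall (C : Ctx n S) : ∀ j, j < n → QQ n S j := by
  have key : ∀ d j, j < n → n-1-j = d → QQ n S j := by
    intro d
    induction d with
    | zero =>
      intro j hj hd
      have : j = n-1 := by omega
      subst this
      exact C.Qbase
    | succ d ihd =>
      intro j hj hd
      exact C.Qstep (by omega) (ihd (j+1) (by omega) (by omega))
  exact fun j hj => key (n-1-j) j hj rfl

/-- the tree containing the long edge has at most one low neighbour of vertex 0. -/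
lemma Ctx.lowPigeon (C : Ctx n S) (Q0 : QQ n S 0) (h0 : 0 < 2*n) {u u' : Fin (2*n)}
    (hu1 : 1 ≤ u.val) (hun : u.val ≤ n) (hu1' : 1 ≤ u'.val) (hun' : u'.val ≤ n)
    (hne : u ≠ u') {k0 : Fin n} (hk0 : k0.val = 0)
    (h1 : (S k0).Adj ⟨0, h0⟩ u) (h2 : (S k0).Adj ⟨0, h0⟩ u') : False := by
  classical
  have hn2 := C.hn2
  set D : Finset (Fin n) := Finset.univ.erase k0 with hD
  have hcardD : D.card = n - 1 := by
    rw [hD, Finset.card_erase_of_mem (Finset.mem_univ _), Finset.card_univ, Fintype.card_fin]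
  set T : Finset (Fin (2*n)) :=
    ((Finset.Icc ⟨1, by omega⟩ ⟨n, by omega⟩).erase u).erase u' with hT
  have huIcc : u ∈ Finset.Icc (⟨1, by omega⟩ : Fin (2*n)) ⟨n, by omega⟩ :=
    Finset.mem_Icc.mpr ⟨hu1, hun⟩
  have huIcc' : u' ∈ (Finset.Icc (⟨1, by omega⟩ : Fin (2*n)) ⟨n, by omega⟩).erase u :=
    Finset.mem_erase.mpr ⟨hne.symm, Finset.mem_Icc.mpr ⟨hu1', hun'⟩⟩
  have hcardT : T.card = n - 2 := by
    rw [hT, Finset.card_erase_of_mem huIcc', Finset.card_erase_of_mem huIcc, Fin.card_Icc]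
    show n+1-1-1-1 = n-2
    omega
  set f : Fin n → Fin (2*n) := fun i =>
    if h : (0:ℕ) < i.val then (Q0.exN i h).choose else u with hf
  have hprop : ∀ i ∈ D, (S i).Adj ⟨0, h0⟩ (f i) ∧ 1 ≤ (f i).val ∧ (f i).val ≤ n := by
    intro i hi
    have hine : i ≠ k0 := Finset.ne_of_mem_erase hi
    have hipos : (0:ℕ) < i.val := by
      rcases Nat.eq_zero_or_pos i.val with h | h
      · exact absurd (Fin.ext (by rw [h, hk0])) hine
      · exact h
    have hfi : f i = (Q0.exN i hipos).choose := by
      simp only [hf]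
      rw [dif_pos hipos]
    obtain ⟨hmem, hadj⟩ := (Q0.exN i hipos).choose_spec
    rw [hfi]
    refine ⟨hadj h0, ?_, Q0.bndN i hipos _ hmem h0 (hadj h0)⟩
    have := (hadj h0).ne'
    have hv : ((Q0.exN i hipos).choose).val ≠ 0 := fun he => this (Fin.ext he)
    omega
  have hmaps : ∀ i ∈ D, f i ∈ T := by
    intro i hi
    obtain ⟨hadj, hb1, hb2⟩ := hprop i hi
    have hine : i ≠ k0 := Finset.ne_of_mem_erase hi
    rw [hT]
    refine Finset.mem_erase.mpr ⟨?_, Finset.mem_erase.mpr ⟨?_, Finset.mem_Icc.mpr ⟨hb1, hb2⟩⟩⟩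
    · intro he
      rw [he] at hadj
      exact hine (C.unique_tree hadj h2)
    · intro he
      rw [he] at hadj
      exact hine (C.unique_tree hadj h1)
  have hinj : Set.InjOn f D := by
    intro i hi i' hi' he
    obtain ⟨hadj, -, -⟩ := hprop i hi
    obtain ⟨hadj', -, -⟩ := hprop i' hi'
    rw [he] at hadj
    exact C.unique_tree hadj hadj'
  have := Finset.card_le_card_of_injOn f hmaps hinj
  omega

/-- the tree containing the long edge has at most one high neighbour of vertex 2n-1. -/
lemma Ctx.highPigeon (C : Ctx n S) (Q0 : QQ n S 0) (h0 : 2*n-1-0 < 2*n) {u u' : Fin (2*n)}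
    (hu1 : n-1 ≤ u.val) (hun : u.val ≤ 2*n-2) (hu1' : n-1 ≤ u'.val) (hun' : u'.val ≤ 2*n-2)
    (hne : u ≠ u') {k0 : Fin n} (hk0 : k0.val = 0)
    (h1 : (S k0).Adj ⟨2*n-1-0, h0⟩ u) (h2 : (S k0).Adj ⟨2*n-1-0, h0⟩ u') : False := by
  classical
  have hn2 := C.hn2
  set D : Finset (Fin n) := Finset.univ.erase k0 with hD
  have hcardD : D.card = n - 1 := by
    rw [hD, Finset.card_erase_of_mem (Finset.mem_univ _), Finset.card_univ, Fintype.card_fin]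
  set T : Finset (Fin (2*n)) :=
    ((Finset.Icc ⟨n-1, by omega⟩ ⟨2*n-2, by omega⟩).erase u).erase u' with hT
  have huIcc : u ∈ Finset.Icc (⟨n-1, by omega⟩ : Fin (2*n)) ⟨2*n-2, by omega⟩ :=
    Finset.mem_Icc.mpr ⟨hu1, hun⟩
  have huIcc' : u' ∈ (Finset.Icc (⟨n-1, by omega⟩ : Fin (2*n)) ⟨2*n-2, by omega⟩).erase u :=
    Finset.mem_erase.mpr ⟨hne.symm, Finset.mem_Icc.mpr ⟨hu1', hun'⟩⟩
  have hcardT : T.card = n - 2 := by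
    rw [hT, Finset.card_erase_of_mem huIcc', Finset.card_erase_of_mem huIcc, Fin.card_Icc]
    show 2*n-2+1-(n-1)-1-1 = n-2
    omega
  set f : Fin n → Fin (2*n) := fun i =>
    if h : (0:ℕ) < i.val then (Q0.exM i h).choose else u with hf
  have hprop : ∀ i ∈ D, (S i).Adj ⟨2*n-1-0, h0⟩ (f i) ∧ n-1 ≤ (f i).val ∧ (f i).val ≤ 2*n-2 := by
    intro i hi
    have hine : i ≠ k0 := Finset.ne_of_mem_erase hi
    have hipos : (0:ℕ) < i.val := by
      rcases Nat.eq_zero_or_pos i.val with h | h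
      · exact absurd (Fin.ext (by rw [h, hk0])) hine
      · exact h
    have hfi : f i = (Q0.exM i hipos).choose := by
      simp only [hf]
      rw [dif_pos hipos]
    obtain ⟨hmem, hadj⟩ := (Q0.exM i hipos).choose_spec
    rw [hfi]
    refine ⟨hadj h0, Q0.bndM i hipos _ hmem h0 (hadj h0), ?_⟩
    have := (hadj h0).ne'
    have hv : ((Q0.exM i hipos).choose).val ≠ 2*n-1-0 := fun he => this (Fin.ext he)
    have hlt := ((Q0.exM i hipos).choose).isLt
    omega
  have hmaps : ∀ i ∈ D, f i ∈ T := by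
    intro i hi
    obtain ⟨hadj, hb1, hb2⟩ := hprop i hi
    have hine : i ≠ k0 := Finset.ne_of_mem_erase hi
    rw [hT]
    refine Finset.mem_erase.mpr ⟨?_, Finset.mem_erase.mpr ⟨?_, Finset.mem_Icc.mpr ⟨hb1, hb2⟩⟩⟩
    · intro he
      rw [he] at hadj
      exact hine (C.unique_tree hadj h2)
    · intro he
      rw [he] at hadj
      exact hine (C.unique_tree hadj h1)
  have hinj : Set.InjOn f D := by
    intro i hi i' hi' he
    obtain ⟨hadj, -, -⟩ := hprop i hi
    obtain ⟨hadj', -, -⟩ := hprop i' hi'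
    rw [he] at hadj
    exact C.unique_tree hadj hadj'
  have := Finset.card_le_card_of_injOn f hmaps hinj
  omega

end TW

/-- In any partition of `T_{2n}` into plane spanning trees with `v_i w_i ∈ E(S_i)`,
the `n` edges `v_1 v_2, ..., v_1 v_n, v_1 w_n` lie in `n` distinct trees, and the
`n` edges `w_1 w_2, ..., w_1 w_n, w_1 v_n` lie in `n` distinct trees. -/
theorem edges_at_v1_and_w1_in_distinct_trees
    (n : ℕ) (hn : 0 < n) (hn2 : 2 ≤ n) (S : Fin n → SimpleGraph (Fin (2 * n)))
    (hS : IsTwistedPartition S)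
    (hc : ∀ i : Fin n, (S i).Adj (vv n hn (i.1 + 1)) (ww n hn (i.1 + 1))) :
    (∀ k : Fin n, ∀ j j' : ℕ, 2 ≤ j → j ≤ n → 2 ≤ j' → j' ≤ n →
      (S k).Adj (vv n hn 1) (vv n hn j) → (S k).Adj (vv n hn 1) (vv n hn j') →
      j = j') ∧
    (∀ k : Fin n, ∀ j : ℕ, 2 ≤ j → j ≤ n →
      (S k).Adj (vv n hn 1) (vv n hn j) →
      ¬ (S k).Adj (vv n hn 1) (ww n hn n)) ∧
    (∀ k : Fin n, ∀ j j' : ℕ, 2 ≤ j → j ≤ n → 2 ≤ j' → j' ≤ n →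
      (S k).Adj (ww n hn 1) (ww n hn j) → (S k).Adj (ww n hn 1) (ww n hn j') →
      j = j') ∧
    (∀ k : Fin n, ∀ j : ℕ, 2 ≤ j → j ≤ n →
      (S k).Adj (ww n hn 1) (ww n hn j) →
      ¬ (S k).Adj (ww n hn 1) (vv n hn n)) := by
  classical
  have h2n : 0 < 2*n := by omega
  have hb0 : 2*n-1-0 < 2*n := by omega
  have C : Ctx n S := by
    refine ⟨hn2, fun i => (hS.1 i).1, fun i => (hS.1 i).2, hS.2, ?_⟩
    intro i h1 h2
    have h := hc i
    have e1 : vv n hn (i.1+1) = (⟨i.1, h1⟩ : Fin (2*n)) := by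
      apply Fin.ext
      show (i.1+1-1) % (2*n) = i.1
      rw [Nat.add_sub_cancel]
      exact Nat.mod_eq_of_lt (by have := i.isLt; omega)
    have e2 : ww n hn (i.1+1) = (⟨2*n-1-i.1, h2⟩ : Fin (2*n)) := by
      apply Fin.ext
      show (2*n - (i.1+1)) % (2*n) = 2*n-1-i.1
      rw [Nat.mod_eq_of_lt (by have := i.isLt; omega)]
      omega
    rw [e1, e2] at h
    exact h
  have Q0 := C.Qall 0 (by omega)
  have memIv0 : ∀ u : Fin (2*n), u ∈ Iv n 0 :=
    fun u => ⟨Nat.zero_le _, by have := u.isLt; omega⟩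
  have hv1 : vv n hn 1 = (⟨0, h2n⟩ : Fin (2*n)) := by
    apply Fin.ext
    show (1-1) % (2*n) = 0
    simp
  have hvj : ∀ j : ℕ, 2 ≤ j → j ≤ n → ∀ (h : j-1 < 2*n),
      vv n hn j = (⟨j-1, h⟩ : Fin (2*n)) := by
    intro j hj1 hj2 h
    apply Fin.ext
    show (j-1) % (2*n) = j-1
    exact Nat.mod_eq_of_lt (by omega)
  have hw1 : ww n hn 1 = (⟨2*n-1-0, hb0⟩ : Fin (2*n)) := by
    apply Fin.ext
    show (2*n-1) % (2*n) = 2*n-1-0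
    rw [Nat.mod_eq_of_lt (by omega)]
    omega
  have hwj : ∀ j : ℕ, 1 ≤ j → j ≤ n → ∀ (h : 2*n-j < 2*n),
      ww n hn j = (⟨2*n-j, h⟩ : Fin (2*n)) := by
    intro j hj1 hj2 h
    apply Fin.ext
    show (2*n-j) % (2*n) = 2*n-j
    exact Nat.mod_eq_of_lt (by omega)
  have hvn : vv n hn n = (⟨n-1, by omega⟩ : Fin (2*n)) := hvj n hn2 le_rfl (by omega)
  have hwn : ww n hn n = (⟨n, by omega⟩ : Fin (2*n)) := by
    rw [hwj n (by omega) le_rfl (by omega)]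
    exact Fin.ext (show 2*n-n = n by omega)
  refine ⟨?_, ?_, ?_, ?_⟩
  · -- part 1
    intro k j j' hj2 hjn hj2' hjn' hadj hadj'
    rw [hv1, hvj j hj2 hjn (by omega)] at hadj
    rw [hv1, hvj j' hj2' hjn' (by omega)] at hadj'
    by_cases hk : k.val = 0
    · by_contra hne
      exact C.lowPigeon Q0 h2n (show 1 ≤ j-1 by omega) (show j-1 ≤ n by omega)
        (show 1 ≤ j'-1 by omega) (show j'-1 ≤ n by omega)
        (fun he => hne (by have hval : j-1 = j'-1 := congrArg Fin.val he; omega))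
        hk hadj hadj'
    · have heq := Q0.uniqN k (Nat.pos_of_ne_zero hk) _ _ (memIv0 _) (memIv0 _) h2n hadj hadj'
      have hval : j-1 = j'-1 := congrArg Fin.val heq
      omega
  · -- part 2
    intro k j hj2 hjn hadj hadj'
    rw [hv1, hvj j hj2 hjn (by omega)] at hadj
    rw [hv1, hwn] at hadj'
    by_cases hk : k.val = 0
    · exact C.lowPigeon Q0 h2n (show 1 ≤ j-1 by omega) (show j-1 ≤ n by omega)
        (show 1 ≤ n by omega) (show (n:ℕ) ≤ n from le_rfl)
        (fun he => by have hval : j-1 = n := congrArg Fin.val he; omega)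
        hk hadj hadj'
    · have heq := Q0.uniqN k (Nat.pos_of_ne_zero hk) _ _ (memIv0 _) (memIv0 _) h2n hadj hadj'
      have hval : j-1 = n := congrArg Fin.val heq
      omega
  · -- part 3
    intro k j j' hj2 hjn hj2' hjn' hadj hadj'
    rw [hw1, hwj j (by omega) hjn (by omega)] at hadj
    rw [hw1, hwj j' (by omega) hjn' (by omega)] at hadj'
    by_cases hk : k.val = 0
    · by_contra hne
      exact C.highPigeon Q0 hb0 (show n-1 ≤ 2*n-j by omega) (show 2*n-j ≤ 2*n-2 by omega)
        (show n-1 ≤ 2*n-j' by omega) (show 2*n-j' ≤ 2*n-2 by omega)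
        (fun he => hne (by have hval : 2*n-j = 2*n-j' := congrArg Fin.val he; omega))
        hk hadj hadj'
    · have heq := Q0.uniqM k (Nat.pos_of_ne_zero hk) _ _ (memIv0 _) (memIv0 _) hb0 hadj hadj'
      have hval : 2*n-j = 2*n-j' := congrArg Fin.val heq
      omega
  · -- part 4
    intro k j hj2 hjn hadj hadj'
    rw [hw1, hwj j (by omega) hjn (by omega)] at hadj
    rw [hw1, hvn] at hadj'
    by_cases hk : k.val = 0
    · exact C.highPigeon Q0 hb0 (show n-1 ≤ 2*n-j by omega) (show 2*n-j ≤ 2*n-2 by omega)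
        (show n-1 ≤ n-1 from le_rfl) (show n-1 ≤ 2*n-2 by omega)
        (fun he => by have hval : 2*n-j = n-1 := congrArg Fin.val he; omega)
        hk hadj hadj'
    · have heq := Q0.uniqM k (Nat.pos_of_ne_zero hk) _ _ (memIv0 _) (memIv0 _) hb0 hadj hadj'
      have hval : 2*n-j = n-1 := congrArg Fin.val heq
      omega
end

section
/- For n ≥ 3, there is no partition of the complete twisted graph T_{2n} into n plane spanning paths. -/
open SimpleGraph

/-- For `n ≥ 3` there is no partition of the complete twisted graph `T_{2n}` into
`n` plane spanning paths (spanning trees of maximum degree at most `2`). -/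
theorem no_partition_into_plane_spanning_paths (n : ℕ) (hn : 3 ≤ n) :
    ¬ ∃ S : Fin n → SimpleGraph (Fin (2 * n)), IsTwistedPartition S ∧
      ∀ i : Fin n, ∀ u : Fin (2 * n), ((S i).neighborSet u).ncard ≤ 2 := by
  classical
  rintro ⟨S, ⟨hts, hpart⟩, hdeg⟩
  have h2n : 0 < 2 * n := by omega
  set a : Fin (2 * n) := ⟨0, h2n⟩ with ha
  set b : Fin (2 * n) := ⟨2 * n - 1, by omega⟩ with hb
  have hab : a ≠ b := by
    simp only [ha, hb, Fin.mk.injEq, ne_eq]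
    omega
  obtain ⟨i, hi, -⟩ := hpart a b hab
  have hplane := (hts i).2
  have htree := (hts i).1
  have hAB : s(a, b) ∈ (S i).edgeSet := hi
  -- every edge of `S i` is incident to `a` or `b`
  have key : ∀ u v : Fin (2 * n), (S i).Adj u v →
      u = a ∨ u = b ∨ v = a ∨ v = b := by
    intro u v huv
    by_contra h
    push_neg at h
    obtain ⟨h1, h2, h3, h4⟩ := h
    have huv' : s(u, v) ∈ (S i).edgeSet := huv
    have h1' : u.val ≠ 0 := fun hz => h1 (Fin.ext hz)
    have h2' : u.val ≠ 2 * n - 1 := fun hz => h2 (Fin.ext hz)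
    have h3' : v.val ≠ 0 := fun hz => h3 (Fin.ext hz)
    have h4' : v.val ≠ 2 * n - 1 := fun hz => h4 (Fin.ext hz)
    have hu := u.isLt
    have hv := v.isLt
    have hab' : a < b := by simp only [Fin.lt_def, ha, hb, Fin.val_mk]; omega
    rcases lt_trichotomy u v with hlt | heq | hlt
    · exact hplane _ hAB _ huv'
        ⟨a, b, u, v, hab', hlt, rfl, rfl,
          Or.inl ⟨by simp only [Fin.lt_def, ha, hb, Fin.val_mk]; omega, by simp only [Fin.lt_def, ha, hb, Fin.val_mk]; omega⟩⟩
    · exact huv.ne heq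
    · exact hplane _ hAB _ huv'
        ⟨a, b, v, u, hab', hlt, rfl, Sym2.eq_swap,
          Or.inl ⟨by simp only [Fin.lt_def, ha, hb, Fin.val_mk]; omega, by simp only [Fin.lt_def, ha, hb, Fin.val_mk]; omega⟩⟩
  -- hence the edge set of `S i` is contained in two incidence sets
  have hsub : (S i).edgeFinset ⊆ (S i).incidenceFinset a ∪ (S i).incidenceFinset b := by
    intro e he
    induction e using Sym2.ind with
    | _ u v =>
      rw [mem_edgeFinset, mem_edgeSet] at he
      rcases key u v he with h | h | h | h
      · exact Finset.mem_union_left _ (by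
          rw [mem_incidenceFinset]
          exact ⟨he, by simp [h]⟩)
      · exact Finset.mem_union_right _ (by
          rw [mem_incidenceFinset]
          exact ⟨he, by simp [h]⟩)
      · exact Finset.mem_union_left _ (by
          rw [mem_incidenceFinset]
          exact ⟨he, by simp [h]⟩)
      · exact Finset.mem_union_right _ (by
          rw [mem_incidenceFinset]
          exact ⟨he, by simp [h]⟩)
  have hdeg' : ∀ v : Fin (2 * n), (S i).degree v ≤ 2 := by
    intro v
    have h := hdeg i v
    rwa [Set.ncard_eq_toFinset_card', ← neighborFinset_def, ← degree] at h
  have hcard : (S i).edgeFinset.card ≤ 4 := by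
    calc (S i).edgeFinset.card
        ≤ ((S i).incidenceFinset a ∪ (S i).incidenceFinset b).card :=
          Finset.card_le_card hsub
      _ ≤ ((S i).incidenceFinset a).card + ((S i).incidenceFinset b).card :=
          Finset.card_union_le _ _
      _ ≤ 2 + 2 := by
          rw [card_incidenceFinset_eq_degree, card_incidenceFinset_eq_degree]
          exact Nat.add_le_add (hdeg' a) (hdeg' b)
      _ = 4 := rfl
  have hcount := htree.card_edgeFinset
  rw [Fintype.card_fin] at hcount
  omega
end

section
/- Let n ≥ 2 and let S_1,...,S_n be a partition of T_{2n} into pairwise isomorphic plane spanning trees with v_iw_i ∈ E(S_i). Then there exists k ∈ {1,...,n} such that S_n = A_k, where A_k is the balanced double star with center edge v_nw_n in which v_n is adjacent exactly to v_1,...,v_{n−k} and w_n, w_{n−1},...,w_{n−k+1}, and w_n is adjacent exactly to w_1,...,w_{n−k} and v_n, v_{n−1},...,v_{n−k+1}. -/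
open SimpleGraph

/-- The spanning balanced double star `A_k` of `T_{2n}` with center edge `v_n w_n`,
in which `v_n` is adjacent to `v_1, ..., v_{n-k}` and `w_n, w_{n-1}, ..., w_{n-k+1}`,
and `w_n` is adjacent to `w_1, ..., w_{n-k}` and `v_n, v_{n-1}, ..., v_{n-k+1}`. -/
def Ak (n : ℕ) (hn : 0 < n) (k : ℕ) : SimpleGraph (Fin (2 * n)) :=
  SimpleGraph.fromEdgeSet
    ({s(vv n hn n, ww n hn n)} ∪
      {e | ∃ j, 1 ≤ j ∧ j ≤ n - k ∧
        (e = s(vv n hn n, vv n hn j) ∨ e = s(ww n hn n, ww n hn j))} ∪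
      {e | ∃ j, n - k + 1 ≤ j ∧ j ≤ n - 1 ∧
        (e = s(vv n hn n, ww n hn j) ∨ e = s(ww n hn n, vv n hn j))})

/-- The spanning balanced double star `A'_i` of `T_{2n}` with center edge `v_i w_i`,
in which `v_i` is adjacent to `w_{i+1}, ..., w_n` and `v_1, ..., v_{i-1}`, and
`w_i` is adjacent to `v_{i+1}, ..., v_n` and `w_1, ..., w_{i-1}`. -/
def A' (n : ℕ) (hn : 0 < n) (i : ℕ) : SimpleGraph (Fin (2 * n)) :=
  SimpleGraph.fromEdgeSet
    ({s(vv n hn i, ww n hn i)} ∪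
      {e | ∃ j, i + 1 ≤ j ∧ j ≤ n ∧
        (e = s(vv n hn i, ww n hn j) ∨ e = s(ww n hn i, vv n hn j))} ∪
      {e | ∃ j, 1 ≤ j ∧ j ≤ i - 1 ∧
        (e = s(vv n hn i, vv n hn j) ∨ e = s(ww n hn i, ww n hn j))})


open scoped Classical

open Finset in
open scoped Classical in
lemma plane_no_nest {m : ℕ} {G : SimpleGraph (Fin m)} (hp : IsPlane G) {a b c d : Fin m}
    (hab : G.Adj a b) (hcd : G.Adj c d) (h1 : a < b) (h2 : c < d) (h3 : c < a) (h4 : b < d) :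
    False :=
  hp _ ((G.mem_edgeSet).mpr hab) _ ((G.mem_edgeSet).mpr hcd)
    ⟨a, b, c, d, h1, h2, rfl, rfl, Or.inr ⟨h3, h4⟩⟩

lemma card_val_range {N : ℕ} (hN : 0 < N) (lo hi : ℕ) (hhi : hi ≤ N) :
    ((Finset.univ : Finset (Fin N)).filter (fun y : Fin N => lo ≤ (y : ℕ) ∧ (y : ℕ) < hi)).card
      = hi - lo := by
  rw [← Nat.card_Ico lo hi]
  apply Finset.card_nbij' (fun (a : Fin N) => (a : ℕ))
    (fun t => (⟨t % N, Nat.mod_lt _ hN⟩ : Fin N))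
  · intro a ha; simp only [Finset.mem_coe, Finset.mem_filter] at ha; simp [Finset.mem_Ico]; omega
  · intro t ht; simp only [Finset.mem_coe, Finset.mem_Ico] at ht
    simp only [Finset.mem_coe, Finset.mem_filter, Finset.mem_univ, true_and]
    rw [Nat.mod_eq_of_lt (by omega : t < N)]; omega
  · intro a ha; exact Fin.ext (by simp [Nat.mod_eq_of_lt a.isLt])
  · intro t ht; simp only [Finset.mem_coe, Finset.mem_Ico] at ht
    simp [Nat.mod_eq_of_lt (by omega : t < N)]

lemma card_val_lt {N : ℕ} (hN : 0 < N) (t : ℕ) (ht : t ≤ N) :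
    ((Finset.univ : Finset (Fin N)).filter (fun y : Fin N => (y : ℕ) < t)).card = t := by
  have := card_val_range (N := N) hN 0 t ht
  simpa using this

open scoped Classical in
lemma degree_pos' {N : ℕ} (hN : 1 < N) {G : SimpleGraph (Fin N)} (hconn : G.Connected)
    (v : Fin N) : 0 < G.degree v := by
  obtain ⟨w, hw⟩ := Fintype.exists_ne_of_one_lt_card (by simpa using hN) v
  obtain ⟨p⟩ := hconn.preconnected v w
  cases p with
  | nil => exact absurd rfl (Ne.symm hw)
  | cons h _ => exact G.degree_pos_iff_exists_adj v |>.mpr ⟨_, h⟩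

open scoped Classical in
lemma leaf_leaf {N : ℕ} {G : SimpleGraph (Fin N)} (hconn : G.Connected) {x y u : Fin N}
    (hdx : G.degree x = 1) (hdy : G.degree y = 1) (hxy : G.Adj x y)
    (hu : 2 ≤ G.degree u) : False := by
  have hux : x ≠ u := by rintro rfl; omega
  have hnbx : ∀ z, G.Adj x z → z = y := by
    intro z hz
    exact Finset.card_le_one.mp hdx.le z (G.mem_neighborFinset x z |>.mpr hz)
      y (G.mem_neighborFinset x y |>.mpr hxy)
  have hnby : ∀ z, G.Adj y z → z = x := by
    intro z hz
    exact Finset.card_le_one.mp hdy.le z (G.mem_neighborFinset y z |>.mpr hz)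
      x (G.mem_neighborFinset y x |>.mpr hxy.symm)
  obtain ⟨w⟩ := hconn.preconnected x u
  obtain ⟨q, hq⟩ := w.toPath
  cases q with
  | nil => exact hux rfl
  | cons h q' =>
    rename_i z
    have hz : y = z := (hnbx z h).symm
    subst hz
    have hyu : y ≠ u := by rintro rfl; omega
    cases q' with
    | nil => exact hyu rfl
    | cons h' q'' =>
      rename_i z'
      have hz' : x = z' := (hnby z' h').symm
      subst hz'
      have hnd := hq.support_nodup
      simp only [SimpleGraph.Walk.support_cons, List.nodup_cons] at hnd
      exact hnd.1 (List.mem_cons_of_mem _ q''.start_mem_support)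

open scoped Classical in
lemma degree_sum_eq {n : ℕ} (S : Fin n → SimpleGraph (Fin (2*n)))
    (hS : IsTwistedPartition S) (v : Fin (2*n)) :
    ∑ i : Fin n, (S i).degree v = 2*n - 1 := by
  have hbi : (Finset.univ : Finset (Fin n)).biUnion (fun j => (S j).neighborFinset v)
      = Finset.univ.erase v := by
    ext u
    simp only [Finset.mem_biUnion, Finset.mem_univ, true_and, SimpleGraph.mem_neighborFinset,
      Finset.mem_erase, and_true]
    constructor
    · rintro ⟨j, hj⟩; exact hj.ne'
    · intro hu
      obtain ⟨i, hi, -⟩ := hS.2 u v hu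
      exact ⟨i, hi.symm⟩
  have hdisj : ((Finset.univ : Finset (Fin n)) : Set (Fin n)).PairwiseDisjoint
      (fun j => (S j).neighborFinset v) := by
    intro i _ j _ hij
    simp only [Function.onFun]
    rw [Finset.disjoint_left]
    intro u hui huj
    rw [SimpleGraph.mem_neighborFinset] at hui huj
    obtain ⟨w, -, huniq⟩ := hS.2 v u hui.ne
    exact hij ((huniq i hui).trans (huniq j huj).symm)
  have := Finset.card_biUnion hdisj
  rw [hbi, Finset.card_erase_of_mem (Finset.mem_univ v), Finset.card_univ,
    Fintype.card_fin] at this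
  exact this.symm ▸ rfl

open scoped Classical in
lemma degree_le_n {n : ℕ} (hn : 0 < n) (S : Fin n → SimpleGraph (Fin (2*n)))
    (hS : IsTwistedPartition S) (i : Fin n) (v : Fin (2*n)) : (S i).degree v ≤ n := by
  have hsum := degree_sum_eq S hS v
  have hpos : ∀ j : Fin n, 1 ≤ (S j).degree v := fun j =>
    degree_pos' (by omega) (hS.1 j).1.isConnected v
  have hsplit : (∑ j ∈ Finset.univ.erase i, (S j).degree v) + (S i).degree v
      = ∑ j : Fin n, (S j).degree v := Finset.sum_erase_add _ _ (Finset.mem_univ i)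
  have hlow : (Finset.univ.erase i).card ≤ ∑ j ∈ Finset.univ.erase i, (S j).degree v := by
    calc (Finset.univ.erase i).card = ∑ _j ∈ Finset.univ.erase i, 1 := by
          rw [Finset.sum_const, smul_eq_mul, mul_one]
      _ ≤ _ := Finset.sum_le_sum (fun j _ => hpos j)
  rw [Finset.card_erase_of_mem (Finset.mem_univ i), Finset.card_univ, Fintype.card_fin] at hlow
  omega

open scoped Classical in
lemma centers_eq {n : ℕ} (hn2 : 2 ≤ n) {G : SimpleGraph (Fin (2*n))}
    (hplane : IsPlane G) {m1 m2 : Fin (2*n)} (hm1 : m1.1 = n - 1) (hm2 : m2.1 = n)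
    (hGm : G.Adj m1 m2)
    (hdegpos : ∀ x, 0 < G.degree x)
    (m c : Fin (2*n)) (hmc : G.Adj m c) (hdm : G.degree m = n)
    (hm : m = m1 ∨ m = m2) (hc1 : c ≠ m1) (hc2 : c ≠ m2)
    (hLC : ∀ x y, G.Adj x y → x ≠ m → x ≠ c → y = m ∨ y = c) : False := by
  have hlt12 : m1 < m2 := by rw [Fin.lt_def]; omega
  obtain ⟨m', hm'v, hmm'⟩ : ∃ m' : Fin (2*n), (m'.1 = n - 1 ∨ m'.1 = n) ∧ G.Adj m m' := by
    rcases hm with rfl | rfl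
    exacts [⟨m2, Or.inr hm2, hGm⟩, ⟨m1, Or.inl hm1, hGm.symm⟩]
  have hmv : m.1 = n - 1 ∨ m.1 = n := by
    rcases hm with rfl | rfl; exacts [Or.inl hm1, Or.inr hm2]
  have hcv : c.1 < n - 1 ∨ n < c.1 := by
    have h1 : c.1 ≠ n - 1 := fun h => hc1 (Fin.ext (by omega))
    have h2 : c.1 ≠ n := fun h => hc2 (Fin.ext (by omega))
    omega
  have hcm' : c ≠ m' := fun h => by
    have := congrArg Fin.val h; omega
  rcases hcv with hcv | hcv
  · set F := Finset.univ.filter (fun x : Fin (2*n) => n + 1 ≤ (x : ℕ) ∧ (x : ℕ) < 2*n) with hF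
    have hFcard : F.card = n - 1 := by
      rw [hF, card_val_range (by omega) _ _ (le_refl _)]; omega
    have hsub : insert c (insert m' F) ⊆ G.neighborFinset m := by
      intro x hx
      rw [SimpleGraph.mem_neighborFinset]
      rcases Finset.mem_insert.mp hx with rfl | hx
      · exact hmc
      rcases Finset.mem_insert.mp hx with rfl | hx
      · exact hmm'
      · simp only [hF, Finset.mem_filter, Finset.mem_univ, true_and] at hx
        obtain ⟨y, hy⟩ := (G.degree_pos_iff_exists_adj x).mp (hdegpos x)
        have hxm : x ≠ m := fun h => by subst h; omega
        have hxc : x ≠ c := fun h => by subst h; omega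
        rcases hLC x y hy hxm hxc with rfl | rfl
        · exact hy.symm
        · exact absurd (plane_no_nest hplane hGm hy.symm hlt12
            (by rw [Fin.lt_def]; omega) (by rw [Fin.lt_def]; omega)
            (by rw [Fin.lt_def]; omega)) (fun h => h)
    have hcard : (insert c (insert m' F)).card = n + 1 := by
      rw [Finset.card_insert_of_notMem, Finset.card_insert_of_notMem, hFcard]
      · omega
      · simp only [hF, Finset.mem_filter, Finset.mem_univ, true_and]; omega
      · simp only [Finset.mem_insert, hF, Finset.mem_filter, Finset.mem_univ, true_and]
        push_neg
        exact ⟨hcm', by omega⟩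
    have := Finset.card_le_card hsub
    rw [hcard] at this
    have : G.degree m = (G.neighborFinset m).card := rfl
    omega
  · set F := Finset.univ.filter (fun x : Fin (2*n) => 0 ≤ (x : ℕ) ∧ (x : ℕ) < n - 1) with hF
    have hFcard : F.card = n - 1 := by
      rw [hF, card_val_range (by omega) _ _ (by omega)]; omega
    have hsub : insert c (insert m' F) ⊆ G.neighborFinset m := by
      intro x hx
      rw [SimpleGraph.mem_neighborFinset]
      rcases Finset.mem_insert.mp hx with rfl | hx
      · exact hmc
      rcases Finset.mem_insert.mp hx with rfl | hx
      · exact hmm'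
      · simp only [hF, Finset.mem_filter, Finset.mem_univ, true_and] at hx
        obtain ⟨y, hy⟩ := (G.degree_pos_iff_exists_adj x).mp (hdegpos x)
        have hxm : x ≠ m := fun h => by subst h; omega
        have hxc : x ≠ c := fun h => by subst h; omega
        rcases hLC x y hy hxm hxc with rfl | rfl
        · exact hy.symm
        · exact absurd (plane_no_nest hplane hGm hy hlt12
            (by rw [Fin.lt_def]; omega) (by rw [Fin.lt_def]; omega)
            (by rw [Fin.lt_def]; omega)) (fun h => h)
    have hcard : (insert c (insert m' F)).card = n + 1 := by
      rw [Finset.card_insert_of_notMem, Finset.card_insert_of_notMem, hFcard]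
      · omega
      · simp only [hF, Finset.mem_filter, Finset.mem_univ, true_and]; omega
      · simp only [Finset.mem_insert, hF, Finset.mem_filter, Finset.mem_univ, true_and]
        push_neg
        exact ⟨hcm', by omega⟩
    have := Finset.card_le_card hsub
    rw [hcard] at this
    have : G.degree m = (G.neighborFinset m).card := rfl
    omega

lemma vv_val (n : ℕ) (hn : 0 < n) (j : ℕ) (h2 : j ≤ 2*n) : (vv n hn j).1 = j - 1 :=
  Nat.mod_eq_of_lt (by omega)

lemma ww_val (n : ℕ) (hn : 0 < n) (j : ℕ) (h1 : 1 ≤ j) : (ww n hn j).1 = 2*n - j :=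
  Nat.mod_eq_of_lt (by omega)

lemma Ak_adj (n : ℕ) (hn : 0 < n) (k : ℕ) (hk1 : 1 ≤ k) (hkn : k ≤ n) (p q : Fin (2*n)) :
    (Ak n hn k).Adj p q ↔
      ((p.1 = n - 1 ∧ (q.1 < n - k ∨ (n ≤ q.1 ∧ q.1 < n + k))) ∨
       (p.1 = n ∧ ((n - k ≤ q.1 ∧ q.1 < n) ∨ n + k ≤ q.1)) ∨
       (q.1 = n - 1 ∧ (p.1 < n - k ∨ (n ≤ p.1 ∧ p.1 < n + k))) ∨
       (q.1 = n ∧ ((n - k ≤ p.1 ∧ p.1 < n) ∨ n + k ≤ p.1))) := by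
  have hvn : (vv n hn n).1 = n - 1 := vv_val n hn n (by omega)
  have hwn : (ww n hn n).1 = n := by rw [ww_val n hn n (by omega)]; omega
  have key : ∀ p q : Fin (2*n),
      ((p.1 = n - 1 ∧ (q.1 < n - k ∨ (n ≤ q.1 ∧ q.1 < n + k))) ∨
       (p.1 = n ∧ ((n - k ≤ q.1 ∧ q.1 < n) ∨ n + k ≤ q.1))) → (Ak n hn k).Adj p q := by
    rintro p q (⟨hp, hq⟩ | ⟨hp, hq⟩)
    · have hpe : p = vv n hn n := Fin.ext (by rw [hvn]; omega)
      rcases hq with hq | ⟨hq1, hq2⟩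
      · have hqe : q = vv n hn (q.1 + 1) := Fin.ext (by rw [vv_val n hn _ (by omega)]; omega)
        exact (SimpleGraph.fromEdgeSet_adj _).mpr
          ⟨Or.inl (Or.inr ⟨q.1 + 1, by omega, by omega, Or.inl (by rw [← hqe, ← hpe])⟩),
           Fin.ne_of_val_ne (by omega)⟩
      · by_cases hqn : q.1 = n
        · have hqe : q = ww n hn n := Fin.ext (by rw [hwn]; omega)
          exact (SimpleGraph.fromEdgeSet_adj _).mpr
            ⟨Or.inl (Or.inl (show s(p,q) = _ by rw [← hqe, ← hpe])), Fin.ne_of_val_ne (by omega)⟩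
        · have hqe : q = ww n hn (2*n - q.1) := Fin.ext (by rw [ww_val n hn _ (by omega)]; omega)
          exact (SimpleGraph.fromEdgeSet_adj _).mpr
            ⟨Or.inr ⟨2*n - q.1, by omega, by omega, Or.inl (by rw [← hqe, ← hpe])⟩,
             Fin.ne_of_val_ne (by omega)⟩
    · have hpe : p = ww n hn n := Fin.ext (by rw [hwn]; omega)
      rcases hq with ⟨hq1, hq2⟩ | hq
      · by_cases hqn : q.1 = n - 1
        · have hqe : q = vv n hn n := Fin.ext (by rw [hvn]; omega)
          exact (SimpleGraph.fromEdgeSet_adj _).mpr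
            ⟨Or.inl (Or.inl (show s(p,q) = _ by rw [hpe, hqe, Sym2.eq_swap])), Fin.ne_of_val_ne (by omega)⟩
        · have hqe : q = vv n hn (q.1 + 1) := Fin.ext (by rw [vv_val n hn _ (by omega)]; omega)
          exact (SimpleGraph.fromEdgeSet_adj _).mpr
            ⟨Or.inr ⟨q.1 + 1, by omega, by omega, Or.inr (by rw [← hqe, ← hpe])⟩,
             Fin.ne_of_val_ne (by omega)⟩
      · have hqe : q = ww n hn (2*n - q.1) := Fin.ext (by rw [ww_val n hn _ (by omega)]; omega)
        exact (SimpleGraph.fromEdgeSet_adj _).mpr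
          ⟨Or.inl (Or.inr ⟨2*n - q.1, by omega, by omega, Or.inr (by rw [← hqe, ← hpe])⟩),
           Fin.ne_of_val_ne (by omega)⟩
  constructor
  · intro hadj
    obtain ⟨hmem, hne⟩ := (SimpleGraph.fromEdgeSet_adj _).mp hadj
    have hne' : p.1 ≠ q.1 := fun h => hne (Fin.ext h)
    rcases hmem with (hc | ⟨j, hj1, hj2, (h | h)⟩) | ⟨j, hj1, hj2, (h | h)⟩
    · obtain ⟨h1, h2⟩ | ⟨h1, h2⟩ := Sym2.eq_iff.mp hc <;>
        · have e1 := congrArg Fin.val h1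
          have e2 := congrArg Fin.val h2
          omega
    all_goals {
      have hv1 : (vv n hn j).1 = j - 1 := vv_val n hn j (by omega)
      have hw1 : (ww n hn j).1 = 2*n - j := ww_val n hn j (by omega)
      obtain ⟨h1, h2⟩ | ⟨h1, h2⟩ := Sym2.eq_iff.mp h <;>
        · have e1 := congrArg Fin.val h1
          have e2 := congrArg Fin.val h2
          omega
    }
  · rintro (h | h | h | h)
    · exact key p q (Or.inl h)
    · exact key p q (Or.inr h)
    · exact (key q p (Or.inl h)).symm
    · exact (key q p (Or.inr h)).symm


open scoped Classical in
lemma outeredge_star {n : ℕ} (hn2 : 2 ≤ n) {H : SimpleGraph (Fin (2*n))}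
    (htree : H.IsTree) (hplane : IsPlane H) {z0 z1 : Fin (2*n)}
    (hz0v : z0.1 = 0) (hz1v : z1.1 = 2*n - 1) (hH1 : H.Adj z0 z1)
    (hdegle : ∀ v, H.degree v ≤ n) :
    H.degree z0 = n ∧ H.degree z1 = n ∧ ∀ x, x ≠ z0 → x ≠ z1 → H.degree x = 1 := by
  have hdegpos : ∀ v, 0 < H.degree v := degree_pos' (by omega) htree.isConnected
  have hz01ne : z0 ≠ z1 := Fin.ne_of_val_ne (by omega)
  have hz01lt : z0 < z1 := by rw [Fin.lt_def]; omega
  have hHcov : ∀ x y, H.Adj x y → x ≠ z0 → x ≠ z1 → y = z0 ∨ y = z1 := by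
    intro x y hxy hx0 hx1
    by_contra hcon
    push_neg at hcon
    obtain ⟨hy0, hy1⟩ := hcon
    have hx0v : 0 < x.1 := by
      rcases Nat.eq_zero_or_pos x.1 with h | h
      · exact absurd (Fin.ext (by omega) : x = z0) hx0
      · exact h
    have hy0v : 0 < y.1 := by
      rcases Nat.eq_zero_or_pos y.1 with h | h
      · exact absurd (Fin.ext (by omega) : y = z0) hy0
      · exact h
    have hx1v : x.1 < 2*n - 1 := by
      rcases lt_or_ge x.1 (2*n-1) with h | h
      · exact h
      · exact absurd (Fin.ext (by have := x.isLt; omega) : x = z1) hx1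
    have hy1v : y.1 < 2*n - 1 := by
      rcases lt_or_ge y.1 (2*n-1) with h | h
      · exact h
      · exact absurd (Fin.ext (by have := y.isLt; omega) : y = z1) hy1
    rcases lt_or_gt_of_ne hxy.ne with hlt | hlt
    · exact plane_no_nest hplane hxy hH1 hlt hz01lt (by rw [Fin.lt_def]; omega)
        (by rw [Fin.lt_def]; omega)
    · exact plane_no_nest hplane hxy.symm hH1 hlt hz01lt (by rw [Fin.lt_def]; omega)
        (by rw [Fin.lt_def]; omega)
  have hsumH : ∑ v, H.degree v = 2 * (2*n - 1) := by
    rw [SimpleGraph.sum_degrees_eq_twice_card_edges]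
    have he := htree.card_edgeFinset
    rw [Fintype.card_fin] at he
    omega
  have hcovsub : (Finset.univ : Finset (Fin (2*n))) ⊆
      H.neighborFinset z0 ∪ H.neighborFinset z1 := by
    intro x _
    rw [Finset.mem_union, SimpleGraph.mem_neighborFinset, SimpleGraph.mem_neighborFinset]
    by_cases hx0 : x = z0
    · right; rw [hx0]; exact hH1.symm
    by_cases hx1 : x = z1
    · left; rw [hx1]; exact hH1
    obtain ⟨y, hy⟩ := (H.degree_pos_iff_exists_adj x).mp (hdegpos x)
    rcases hHcov x y hy hx0 hx1 with rfl | rfl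
    · left; exact hy.symm
    · right; exact hy.symm
  have hdz : H.degree z0 = n ∧ H.degree z1 = n := by
    have h1 := Finset.card_le_card hcovsub
    have h2 := Finset.card_union_le (H.neighborFinset z0) (H.neighborFinset z1)
    rw [Finset.card_univ, Fintype.card_fin] at h1
    have e0 : H.degree z0 = (H.neighborFinset z0).card := rfl
    have e1 : H.degree z1 = (H.neighborFinset z1).card := rfl
    have l0 := hdegle z0
    have l1 := hdegle z1
    exact ⟨by omega, by omega⟩
  refine ⟨hdz.1, hdz.2, ?_⟩
  intro x hx0 hx1
  have hsplit : ∑ v ∈ Finset.univ \ ({z0, z1} : Finset (Fin (2*n))), H.degree v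
      + ∑ v ∈ ({z0, z1} : Finset (Fin (2*n))), H.degree v = ∑ v, H.degree v :=
    Finset.sum_sdiff (Finset.subset_univ _)
  have hpair : ∑ v ∈ ({z0, z1} : Finset (Fin (2*n))), H.degree v
      = H.degree z0 + H.degree z1 := Finset.sum_pair hz01ne
  have hMcard : (Finset.univ \ ({z0, z1} : Finset (Fin (2*n)))).card = 2*n - 2 := by
    rw [Finset.card_sdiff_of_subset (Finset.subset_univ _), Finset.card_univ, Fintype.card_fin,
      Finset.card_pair hz01ne]
  have hone' : ∀ v ∈ Finset.univ \ ({z0, z1} : Finset (Fin (2*n))), 1 = H.degree v := by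
    apply (Finset.sum_eq_sum_iff_of_le (fun v _ => hdegpos v)).mp
    rw [Finset.sum_const, smul_eq_mul]
    omega
  exact (hone' x (by rw [Finset.mem_sdiff]
                     exact ⟨Finset.mem_univ x, by simp [hx0, hx1]⟩)).symm

open scoped Classical in
lemma star_char {n : ℕ} (hn2 : 2 ≤ n) {G : SimpleGraph (Fin (2*n))}
    (hplane : IsPlane G) {m1 m2 : Fin (2*n)} (hm1v : m1.1 = n - 1) (hm2v : m2.1 = n)
    (hGm : G.Adj m1 m2) (hdm1 : G.degree m1 = n)
    (hdegpos : ∀ x, 0 < G.degree x)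
    (hlf : ∀ x, x ≠ m1 → x ≠ m2 → G.degree x = 1)
    (hLC : ∀ x y, G.Adj x y → x ≠ m1 → x ≠ m2 → y = m1 ∨ y = m2) :
    ∃ a b : ℕ, a + b + 1 = n ∧
      (∀ x : Fin (2*n), G.Adj m1 x ↔ ((x : ℕ) < a ∨ (n ≤ x.1 ∧ x.1 < n + 1 + b))) ∧
      (∀ x : Fin (2*n), G.Adj m2 x ↔ ((a ≤ x.1 ∧ x.1 < n) ∨ n + 1 + b ≤ x.1)) := by
  have hm12ne : m1 ≠ m2 := Fin.ne_of_val_ne (by omega)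
  have hone : ∀ x, x ≠ m1 → x ≠ m2 → (G.Adj m1 x ↔ ¬ G.Adj m2 x) := by
    intro x h1 h2
    constructor
    · intro ha hb
      have hsub : ({m1, m2} : Finset (Fin (2*n))) ⊆ G.neighborFinset x := by
        intro z hz
        rw [SimpleGraph.mem_neighborFinset]
        rcases Finset.mem_insert.mp hz with rfl | hz
        · exact ha.symm
        · rw [Finset.mem_singleton.mp hz]; exact hb.symm
      have hcard := Finset.card_le_card hsub
      rw [Finset.card_pair hm12ne] at hcard
      have e : G.degree x = (G.neighborFinset x).card := rfl
      have := hlf x h1 h2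
      omega
    · intro hb
      obtain ⟨y, hy⟩ := (G.degree_pos_iff_exists_adj x).mp (hdegpos x)
      rcases hLC x y hy h1 h2 with rfl | rfl
      · exact hy.symm
      · exact absurd hy.symm hb
  obtain ⟨A, hA⟩ : ∃ s : Finset (Fin (2*n)),
      s = Finset.univ.filter (fun x : Fin (2*n) => G.Adj m1 x ∧ (x : ℕ) < n - 1) := ⟨_, rfl⟩
  obtain ⟨B, hB⟩ : ∃ s : Finset (Fin (2*n)),
      s = Finset.univ.filter (fun x : Fin (2*n) => G.Adj m1 x ∧ n < (x : ℕ)) := ⟨_, rfl⟩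
  have hm1lt2 : m1 < m2 := by rw [Fin.lt_def]; omega
  have hdl : ∀ x y : Fin (2*n), G.Adj m1 x → x.1 < n - 1 → y.1 < x.1 → G.Adj m1 y := by
    intro x y hx hxv hyv
    by_contra hno
    have hym2 : G.Adj m2 y := by
      by_contra hb
      exact hno ((hone y (Fin.ne_of_val_ne (by omega)) (Fin.ne_of_val_ne (by omega))).mpr hb)
    exact plane_no_nest hplane hx.symm hym2.symm (by rw [Fin.lt_def]; omega)
      (by rw [Fin.lt_def]; omega) (by rw [Fin.lt_def]; omega) hm1lt2
  have he3 : ∀ x : Fin (2*n), x.1 < n - 1 → (G.Adj m1 x ↔ x.1 < A.card) := by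
    intro x hxv
    constructor
    · intro hx
      have hsubT : Finset.univ.filter (fun y : Fin (2*n) => (y : ℕ) < x.1 + 1) ⊆ A := by
        intro y hy
        rw [Finset.mem_filter] at hy
        rw [hA, Finset.mem_filter]
        refine ⟨Finset.mem_univ y, ?_, by omega⟩
        rcases Nat.lt_succ_iff_lt_or_eq.mp hy.2 with h | h
        · exact hdl x y hx hxv h
        · rw [show y = x from Fin.ext h]; exact hx
      have hcardT := Finset.card_le_card hsubT
      rw [card_val_lt (by omega) _ (by omega)] at hcardT
      omega
    · intro hxa
      by_contra hno
      have hxm2 : G.Adj m2 x := by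
        by_contra hb
        exact hno ((hone x (Fin.ne_of_val_ne (by omega)) (Fin.ne_of_val_ne (by omega))).mpr hb)
      have hsubA : A ⊆ Finset.univ.filter (fun y : Fin (2*n) => (y : ℕ) < x.1) := by
        intro z hz
        rw [hA, Finset.mem_filter] at hz
        rw [Finset.mem_filter]
        refine ⟨Finset.mem_univ z, ?_⟩
        by_contra hzx
        push_neg at hzx
        have hxz : x.1 < z.1 := by
          rcases Nat.eq_or_lt_of_le hzx with h | h
          · exfalso
            have hzx2 : z = x := Fin.ext h.symm
            rw [hzx2] at hz
            exact hno hz.2.1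
          · exact h
        exact plane_no_nest hplane hz.2.1.symm hxm2.symm (by rw [Fin.lt_def]; omega)
          (by rw [Fin.lt_def]; omega) (by rw [Fin.lt_def]; omega) hm1lt2
      have := Finset.card_le_card hsubA
      rw [card_val_lt (by omega) _ (by omega)] at this
      omega
  have hdr : ∀ x y : Fin (2*n), G.Adj m1 x → n < x.1 → n < y.1 → y.1 < x.1 → G.Adj m1 y := by
    intro x y hx hxv hyv hxy
    by_contra hno
    have hym2 : G.Adj m2 y := by
      by_contra hb
      exact hno ((hone y (Fin.ne_of_val_ne (by omega)) (Fin.ne_of_val_ne (by omega))).mpr hb)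
    exact plane_no_nest hplane hym2 hx (by rw [Fin.lt_def]; omega)
      (by rw [Fin.lt_def]; omega) hm1lt2 (by rw [Fin.lt_def]; omega)
  have he3' : ∀ x : Fin (2*n), n < x.1 → (G.Adj m1 x ↔ x.1 < n + 1 + B.card) := by
    intro x hxv
    have hxlt := x.isLt
    constructor
    · intro hx
      have hsubT : Finset.univ.filter
          (fun y : Fin (2*n) => n + 1 ≤ (y : ℕ) ∧ (y : ℕ) < x.1 + 1) ⊆ B := by
        intro y hy
        rw [Finset.mem_filter] at hy
        rw [hB, Finset.mem_filter]
        refine ⟨Finset.mem_univ y, ?_, by omega⟩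
        rcases Nat.lt_succ_iff_lt_or_eq.mp hy.2.2 with h | h
        · exact hdr x y hx hxv (by omega) h
        · rw [show y = x from Fin.ext h]; exact hx
      have hcardT := Finset.card_le_card hsubT
      rw [card_val_range (by omega) _ _ (by omega)] at hcardT
      omega
    · intro hxa
      by_contra hno
      have hxm2 : G.Adj m2 x := by
        by_contra hb
        exact hno ((hone x (Fin.ne_of_val_ne (by omega)) (Fin.ne_of_val_ne (by omega))).mpr hb)
      have hsubB : B ⊆ Finset.univ.filter
          (fun y : Fin (2*n) => n + 1 ≤ (y : ℕ) ∧ (y : ℕ) < x.1) := by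
        intro z hz
        rw [hB, Finset.mem_filter] at hz
        rw [Finset.mem_filter]
        refine ⟨Finset.mem_univ z, by omega, ?_⟩
        by_contra hzx
        push_neg at hzx
        have hxz : x.1 < z.1 := by
          rcases Nat.eq_or_lt_of_le hzx with h | h
          · exfalso
            have hzx2 : z = x := Fin.ext h.symm
            rw [hzx2] at hz
            exact hno hz.2.1
          · exact h
        exact plane_no_nest hplane hxm2 hz.2.1 (by rw [Fin.lt_def]; omega)
          (by rw [Fin.lt_def]; omega) hm1lt2 (by rw [Fin.lt_def]; omega)
      have := Finset.card_le_card hsubB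
      rw [card_val_range (by omega) _ _ (by omega)] at this
      omega
  have hnb : G.neighborFinset m1 = insert m2 (A ∪ B) := by
    ext z
    rw [SimpleGraph.mem_neighborFinset, Finset.mem_insert, Finset.mem_union, hA, hB,
      Finset.mem_filter, Finset.mem_filter]
    constructor
    · intro hz
      by_cases h2 : z = m2
      · exact Or.inl h2
      · have hzne : z.1 ≠ n - 1 := by
          intro h
          have hzz : z = m1 := Fin.ext (by omega)
          rw [hzz] at hz
          exact (G.loopless.irrefl m1) hz
        have hzn : z.1 ≠ n := fun h => h2 (Fin.ext (by omega))
        have hcases : z.1 < n - 1 ∨ n < z.1 := by omega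
        rcases hcases with h | h
        · exact Or.inr (Or.inl ⟨Finset.mem_univ z, hz, h⟩)
        · exact Or.inr (Or.inr ⟨Finset.mem_univ z, hz, h⟩)
    · rintro (rfl | ⟨-, h, -⟩ | ⟨-, h, -⟩)
      exacts [hGm, h, h]
  have habn : A.card + B.card + 1 = n := by
    have hm2AB : m2 ∉ A ∪ B := by
      rw [Finset.mem_union, hA, hB, Finset.mem_filter, Finset.mem_filter]
      rintro (⟨-, -, h⟩ | ⟨-, -, h⟩) <;> omega
    have hdisjAB : Disjoint A B := by
      rw [Finset.disjoint_left]
      intro z hz1 hz2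
      rw [hA, Finset.mem_filter] at hz1
      rw [hB, Finset.mem_filter] at hz2
      omega
    have e : G.degree m1 = (insert m2 (A ∪ B)).card := by rw [← hnb]; rfl
    rw [Finset.card_insert_of_notMem hm2AB, Finset.card_union_of_disjoint hdisjAB] at e
    omega
  refine ⟨A.card, B.card, habn, ?_, ?_⟩
  · intro x
    have hxlt := x.isLt
    rcases lt_trichotomy (x.1) (n - 1) with h | h | h
    · rw [he3 x h]
      omega
    · have hx : x = m1 := Fin.ext (by omega)
      rw [hx]
      exact iff_of_false (G.loopless.irrefl m1) (by omega)
    · by_cases hn' : x.1 = n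
      · have hx : x = m2 := Fin.ext (by omega)
        rw [hx]
        exact iff_of_true hGm (by omega)
      · have hgt : n < x.1 := by omega
        rw [he3' x hgt]
        omega
  · intro x
    have hxlt := x.isLt
    rcases lt_trichotomy (x.1) (n - 1) with h | h | h
    · have h1 := hone x (Fin.ne_of_val_ne (by omega)) (Fin.ne_of_val_ne (by omega))
      have h2 := he3 x h
      constructor
      · intro hh
        have hnm1 : ¬ G.Adj m1 x := fun hm => (h1.mp hm) hh
        rw [h2] at hnm1
        omega
      · intro hh
        by_contra hno
        have hthis := h2.mp (h1.mpr hno)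
        omega
    · have hx : x = m1 := Fin.ext (by omega)
      rw [hx]
      exact iff_of_true hGm.symm (by omega)
    · by_cases hn' : x.1 = n
      · have hx : x = m2 := Fin.ext (by omega)
        rw [hx]
        exact iff_of_false (G.loopless.irrefl m2) (by omega)
      · have hgt : n < x.1 := by omega
        have h1 := hone x (Fin.ne_of_val_ne (by omega)) (Fin.ne_of_val_ne (by omega))
        have h2 := he3' x hgt
        constructor
        · intro hh
          have hnm1 : ¬ G.Adj m1 x := fun hm => (h1.mp hm) hh
          rw [h2] at hnm1
          omega
        · intro hh
          by_contra hno
          have hthis := h2.mp (h1.mpr hno)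
          omega

open scoped Classical in
lemma final_ext {n : ℕ} (hn : 0 < n) (hn2 : 2 ≤ n) {G : SimpleGraph (Fin (2*n))}
    {m1 m2 : Fin (2*n)} (hm1v : m1.1 = n - 1) (hm2v : m2.1 = n)
    {a b : ℕ} (habn : a + b + 1 = n)
    (hm1adj : ∀ x : Fin (2*n), G.Adj m1 x ↔ ((x : ℕ) < a ∨ (n ≤ x.1 ∧ x.1 < n + 1 + b)))
    (hm2adj : ∀ x : Fin (2*n), G.Adj m2 x ↔ ((a ≤ x.1 ∧ x.1 < n) ∨ n + 1 + b ≤ x.1))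
    (hLC : ∀ x y, G.Adj x y → x ≠ m1 → x ≠ m2 → y = m1 ∨ y = m2) :
    G = Ak n hn (n - a) := by
  ext p q
  rw [Ak_adj n hn (n - a) (by omega) (by omega) p q]
  constructor
  · intro hadj
    by_cases hp1 : p = m1
    · subst hp1
      exact Or.inl ⟨hm1v, by have := (hm1adj q).mp hadj; omega⟩
    by_cases hp2 : p = m2
    · subst hp2
      exact Or.inr (Or.inl ⟨hm2v, by have := (hm2adj q).mp hadj; omega⟩)
    rcases hLC p q hadj hp1 hp2 with rfl | rfl
    · exact Or.inr (Or.inr (Or.inl ⟨hm1v, by have := (hm1adj p).mp hadj.symm; omega⟩))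
    · exact Or.inr (Or.inr (Or.inr ⟨hm2v, by have := (hm2adj p).mp hadj.symm; omega⟩))
  · rintro (⟨hp, hq⟩ | ⟨hp, hq⟩ | ⟨hq, hp⟩ | ⟨hq, hp⟩)
    · rw [show p = m1 from Fin.ext (by omega)]
      exact (hm1adj q).mpr (by omega)
    · rw [show p = m2 from Fin.ext (by omega)]
      exact (hm2adj q).mpr (by omega)
    · rw [show q = m1 from Fin.ext (by omega)]
      exact ((hm1adj p).mpr (by omega)).symm
    · rw [show q = m2 from Fin.ext (by omega)]
      exact ((hm2adj p).mpr (by omega)).symm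

set_option maxHeartbeats 1000000 in
/-- In any partition of `T_{2n}` into pairwise isomorphic plane spanning trees with
`v_i w_i ∈ E(S_i)`, the last tree `S_n` equals `A_k` for some `1 ≤ k ≤ n`. -/
theorem last_tree_is_Ak
    (n : ℕ) (hn : 0 < n) (hn2 : 2 ≤ n) (S : Fin n → SimpleGraph (Fin (2 * n)))
    (hS : IsTwistedPartition S)
    (hiso : ∀ i j : Fin n, Nonempty ((S i) ≃g (S j)))
    (hc : ∀ i : Fin n, (S i).Adj (vv n hn (i.1 + 1)) (ww n hn (i.1 + 1))) :
    ∃ k : ℕ, 1 ≤ k ∧ k ≤ n ∧ S ⟨n - 1, by omega⟩ = Ak n hn k := by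
  obtain ⟨i0, hi0⟩ : ∃ i : Fin n, i.1 = 0 := ⟨⟨0, by omega⟩, rfl⟩
  obtain ⟨iN, hiN⟩ : ∃ i : Fin n, i.1 = n - 1 := ⟨⟨n - 1, by omega⟩, rfl⟩
  obtain ⟨z0, hz0v⟩ : ∃ z : Fin (2 * n), z.1 = 0 := ⟨⟨0, by omega⟩, rfl⟩
  obtain ⟨z1, hz1v⟩ : ∃ z : Fin (2 * n), z.1 = 2*n - 1 := ⟨⟨2*n - 1, by omega⟩, rfl⟩
  obtain ⟨m1, hm1v⟩ : ∃ z : Fin (2 * n), z.1 = n - 1 := ⟨⟨n - 1, by omega⟩, rfl⟩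
  obtain ⟨m2, hm2v⟩ : ∃ z : Fin (2 * n), z.1 = n := ⟨⟨n, by omega⟩, rfl⟩
  have hplaneG : IsPlane (S iN) := (hS.1 iN).2
  have hconnG : (S iN).Connected := (hS.1 iN).1.isConnected
  have hdegpos : ∀ (i : Fin n) v, 0 < (S i).degree v := fun i v =>
    degree_pos' (by omega) (hS.1 i).1.isConnected v
  have hdegle : ∀ (i : Fin n) v, (S i).degree v ≤ n := degree_le_n hn S hS
  have hH1 : (S i0).Adj z0 z1 := by
    have h := hc i0
    have e1 : vv n hn (i0.1 + 1) = z0 := Fin.ext (by rw [vv_val n hn _ (by omega)]; omega)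
    have e2 : ww n hn (i0.1 + 1) = z1 := Fin.ext (by rw [ww_val n hn _ (by omega)]; omega)
    rwa [e1, e2] at h
  have hiNlt : iN.1 < n := iN.isLt
  have hGm : (S iN).Adj m1 m2 := by
    have h := hc iN
    have e1 : vv n hn (iN.1 + 1) = m1 := Fin.ext (by rw [vv_val n hn _ (by omega)]; omega)
    have e2 : ww n hn (iN.1 + 1) = m2 := Fin.ext (by rw [ww_val n hn _ (by omega)]; omega)
    rwa [e1, e2] at h
  have hz01ne : z0 ≠ z1 := Fin.ne_of_val_ne (by omega)
  obtain ⟨hdz0, hdz1, hdHmid⟩ :=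
    outeredge_star hn2 (hS.1 i0).1 (hS.1 i0).2 hz0v hz1v hH1 (hdegle i0)
  obtain ⟨φ⟩ := hiso i0 iN
  have hisodeg : ∀ v, (S iN).degree (φ v) = (S i0).degree v := by
    intro v
    rw [← SimpleGraph.card_neighborSet_eq_degree, ← SimpleGraph.card_neighborSet_eq_degree]
    exact (Fintype.card_congr (SimpleGraph.Iso.mapNeighborSet φ v)).symm
  have hdu : (S iN).degree (φ z0) = n := by rw [hisodeg]; exact hdz0
  have hdu' : (S iN).degree (φ z1) = n := by rw [hisodeg]; exact hdz1
  have hGuu' : (S iN).Adj (φ z0) (φ z1) := (SimpleGraph.Iso.map_adj_iff φ).mpr hH1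
  have hlfG : ∀ w, w ≠ φ z0 → w ≠ φ z1 → (S iN).degree w = 1 := by
    intro w h0 h1
    have hw : φ (φ.symm w) = w := φ.apply_symm_apply w
    have hs0 : φ.symm w ≠ z0 := fun h => h0 (by rw [← hw, h])
    have hs1 : φ.symm w ≠ z1 := fun h => h1 (by rw [← hw, h])
    rw [← hw, hisodeg]
    exact hdHmid _ hs0 hs1
  have hLCu : ∀ x y, (S iN).Adj x y → x ≠ φ z0 → x ≠ φ z1 → y = φ z0 ∨ y = φ z1 := by
    intro x y hxy hx0 hx1
    by_contra hcon
    push_neg at hcon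
    exact leaf_leaf hconnG (hlfG x hx0 hx1) (hlfG y hcon.1 hcon.2) hxy (by rw [hdu]; omega)
  have hcent : (φ z0 = m1 ∧ φ z1 = m2) ∨ (φ z0 = m2 ∧ φ z1 = m1) := by
    have hne_uu' : φ z0 ≠ φ z1 := fun h => hz01ne (φ.toEquiv.injective h)
    have hd1 : m1 = φ z0 ∨ m1 = φ z1 ∨ m2 = φ z0 ∨ m2 = φ z1 := by
      by_contra hcon
      push_neg at hcon
      obtain ⟨h1, h2, h3, h4⟩ := hcon
      rcases hLCu m1 m2 hGm h1 h2 with h | h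
      exacts [h3 h, h4 h]
    have hu_in : φ z0 = m1 ∨ φ z0 = m2 := by
      by_contra hcon
      push_neg at hcon
      have hu' : φ z1 = m1 ∨ φ z1 = m2 := by
        rcases hd1 with h | h | h | h
        exacts [absurd h.symm hcon.1, Or.inl h.symm, absurd h.symm hcon.2, Or.inr h.symm]
      exact centers_eq hn2 hplaneG hm1v hm2v hGm (hdegpos iN) (φ z1) (φ z0)
        hGuu'.symm hdu' hu' hcon.1 hcon.2
        (fun x y hxy hx1 hx0 => (hLCu x y hxy hx0 hx1).symm)
    have hu'_in : φ z1 = m1 ∨ φ z1 = m2 := by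
      by_contra hcon
      push_neg at hcon
      exact centers_eq hn2 hplaneG hm1v hm2v hGm (hdegpos iN) (φ z0) (φ z1)
        hGuu' hdu hu_in hcon.1 hcon.2 (fun x y hxy hx0 hx1 => hLCu x y hxy hx0 hx1)
    rcases hu_in with h | h <;> rcases hu'_in with h' | h'
    · exact absurd (h.trans h'.symm) hne_uu'
    · exact Or.inl ⟨h, h'⟩
    · exact Or.inr ⟨h, h'⟩
    · exact absurd (h.trans h'.symm) hne_uu'
  have hdm1 : (S iN).degree m1 = n := by
    rcases hcent with ⟨h, -⟩ | ⟨-, h⟩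
    · rw [← h]; exact hdu
    · rw [← h]; exact hdu'
  have hlf : ∀ x, x ≠ m1 → x ≠ m2 → (S iN).degree x = 1 := by
    intro x h1 h2
    rcases hcent with ⟨ha, hb⟩ | ⟨ha, hb⟩
    · exact hlfG x (by rw [ha]; exact h1) (by rw [hb]; exact h2)
    · exact hlfG x (by rw [ha]; exact h2) (by rw [hb]; exact h1)
  have hLC : ∀ x y, (S iN).Adj x y → x ≠ m1 → x ≠ m2 → y = m1 ∨ y = m2 := by
    intro x y hxy h1 h2
    rcases hcent with ⟨ha, hb⟩ | ⟨ha, hb⟩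
    · rcases hLCu x y hxy (by rw [ha]; exact h1) (by rw [hb]; exact h2) with rfl | rfl
      exacts [Or.inl ha, Or.inr hb]
    · rcases hLCu x y hxy (by rw [ha]; exact h2) (by rw [hb]; exact h1) with rfl | rfl
      exacts [Or.inr ha, Or.inl hb]
  obtain ⟨a, b, habn, hm1adj, hm2adj⟩ :=
    star_char hn2 hplaneG hm1v hm2v hGm hdm1 (hdegpos iN) hlf hLC
  refine ⟨n - a, by omega, by omega, ?_⟩
  have hidx : (⟨n - 1, by omega⟩ : Fin n) = iN := Fin.ext (show n - 1 = iN.1 by omega)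
  rw [hidx]
  exact final_ext hn hn2 hm1v hm2v habn hm1adj hm2adj hLC
end
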